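/- arXiv:1001.3984 — 13 statements merged into one kernel-verified Lean document; each statement's English description precedes it below -/
import Mathlib

section
/- (Scorza's theorem, one direction) If a group G is the union of three pairwise distinct proper subgroups A, B, C, then A, B, and C each have index 2 in G. -/
private lemma scorza_exists_not_mem {G : Type*} [Group G] {H : Subgroup G} (h : H ≠ ⊤) :
    ∃ x, x ∉ H := by
  by_contra hc
  push_neg at hc
  exact h ((Subgroup.eq_top_iff' H).mpr hc)

/-- A group is never the union of two proper subgroups. -/
private lemma scorza_not_two_cover {G : Type*} [Group G] {H K : Subgroup G}
    (hH : H ≠ ⊤) (hK : K ≠ ⊤) : ∃ x : G, x ∉ H ∧ x ∉ K := by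
  by_contra hc
  push_neg at hc
  obtain ⟨x, hx⟩ := scorza_exists_not_mem hH
  obtain ⟨y, hy⟩ := scorza_exists_not_mem hK
  have hxK : x ∈ K := hc x hx
  have hyH : y ∈ H := by
    by_contra h
    exact hy (hc y h)
  rcases Classical.em (y * x ∈ H) with h | h
  · exact hx ((mul_mem_cancel_left hyH).mp h)
  · exact hy ((mul_mem_cancel_right hxK).mp (hc _ h))

/-- Core step: with suitable witnesses, `A` has index 2. -/
private lemma scorza_aux {G : Type*} [Group G] {A B C : Subgroup G}
    (mem3 : ∀ x : G, x ∈ A ∨ x ∈ B ∨ x ∈ C)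
    {a b : G} (haA : a ∈ A) (haB : a ∉ B) (haC : a ∉ C)
    (hbB : b ∈ B) (hbA : b ∉ A) (hbC : b ∉ C)
    (hBC : ∀ x, x ∈ B → x ∈ C → x ∈ A) :
    A.index = 2 := by
  have hbiA : b⁻¹ ∉ A := fun h => hbA (A.inv_mem_iff.mp h)
  have key : ∀ x, x ∉ A → x * b⁻¹ ∈ A := by
    intro x hx
    rcases mem3 x with h | hB' | hC'
    · exact absurd h hx
    · -- x ∈ B
      by_contra hy
      have hyB : x * b⁻¹ ∈ B := mul_mem hB' (inv_mem hbB)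
      have hya : x * b⁻¹ * a ∈ C := by
        rcases mem3 (x * b⁻¹ * a) with h | h | h
        · exact absurd ((mul_mem_cancel_right haA).mp h) hy
        · exact absurd ((mul_mem_cancel_left hyB).mp h) haB
        · exact h
      have hba : b⁻¹ * a ∈ C := by
        rcases mem3 (b⁻¹ * a) with h | h | h
        · exact absurd ((mul_mem_cancel_right haA).mp h) hbiA
        · exact absurd ((mul_mem_cancel_left (inv_mem hbB)).mp h) haB
        · exact h
      have hxC : x ∈ C := by
        have h := mul_mem hya (inv_mem hba)
        rwa [show x * b⁻¹ * a * (b⁻¹ * a)⁻¹ = x by group] at h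
      exact hx (hBC x hB' hxC)
    · -- x ∈ C
      rcases mem3 (x * b⁻¹) with h | h | h
      · exact h
      · have hxB : x ∈ B := (mul_mem_cancel_right (inv_mem hbB)).mp h
        exact absurd (hBC x hxB hC') hx
      · have : b⁻¹ ∈ C := (mul_mem_cancel_left hC').mp h
        exact absurd (C.inv_mem_iff.mp this) hbC
  have hb2 : b * b ∈ A := by
    have h := key b⁻¹ hbiA
    have h' := A.inv_mem h
    rwa [show (b⁻¹ * b⁻¹)⁻¹ = b * b by simp [mul_inv_rev]] at h'
  rw [Subgroup.index_eq_two_iff]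
  refine ⟨b, fun g => ?_⟩
  by_cases hg : g ∈ A
  · exact Or.inr ⟨hg, fun h => hbA ((mul_mem_cancel_left hg).mp h)⟩
  · refine Or.inl ⟨?_, hg⟩
    have h := mul_mem (key g hg) hb2
    rwa [show g * b⁻¹ * (b * b) = g * b by group] at h

/-- Scorza's theorem, one direction: if a group `G` is the union of three
pairwise distinct proper subgroups `A`, `B`, `C`, then `A`, `B`, `C` each have
index 2 in `G`. -/
theorem scorza_index_two
    (G : Type*) [Group G] (A B C : Subgroup G)
    (hA : A ≠ ⊤) (hB : B ≠ ⊤) (hC : C ≠ ⊤)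
    (hAB : A ≠ B) (hAC : A ≠ C) (hBC : B ≠ C)
    (hcover : (A : Set G) ∪ (B : Set G) ∪ (C : Set G) = Set.univ) :
    A.index = 2 ∧ B.index = 2 ∧ C.index = 2 := by
  have mem3 : ∀ x : G, x ∈ A ∨ x ∈ B ∨ x ∈ C := by
    intro x
    have h := Set.eq_univ_iff_forall.mp hcover x
    rcases h with (h | h) | h
    exacts [Or.inl h, Or.inr (Or.inl h), Or.inr (Or.inr h)]
  -- witnesses in each subgroup outside the other two
  obtain ⟨a, haB, haC⟩ := scorza_not_two_cover hB hC
  have haA : a ∈ A := by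
    rcases mem3 a with h | h | h
    exacts [h, absurd h haB, absurd h haC]
  obtain ⟨b, hbA, hbC⟩ := scorza_not_two_cover hA hC
  have hbB : b ∈ B := by
    rcases mem3 b with h | h | h
    exacts [absurd h hbA, h, absurd h hbC]
  obtain ⟨c, hcA, hcB⟩ := scorza_not_two_cover hA hB
  have hcC : c ∈ C := by
    rcases mem3 c with h | h | h
    exacts [absurd h hcA, absurd h hcB, h]
  -- pairwise intersections are contained in the third subgroup
  have hBCsubA : ∀ x, x ∈ B → x ∈ C → x ∈ A := by
    intro x hxB hxC
    rcases mem3 (x * a) with h | h | h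
    · exact (mul_mem_cancel_right haA).mp h
    · exact absurd ((mul_mem_cancel_left hxB).mp h) haB
    · exact absurd ((mul_mem_cancel_left hxC).mp h) haC
  have hACsubB : ∀ x, x ∈ A → x ∈ C → x ∈ B := by
    intro x hxA hxC
    rcases mem3 (x * b) with h | h | h
    · exact absurd ((mul_mem_cancel_left hxA).mp h) hbA
    · exact (mul_mem_cancel_right hbB).mp h
    · exact absurd ((mul_mem_cancel_left hxC).mp h) hbC
  have hABsubC : ∀ x, x ∈ A → x ∈ B → x ∈ C := by
    intro x hxA hxB
    rcases mem3 (x * c) with h | h | h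
    · exact absurd ((mul_mem_cancel_left hxA).mp h) hcA
    · exact absurd ((mul_mem_cancel_left hxB).mp h) hcB
    · exact (mul_mem_cancel_right hcC).mp h
  refine ⟨?_, ?_, ?_⟩
  · exact scorza_aux mem3 haA haB haC hbB hbA hbC hBCsubA
  · exact scorza_aux (A := B) (B := A) (C := C)
      (fun x => (mem3 x).elim (fun h => Or.inr (Or.inl h))
        (fun h => h.elim Or.inl (fun h => Or.inr (Or.inr h))))
      hbB hbA hbC haA haB haC hACsubB
  · exact scorza_aux (A := C) (B := A) (C := B)
      (fun x => (mem3 x).elim (fun h => Or.inr (Or.inl h))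
        (fun h => h.elim (fun h => Or.inr (Or.inr h)) Or.inl))
      hcC hcA hcB haA haC haB (fun x hx hy => hABsubC x hx hy)
end

section
/- (Scorza's theorem, quotient form) If a group G is the union of three pairwise distinct proper subgroups A, B, C, then G/(A ∩ B ∩ C) is isomorphic to the Klein four group Z/2 × Z/2 (in particular A ∩ B ∩ C is a normal subgroup of G of index 4). -/
/-- A group is not the union of two proper subgroups. -/
lemma scorza_two_cover {G : Type*} [Group G] (A B : Subgroup G)
    (h : (A : Set G) ∪ (B : Set G) = Set.univ) (hA : A ≠ ⊤) : B = ⊤ := by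
  obtain ⟨x, hx⟩ : ∃ x, x ∉ A := by
    by_contra h'; push_neg at h'; exact hA ((Subgroup.eq_top_iff' A).mpr h')
  have hmem : ∀ g : G, g ∈ A ∨ g ∈ B := by
    intro g; have := Set.eq_univ_iff_forall.mp h g; simpa using this
  have hxB : x ∈ B := (hmem x).resolve_left hx
  rw [Subgroup.eq_top_iff']
  intro g
  by_contra hgB
  have hgA : g ∈ A := (hmem g).resolve_right hgB
  have h1 : g * x ∉ B := fun hh => hgB ((mul_mem_cancel_right hxB).mp hh)
  have h2 : g * x ∈ A := (hmem (g * x)).resolve_right h1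
  exact hx ((mul_mem_cancel_left hgA).mp h2)

/-- If `a ∈ A \ (B ∪ C)` then `B ∩ C ≤ A`. -/
lemma scorza_inter_le {G : Type*} [Group G] (A B C : Subgroup G)
    (hmem : ∀ g : G, g ∈ A ∨ g ∈ B ∨ g ∈ C)
    {a : G} (haA : a ∈ A) (haB : a ∉ B) (haC : a ∉ C) :
    ∀ g : G, g ∈ B → g ∈ C → g ∈ A := by
  intro g hgB hgC
  have h1 : a * g ∉ B := fun hh => haB ((mul_mem_cancel_right hgB).mp hh)
  have h2 : a * g ∉ C := fun hh => haC ((mul_mem_cancel_right hgC).mp hh)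
  have h3 : a * g ∈ A := by rcases hmem (a * g) with h | h | h <;> tauto
  exact (mul_mem_cancel_left haA).mp h3

/-- If `x, y ∉ A` but `x, y ∈ B`, then `x * y ∈ A`. -/
lemma scorza_pair_step {G : Type*} [Group G] (A B C : Subgroup G)
    (hmem : ∀ g : G, g ∈ A ∨ g ∈ B ∨ g ∈ C)
    {a : G} (haA : a ∈ A) (haB : a ∉ B) (haC : a ∉ C) :
    ∀ x y : G, x ∉ A → y ∉ A → x ∈ B → y ∈ B → x * y ∈ A := by
  have hBC := scorza_inter_le A B C hmem haA haB haC
  have step : ∀ u v : G, u ∉ A → v ∉ A → u ∈ B → v ∈ B → u⁻¹ * v ∈ A := by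
    intro u v hu hv huB hvB
    have hau : a * u ∈ C := by
      have h1 : a * u ∉ A := fun hh => hu ((mul_mem_cancel_left haA).mp hh)
      have h2 : a * u ∉ B := fun hh => haB ((mul_mem_cancel_right huB).mp hh)
      rcases hmem (a * u) with h | h | h <;> tauto
    have hav : a * v ∈ C := by
      have h1 : a * v ∉ A := fun hh => hv ((mul_mem_cancel_left haA).mp hh)
      have h2 : a * v ∉ B := fun hh => haB ((mul_mem_cancel_right hvB).mp hh)
      rcases hmem (a * v) with h | h | h <;> tauto
    have h4 : (a * u)⁻¹ * (a * v) ∈ C := mul_mem (inv_mem hau) hav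
    have h5 : u⁻¹ * v ∈ C := by
      have he : (a * u)⁻¹ * (a * v) = u⁻¹ * v := by group
      rwa [he] at h4
    exact hBC _ (mul_mem (inv_mem huB) hvB) h5
  intro x y hx hy hxB hyB
  have hx' : x⁻¹ ∉ A := fun h => hx (by simpa using inv_mem h)
  have := step x⁻¹ y hx' hy (inv_mem hxB) hyB
  simpa using this

/-- Key index-two property for `A`. -/
lemma scorza_key {G : Type*} [Group G] (A B C : Subgroup G)
    (hmem : ∀ g : G, g ∈ A ∨ g ∈ B ∨ g ∈ C)
    {a : G} (haA : a ∈ A) (haB : a ∉ B) (haC : a ∉ C) :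
    ∀ x y : G, x ∉ A → y ∉ A → x * y ∈ A := by
  have hmem' : ∀ g : G, g ∈ A ∨ g ∈ C ∨ g ∈ B := by intro g; rcases hmem g with h|h|h <;> tauto
  have hBB := scorza_pair_step A B C hmem haA haB haC
  have hCC := scorza_pair_step A C B hmem' haA haC haB
  intro x y hx hy
  rcases hmem x with h | hxB | hxC
  · tauto
  · rcases hmem y with h | hyB | hyC
    · tauto
    · exact hBB x y hx hy hxB hyB
    · by_cases hyB : y ∈ B
      · exact hBB x y hx hy hxB hyB
      by_cases hxC : x ∈ C
      · exact hCC x y hx hy hxC hyC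
      have h1 : x * y ∉ B := fun hh => hyB ((mul_mem_cancel_left hxB).mp hh)
      have h2 : x * y ∉ C := fun hh => hxC ((mul_mem_cancel_right hyC).mp hh)
      rcases hmem (x * y) with h | h | h <;> tauto
  · rcases hmem y with h | hyB | hyC
    · tauto
    · by_cases hxB : x ∈ B
      · exact hBB x y hx hy hxB hyB
      by_cases hyC : y ∈ C
      · exact hCC x y hx hy hxC hyC
      have h1 : x * y ∉ C := fun hh => hyC ((mul_mem_cancel_left hxC).mp hh)
      have h2 : x * y ∉ B := fun hh => hxB ((mul_mem_cancel_right hyB).mp hh)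
      rcases hmem (x * y) with h | h | h <;> tauto
    · exact hCC x y hx hy hxC hyC

open Classical in
/-- The sign character of an index-two subgroup. -/
noncomputable def scorzaChi {G : Type*} [Group G] (A : Subgroup G)
    (key : ∀ x y : G, x ∉ A → y ∉ A → x * y ∈ A) : G →* Multiplicative (ZMod 2) :=
  MonoidHom.mk' (fun g => Multiplicative.ofAdd (if g ∈ A then 0 else 1)) (by
    intro x y
    by_cases hx : x ∈ A <;> by_cases hy : y ∈ A
    · simp [hx, hy, mul_mem hx hy]
    · have h : x * y ∉ A := fun hh => hy ((mul_mem_cancel_left hx).mp hh)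
      simp [hx, hy, h]
    · have h : x * y ∉ A := fun hh => hx ((mul_mem_cancel_right hy).mp hh)
      simp [hx, hy, h]
    · have h := key x y hx hy
      simp only [hx, hy, h, if_true, if_false, ← ofAdd_add]
      decide)

open Classical in
lemma scorzaChi_eq_one_iff {G : Type*} [Group G] (A : Subgroup G)
    (key : ∀ x y : G, x ∉ A → y ∉ A → x * y ∈ A) (g : G) :
    scorzaChi A key g = 1 ↔ g ∈ A := by
  unfold scorzaChi
  by_cases hg : g ∈ A <;> simp [hg, MonoidHom.mk'] <;> decide

/-- Scorza's theorem, quotient form: if a group `G` is the union of three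
pairwise distinct proper subgroups `A`, `B`, `C`, then `A ⊓ B ⊓ C` is a normal
subgroup of `G` and the quotient `G/(A ⊓ B ⊓ C)` is isomorphic to the Klein
four group `ℤ/2 × ℤ/2`.  We phrase this via a surjective homomorphism onto the
Klein four group with kernel `A ⊓ B ⊓ C`. -/
theorem scorza_quotient_klein_four
    (G : Type*) [Group G] (A B C : Subgroup G)
    (hA : A ≠ ⊤) (hB : B ≠ ⊤) (hC : C ≠ ⊤)
    (hAB : A ≠ B) (hAC : A ≠ C) (hBC : B ≠ C)
    (hcover : (A : Set G) ∪ (B : Set G) ∪ (C : Set G) = Set.univ) :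
    ∃ f : G →* Multiplicative (ZMod 2) × Multiplicative (ZMod 2),
      Function.Surjective f ∧ f.ker = A ⊓ B ⊓ C := by
  classical
  have hmem : ∀ g : G, g ∈ A ∨ g ∈ B ∨ g ∈ C := by
    intro g
    have := Set.eq_univ_iff_forall.mp hcover g
    simpa [or_assoc] using this
  -- existence of elements in exactly one subgroup
  have hexA : ∃ a, a ∈ A ∧ a ∉ B ∧ a ∉ C := by
    by_contra h; push_neg at h
    have hBCu : (B : Set G) ∪ (C : Set G) = Set.univ := by
      apply Set.eq_univ_iff_forall.mpr
      intro g
      rcases hmem g with hg | hg | hg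
      · by_cases hgB : g ∈ B
        · exact Or.inl hgB
        · exact Or.inr (h g hg hgB)
      · exact Or.inl hg
      · exact Or.inr hg
    exact hC (scorza_two_cover B C hBCu hB)
  have hexB : ∃ b, b ∈ B ∧ b ∉ A ∧ b ∉ C := by
    by_contra h; push_neg at h
    have hACu : (A : Set G) ∪ (C : Set G) = Set.univ := by
      apply Set.eq_univ_iff_forall.mpr
      intro g
      rcases hmem g with hg | hg | hg
      · exact Or.inl hg
      · by_cases hgA : g ∈ A
        · exact Or.inl hgA
        · exact Or.inr (h g hg hgA)
      · exact Or.inr hg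
    exact hC (scorza_two_cover A C hACu hA)
  have hexC : ∃ c, c ∈ C ∧ c ∉ A ∧ c ∉ B := by
    by_contra h; push_neg at h
    have hABu : (A : Set G) ∪ (B : Set G) = Set.univ := by
      apply Set.eq_univ_iff_forall.mpr
      intro g
      rcases hmem g with hg | hg | hg
      · exact Or.inl hg
      · exact Or.inr hg
      · by_cases hgA : g ∈ A
        · exact Or.inl hgA
        · exact Or.inr (h g hg hgA)
    exact hB (scorza_two_cover A B hABu hA)
  obtain ⟨a, haA, haB, haC⟩ := hexA
  obtain ⟨b, hbB, hbA, hbC⟩ := hexB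
  obtain ⟨c, hcC, hcA, hcB⟩ := hexC
  have hmemB : ∀ g : G, g ∈ B ∨ g ∈ A ∨ g ∈ C := by intro g; rcases hmem g with h|h|h <;> tauto
  have hmemC : ∀ g : G, g ∈ C ∨ g ∈ A ∨ g ∈ B := by intro g; rcases hmem g with h|h|h <;> tauto
  have keyA := scorza_key A B C hmem haA haB haC
  have keyB := scorza_key B A C hmemB hbB hbA hbC
  have hABleC : ∀ g : G, g ∈ A → g ∈ B → g ∈ C := scorza_inter_le C A B hmemC hcC hcA hcB
  refine ⟨(scorzaChi A keyA).prod (scorzaChi B keyB), ?_, ?_⟩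
  · -- surjectivity
    have hcases : ∀ z : Multiplicative (ZMod 2), z = 1 ∨ z = Multiplicative.ofAdd 1 := by decide
    have hfA : ∀ g : G, g ∈ A → scorzaChi A keyA g = 1 :=
      fun g hg => (scorzaChi_eq_one_iff A keyA g).mpr hg
    have hfB : ∀ g : G, g ∈ B → scorzaChi B keyB g = 1 :=
      fun g hg => (scorzaChi_eq_one_iff B keyB g).mpr hg
    have hfA' : ∀ g : G, g ∉ A → scorzaChi A keyA g = Multiplicative.ofAdd 1 := by
      intro g hg
      rcases hcases (scorzaChi A keyA g) with h | h
      · exact absurd ((scorzaChi_eq_one_iff A keyA g).mp h) hg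
      · exact h
    have hfB' : ∀ g : G, g ∉ B → scorzaChi B keyB g = Multiplicative.ofAdd 1 := by
      intro g hg
      rcases hcases (scorzaChi B keyB g) with h | h
      · exact absurd ((scorzaChi_eq_one_iff B keyB g).mp h) hg
      · exact h
    rintro ⟨u, v⟩
    have hbaA : b * a ∉ A := fun h => hbA ((mul_mem_cancel_right haA).mp h)
    have hbaB : b * a ∉ B := fun h => haB ((mul_mem_cancel_left hbB).mp h)
    rcases hcases u with hu | hu <;> rcases hcases v with hv | hv
    · exact ⟨1, by simp [hu, hv]⟩
    · exact ⟨a, by simp [MonoidHom.prod_apply, hfA a haA, hfB' a haB, hu, hv]⟩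
    · exact ⟨b, by simp [MonoidHom.prod_apply, hfA' b hbA, hfB b hbB, hu, hv]⟩
    · exact ⟨b * a, by
        simp [MonoidHom.prod_apply, hfA' _ hbaA, hfB' _ hbaB, hu, hv]⟩
  · -- kernel
    have hABC : A ⊓ B ⊓ C = A ⊓ B := by
      rw [inf_eq_left]
      rintro g ⟨hg1, hg2⟩
      exact hABleC g hg1 hg2
    rw [hABC]
    ext g
    simp only [MonoidHom.mem_ker, MonoidHom.prod_apply, Subgroup.mem_inf, Prod.ext_iff,
      Prod.fst_one, Prod.snd_one, scorzaChi_eq_one_iff]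
end

section
/- The polynomial ring ℤ[x] is the union of the three proper subrings S₁ = {f : f(0) is even}, S₂ = {f : f(1) is even}, and S₃ = {f : f(0) + f(1) is even}. -/
open Polynomial

lemma parity_mul_key {a b c d : ℤ} (h1 : Even (a + b)) (h2 : Even (c + d)) :
    Even (a * c + b * d) := by
  rcases Int.even_or_odd a with ha | ha
  · have hb : Even b := by rcases h1 with ⟨k, hk⟩; rcases ha with ⟨m, hm⟩; exact ⟨k - m, by omega⟩
    exact (ha.mul_right c).add (hb.mul_right d)
  · have hb : Odd b := by
      rcases h1 with ⟨k, hk⟩; rcases ha with ⟨m, hm⟩; exact ⟨k - m - 1, by omega⟩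
    rcases Int.even_or_odd c with hc | hc
    · have hd : Even d := by
        rcases h2 with ⟨k, hk⟩; rcases hc with ⟨m, hm⟩; exact ⟨k - m, by omega⟩
      exact (hc.mul_left a).add (hd.mul_left b)
    · have hd : Odd d := by
        rcases h2 with ⟨k, hk⟩; rcases hc with ⟨m, hm⟩; exact ⟨k - m - 1, by omega⟩
      exact (ha.mul hc).add_odd (hb.mul hd)

/-- The subring of polynomials with `f(a) + f(b)` even. -/
noncomputable def mySub (a b : ℤ) : NonUnitalSubring (Polynomial ℤ) where
  carrier := {f | Even (f.eval a + f.eval b)}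
  add_mem' := by
    intro f g hf hg
    simp only [Set.mem_setOf_eq, eval_add] at *
    have := hf.add hg
    convert this using 1; rfl; ring
  zero_mem' := by simp
  neg_mem' := by
    intro f hf
    simp only [Set.mem_setOf_eq, eval_neg] at *
    have := hf.neg
    convert this using 1; rfl; ring
  mul_mem' := by
    intro f g hf hg
    simp only [Set.mem_setOf_eq, eval_mul] at *
    exact parity_mul_key hf hg

/-- The subring of polynomials with `f(a)` even. -/
noncomputable def evenAt (a : ℤ) : NonUnitalSubring (Polynomial ℤ) where
  carrier := {f | Even (f.eval a)}
  add_mem' := by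
    intro f g hf hg
    simp only [Set.mem_setOf_eq, eval_add] at *
    exact hf.add hg
  zero_mem' := by simp
  neg_mem' := by
    intro f hf
    simp only [Set.mem_setOf_eq, eval_neg] at *
    exact hf.neg
  mul_mem' := by
    intro f g hf hg
    simp only [Set.mem_setOf_eq, eval_mul] at *
    exact hf.mul_right _

lemma mem_evenAt {a : ℤ} {f : Polynomial ℤ} :
    f ∈ evenAt a ↔ Even (f.eval a) := Iff.rfl

lemma mem_mySub {a b : ℤ} {f : Polynomial ℤ} :
    f ∈ mySub a b ↔ Even (f.eval a + f.eval b) := Iff.rfl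

/-- The polynomial ring `ℤ[X]` is the union of the three proper subrings
`S₁ = {f : f(0) even}`, `S₂ = {f : f(1) even}`, `S₃ = {f : f(0)+f(1) even}`. -/
theorem int_poly_union_of_three_proper_subrings :
    ∃ S₁ S₂ S₃ : NonUnitalSubring (Polynomial ℤ),
      (S₁ : Set (Polynomial ℤ)) = {f | Even (f.eval 0)} ∧
      (S₂ : Set (Polynomial ℤ)) = {f | Even (f.eval 1)} ∧
      (S₃ : Set (Polynomial ℤ)) = {f | Even (f.eval 0 + f.eval 1)} ∧
      S₁ ≠ ⊤ ∧ S₂ ≠ ⊤ ∧ S₃ ≠ ⊤ ∧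
      (S₁ : Set (Polynomial ℤ)) ∪ (S₂ : Set (Polynomial ℤ)) ∪ (S₃ : Set (Polynomial ℤ)) =
        Set.univ := by
  refine ⟨evenAt 0, evenAt 1, mySub 0 1, rfl, rfl, rfl, ?_, ?_, ?_, ?_⟩
  · intro h
    have : (1 : Polynomial ℤ) ∈ evenAt 0 := h ▸ trivial
    rw [mem_evenAt, eval_one, Int.even_iff] at this
    omega
  · intro h
    have : (1 : Polynomial ℤ) ∈ evenAt 1 := h ▸ trivial
    rw [mem_evenAt, eval_one, Int.even_iff] at this
    omega
  · intro h
    have : (X : Polynomial ℤ) ∈ mySub 0 1 := h ▸ trivial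
    rw [mem_mySub, eval_X, eval_X, Int.even_iff] at this
    omega
  · ext f
    simp only [Set.mem_union, Set.mem_univ, iff_true, SetLike.mem_coe]
    rw [mem_evenAt, mem_evenAt, mem_mySub]
    rcases Int.even_or_odd (f.eval 0) with h | h
    · exact Or.inl (Or.inl h)
    · rcases Int.even_or_odd (f.eval 1) with h1 | h1
      · exact Or.inl (Or.inr h1)
      · exact Or.inr (h.add_odd h1)
end

section
/- If a ring R is the union of three proper subrings S₁, S₂, S₃ such that no nonzero two-sided ideal of R is contained in S₁ ∩ S₂ ∩ S₃, then 2r = 0 for every r ∈ R. -/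
private lemma core_aux {R : Type*} [NonUnitalRing R] (A B C : NonUnitalSubring R)
    (hcover : ∀ r : R, r ∈ A ∨ r ∈ B ∨ r ∈ C)
    {a : R} (haA : a ∈ A) (haB : a ∉ B) (haC : a ∉ C)
    {g : R} (hgB : g ∈ B) (hgA : g ∉ A) : g + g ∈ A := by
  have e1 : a + g - a = g := by abel
  have e2 : a + g - g = a := by abel
  by_cases hgC : g ∈ C
  · rcases hcover (a + g) with h | h | h
    · exact absurd (e1 ▸ A.sub_mem h haA) hgA
    · exact absurd (e2 ▸ B.sub_mem h hgB) haB
    · exact absurd (e2 ▸ C.sub_mem h hgC) haC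
  · have hag : a + g ∈ C := by
      rcases hcover (a + g) with h | h | h
      · exact absurd (e1 ▸ A.sub_mem h haA) hgA
      · exact absurd (e2 ▸ B.sub_mem h hgB) haB
      · exact h
    have e3 : a + g + g - a = g + g := by abel
    have e4 : a + g + g - (g + g) = a := by abel
    have e5 : a + g + g - (a + g) = g := by abel
    rcases hcover (a + g + g) with h | h | h
    · exact e3 ▸ A.sub_mem h haA
    · exact absurd (e4 ▸ B.sub_mem h (B.add_mem hgB hgB)) haB
    · exact absurd (e5 ▸ C.sub_mem h hag) hgC

private lemma two_mem_aux {R : Type*} [NonUnitalRing R] (A B C : NonUnitalSubring R)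
    (hB : B ≠ ⊤) (hC : C ≠ ⊤)
    (hcover : ∀ r : R, r ∈ A ∨ r ∈ B ∨ r ∈ C) : ∀ g : R, g + g ∈ A := by
  obtain ⟨a, haA, haB, haC⟩ : ∃ a, a ∈ A ∧ a ∉ B ∧ a ∉ C := by
    by_contra h
    push_neg at h
    have cover2 : ∀ r : R, r ∈ B ∨ r ∈ C := by
      intro r
      rcases hcover r with hr | hr | hr
      · by_cases hrB : r ∈ B
        · exact Or.inl hrB
        · exact Or.inr (h r hr hrB)
      · exact Or.inl hr
      · exact Or.inr hr
    obtain ⟨b, hb⟩ : ∃ b, b ∉ B := by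
      by_contra hb; push_neg at hb; exact hB (B.eq_top_iff'.2 hb)
    obtain ⟨c, hc⟩ : ∃ c, c ∉ C := by
      by_contra hc; push_neg at hc; exact hC (C.eq_top_iff'.2 hc)
    have hbC : b ∈ C := (cover2 b).resolve_left hb
    have hcB : c ∈ B := (cover2 c).resolve_right hc
    have e1 : b + c - c = b := by abel
    have e2 : b + c - b = c := by abel
    rcases cover2 (b + c) with h' | h'
    · exact hb (e1 ▸ B.sub_mem h' hcB)
    · exact hc (e2 ▸ C.sub_mem h' hbC)
  intro g
  rcases hcover g with hgA | hgB | hgC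
  · exact A.add_mem hgA hgA
  · by_cases hgA : g ∈ A
    · exact A.add_mem hgA hgA
    · exact core_aux A B C hcover haA haB haC hgB hgA
  · by_cases hgA : g ∈ A
    · exact A.add_mem hgA hgA
    · exact core_aux A C B (fun r => by rcases hcover r with h|h|h <;> tauto) haA haC haB hgC hgA

/-- If a (not necessarily unital) ring `R` is the union of three proper
subrings `S₁, S₂, S₃` such that no nonzero two-sided ideal of `R` is contained
in `S₁ ∩ S₂ ∩ S₃`, then `2r = 0` for every `r ∈ R`. -/
theorem char_two_of_good_cover
    (R : Type*) [NonUnitalRing R] (S₁ S₂ S₃ : NonUnitalSubring R)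
    (h₁ : S₁ ≠ ⊤) (h₂ : S₂ ≠ ⊤) (h₃ : S₃ ≠ ⊤)
    (hcover : ∀ r : R, r ∈ S₁ ∨ r ∈ S₂ ∨ r ∈ S₃)
    (hideal : ∀ I : TwoSidedIdeal R,
      (I : Set R) ⊆ ((S₁ ⊓ S₂ ⊓ S₃ : NonUnitalSubring R) : Set R) → I = ⊥) :
    ∀ r : R, r + r = 0 := by
  have hA1 : ∀ g : R, g + g ∈ S₁ := two_mem_aux S₁ S₂ S₃ h₂ h₃ hcover
  have hA2 : ∀ g : R, g + g ∈ S₂ := two_mem_aux S₂ S₁ S₃ h₁ h₃ (fun r => by rcases hcover r with h|h|h <;> tauto)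
  have hA3 : ∀ g : R, g + g ∈ S₃ := two_mem_aux S₃ S₁ S₂ h₁ h₂ (fun r => by rcases hcover r with h|h|h <;> tauto)
  obtain ⟨I, hI⟩ : ∃ I : TwoSidedIdeal R, ∀ x : R, x ∈ I ↔ ∃ s : R, s + s = x :=
    ⟨TwoSidedIdeal.mk' {x : R | ∃ s : R, s + s = x} ⟨0, by simp⟩
      (fun {x y} ⟨s, hs⟩ ⟨t, ht⟩ => ⟨s + t, by rw [← hs, ← ht]; abel⟩)
      (fun {x} ⟨s, hs⟩ => ⟨-s, by rw [← hs]; abel⟩)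
      (fun {x y} ⟨s, hs⟩ => ⟨x * s, by rw [← hs, mul_add]⟩)
      (fun {x y} ⟨s, hs⟩ => ⟨s * y, by rw [← hs, add_mul]⟩),
     fun x => TwoSidedIdeal.mem_mk' _ _ _ _ _ _ x⟩
  have hsub : (I : Set R) ⊆ ((S₁ ⊓ S₂ ⊓ S₃ : NonUnitalSubring R) : Set R) := by
    intro x hx
    obtain ⟨s, rfl⟩ := (hI x).1 hx
    exact ⟨⟨hA1 s, hA2 s⟩, hA3 s⟩
  have hbot := hideal I hsub
  intro r
  have hr : r + r ∈ I := (hI _).2 ⟨r, rfl⟩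
  rw [hbot] at hr
  exact (TwoSidedIdeal.mem_bot R).1 hr
end

section
/- If a ring R is the union of three proper subrings S₁, S₂, S₃ such that no nonzero two-sided ideal of R is contained in S := S₁ ∩ S₂ ∩ S₃, then |R| ∈ {4, 8, 16}; in particular R is finite. -/
/-- If a (not necessarily unital) ring `R` is the union of three proper
subrings `S₁, S₂, S₃` such that no nonzero two-sided ideal of `R` is contained
in `S₁ ∩ S₂ ∩ S₃`, then `R` has exactly 4, 8, or 16 elements (in particular
`R` is finite, so its `Nat.card` is nonzero). -/
theorem card_of_good_ring
    (R : Type*) [NonUnitalRing R] (S₁ S₂ S₃ : NonUnitalSubring R)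
    (h₁ : S₁ ≠ ⊤) (h₂ : S₂ ≠ ⊤) (h₃ : S₃ ≠ ⊤)
    (hcover : ∀ r : R, r ∈ S₁ ∨ r ∈ S₂ ∨ r ∈ S₃)
    (hideal : ∀ I : TwoSidedIdeal R,
      (I : Set R) ⊆ ((S₁ ⊓ S₂ ⊓ S₃ : NonUnitalSubring R) : Set R) → I = ⊥) :
    Nat.card R = 4 ∨ Nat.card R = 8 ∨ Nat.card R = 16 := by
  classical
  -- two proper subrings cannot cover R
  have notop : ∀ T U : NonUnitalSubring R, T ≠ ⊤ → U ≠ ⊤ →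
      ¬ (∀ r : R, r ∈ T ∨ r ∈ U) := by
    intro T U hT hU hTU
    obtain ⟨x, hx⟩ : ∃ x : R, x ∉ T := by
      by_contra hcon; push_neg at hcon; exact hT (T.eq_top_iff'.mpr hcon)
    obtain ⟨y, hy⟩ : ∃ y : R, y ∉ U := by
      by_contra hcon; push_neg at hcon; exact hU (U.eq_top_iff'.mpr hcon)
    have hxU : x ∈ U := (hTU x).resolve_left hx
    have hyT : y ∈ T := (hTU y).resolve_right hy
    rcases hTU (x + y) with h | h
    · have := T.sub_mem h hyT
      rw [show x + y - y = x by abel] at this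
      exact hx this
    · have := U.sub_mem h hxU
      rw [show x + y - x = y by abel] at this
      exact hy this
  obtain ⟨a, ha1, ha2, ha3⟩ : ∃ a, a ∈ S₁ ∧ a ∉ S₂ ∧ a ∉ S₃ := by
    by_contra hcon; push_neg at hcon
    refine notop S₂ S₃ h₂ h₃ (fun r => ?_)
    rcases hcover r with h | h | h
    · by_cases h2 : r ∈ S₂
      · exact Or.inl h2
      · exact Or.inr (hcon r h h2)
    · exact Or.inl h
    · exact Or.inr h
  obtain ⟨b, hb2, hb1, hb3⟩ : ∃ b, b ∈ S₂ ∧ b ∉ S₁ ∧ b ∉ S₃ := by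
    by_contra hcon; push_neg at hcon
    refine notop S₁ S₃ h₁ h₃ (fun r => ?_)
    rcases hcover r with h | h | h
    · exact Or.inl h
    · by_cases h2 : r ∈ S₁
      · exact Or.inl h2
      · exact Or.inr (hcon r h h2)
    · exact Or.inr h
  have hc1 : a + b ∉ S₁ := by
    intro h
    have := S₁.sub_mem h ha1
    rw [show a + b - a = b by abel] at this
    exact hb1 this
  have hc2 : a + b ∉ S₂ := by
    intro h
    have := S₂.sub_mem h hb2
    rw [show a + b - b = a by abel] at this
    exact ha2 this
  have hc3 : a + b ∈ S₃ := ((hcover _).resolve_left hc1).resolve_left hc2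
  set T : NonUnitalSubring R := S₁ ⊓ S₂ ⊓ S₃ with hTdef
  have hTiff : ∀ x : R, x ∈ T ↔ (x ∈ S₁ ∧ x ∈ S₂ ∧ x ∈ S₃) := by
    intro x
    rw [hTdef]
    simp [NonUnitalSubring.mem_inf, and_assoc]
  have hTmk : ∀ {x : R}, x ∈ S₁ → x ∈ S₂ → x ∈ S₃ → x ∈ T :=
    fun hx1 hx2 hx3 => (hTiff _).mpr ⟨hx1, hx2, hx3⟩
  have hT1 : ∀ {x : R}, x ∈ T → x ∈ S₁ := fun hx => ((hTiff _).mp hx).1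
  have hT2 : ∀ {x : R}, x ∈ T → x ∈ S₂ := fun hx => ((hTiff _).mp hx).2.1
  have hT3 : ∀ {x : R}, x ∈ T → x ∈ S₃ := fun hx => ((hTiff _).mp hx).2.2
  -- pairwise intersections are all T
  have pair12 : ∀ x : R, x ∈ S₁ → x ∈ S₂ → x ∈ T := by
    intro x hx1 hx2
    have ht : x + (a + b) ∈ S₃ := by
      rcases hcover (x + (a + b)) with h | h | h
      · exfalso
        have := S₁.sub_mem h hx1
        rw [show x + (a + b) - x = a + b by abel] at this
        exact hc1 this
      · exfalso
        have := S₂.sub_mem h hx2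
        rw [show x + (a + b) - x = a + b by abel] at this
        exact hc2 this
      · exact h
    have := S₃.sub_mem ht hc3
    rw [show x + (a + b) - (a + b) = x by abel] at this
    exact hTmk hx1 hx2 this
  have pair13 : ∀ x : R, x ∈ S₁ → x ∈ S₃ → x ∈ T := by
    intro x hx1 hx3
    have ht : x + b ∈ S₂ := by
      rcases hcover (x + b) with h | h | h
      · exfalso
        have := S₁.sub_mem h hx1
        rw [show x + b - x = b by abel] at this
        exact hb1 this
      · exact h
      · exfalso
        have := S₃.sub_mem h hx3
        rw [show x + b - x = b by abel] at this
        exact hb3 this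
    have := S₂.sub_mem ht hb2
    rw [show x + b - b = x by abel] at this
    exact hTmk hx1 this hx3
  have pair23 : ∀ x : R, x ∈ S₂ → x ∈ S₃ → x ∈ T := by
    intro x hx2 hx3
    have ht : x + a ∈ S₁ := by
      rcases hcover (x + a) with h | h | h
      · exact h
      · exfalso
        have := S₂.sub_mem h hx2
        rw [show x + a - x = a by abel] at this
        exact ha2 this
      · exfalso
        have := S₃.sub_mem h hx3
        rw [show x + a - x = a by abel] at this
        exact ha3 this
    have := S₁.sub_mem ht ha1
    rw [show x + a - a = x by abel] at this
    exact hTmk this hx2 hx3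
  -- coset structure
  have hC1 : ∀ x : R, x ∈ S₁ → x ∈ T ∨ x - a ∈ T := by
    intro x hx1
    by_cases hx : x ∈ T
    · exact Or.inl hx
    right
    by_contra hxa
    have hxa1 : x - a ∈ S₁ := S₁.sub_mem hx1 ha1
    have hx2 : x ∉ S₂ := fun h => hx (pair12 x hx1 h)
    have hxa2 : x - a ∉ S₂ := fun h => hxa (pair12 _ hxa1 h)
    have hxb : x + b ∈ S₃ := by
      rcases hcover (x + b) with h | h | h
      · exfalso
        have := S₁.sub_mem h hx1
        rw [show x + b - x = b by abel] at this
        exact hb1 this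
      · exfalso
        have := S₂.sub_mem h hb2
        rw [show x + b - b = x by abel] at this
        exact hx2 this
      · exact h
    have hxab : x - a + b ∈ S₃ := by
      rcases hcover (x - a + b) with h | h | h
      · exfalso
        have := S₁.sub_mem h hxa1
        rw [show x - a + b - (x - a) = b by abel] at this
        exact hb1 this
      · exfalso
        have := S₂.sub_mem h hb2
        rw [show x - a + b - b = x - a by abel] at this
        exact hxa2 this
      · exact h
    have := S₃.sub_mem hxb hxab
    rw [show x + b - (x - a + b) = a by abel] at this
    exact ha3 this
  have hC2 : ∀ x : R, x ∈ S₂ → x ∈ T ∨ x - b ∈ T := by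
    intro x hx2
    by_cases hx : x ∈ T
    · exact Or.inl hx
    right
    by_contra hxb
    have hxb2 : x - b ∈ S₂ := S₂.sub_mem hx2 hb2
    have hx1 : x ∉ S₁ := fun h => hx (pair12 x h hx2)
    have hxb1 : x - b ∉ S₁ := fun h => hxb (pair12 _ h hxb2)
    have hxa : x + a ∈ S₃ := by
      rcases hcover (x + a) with h | h | h
      · exfalso
        have := S₁.sub_mem h ha1
        rw [show x + a - a = x by abel] at this
        exact hx1 this
      · exfalso
        have := S₂.sub_mem h hx2
        rw [show x + a - x = a by abel] at this
        exact ha2 this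
      · exact h
    have hxba : x - b + a ∈ S₃ := by
      rcases hcover (x - b + a) with h | h | h
      · exfalso
        have := S₁.sub_mem h ha1
        rw [show x - b + a - a = x - b by abel] at this
        exact hxb1 this
      · exfalso
        have := S₂.sub_mem h hxb2
        rw [show x - b + a - (x - b) = a by abel] at this
        exact ha2 this
      · exact h
    have := S₃.sub_mem hxa hxba
    rw [show x + a - (x - b + a) = b by abel] at this
    exact hb3 this
  have hC3 : ∀ x : R, x ∈ S₃ → x ∈ T ∨ x - (a + b) ∈ T := by
    intro x hx3
    by_cases hx : x ∈ T
    · exact Or.inl hx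
    right
    by_contra hxc
    have hxc3 : x - (a + b) ∈ S₃ := S₃.sub_mem hx3 hc3
    have hx1 : x ∉ S₁ := fun h => hx (pair13 x h hx3)
    have hx2 : x ∉ S₂ := fun h => hx (pair23 x h hx3)
    have hxc1 : x - (a + b) ∉ S₁ := fun h => hxc (pair13 _ h hxc3)
    have hxa : x + a ∈ S₂ := by
      rcases hcover (x + a) with h | h | h
      · exfalso
        have := S₁.sub_mem h ha1
        rw [show x + a - a = x by abel] at this
        exact hx1 this
      · exact h
      · exfalso
        have := S₃.sub_mem h hx3
        rw [show x + a - x = a by abel] at this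
        exact ha3 this
    have hxb : x - b ∈ S₂ := by
      rcases hcover (x - b) with h | h | h
      · exfalso
        have := S₁.sub_mem h ha1
        rw [show x - b - a = x - (a + b) by abel] at this
        exact hxc1 this
      · exact h
      · exfalso
        have := S₃.sub_mem hx3 h
        rw [show x - (x - b) = b by abel] at this
        exact hb3 this
    have := S₂.sub_mem hxa hxb
    rw [show x + a - (x - b) = a + b by abel] at this
    exact hc2 this
  -- basic non-membership facts
  have hPa : a ∉ T := fun h => ha2 (hT2 h)
  have hPb : b ∉ T := fun h => hb1 (hT1 h)
  have hPc : a + b ∉ T := fun h => hc1 (hT1 h)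
  have hPab : a - b ∉ T := by
    intro h
    have := S₁.sub_mem ha1 (hT1 h)
    rw [show a - (a - b) = b by abel] at this
    exact hb1 this
  have hPneg : ∀ {x : R}, -x ∈ T → x ∈ T := by
    intro x h
    have := T.neg_mem h
    rwa [neg_neg] at this
  have hPna : -a ∉ T := fun h => hPa (hPneg h)
  have hPnb : -b ∉ T := fun h => hPb (hPneg h)
  have hPnc : -(a + b) ∉ T := fun h => hPc (hPneg h)
  have hPba : b - a ∉ T := by
    intro h
    apply hPab
    apply hPneg
    rwa [neg_sub]
  have h2a : a + a ∈ T := by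
    rcases hC1 (a + a) (S₁.add_mem ha1 ha1) with h | h
    · exact h
    · exfalso
      rw [show a + a - a = a by abel] at h
      exact hPa h
  have h2b : b + b ∈ T := by
    rcases hC2 (b + b) (S₂.add_mem hb2 hb2) with h | h
    · exact h
    · exfalso
      rw [show b + b - b = b by abel] at h
      exact hPb h
  -- decomposition of R
  have hdec : ∀ r : R, r ∈ T ∨ r - a ∈ T ∨ r - b ∈ T ∨ r - (a + b) ∈ T := by
    intro r
    rcases hcover r with h | h | h
    · rcases hC1 r h with h' | h'
      exacts [Or.inl h', Or.inr (Or.inl h')]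
    · rcases hC2 r h with h' | h'
      exacts [Or.inl h', Or.inr (Or.inr (Or.inl h'))]
    · rcases hC3 r h with h' | h'
      exacts [Or.inl h', Or.inr (Or.inr (Or.inr h'))]
  -- the linking lemmas
  have linkL1 : ∀ s : R, s ∈ T → a * s ∈ T → b * s ∈ T := by
    intro s hs has
    by_contra hbs
    have hbsb : b * s - b ∈ T := (hC2 _ (S₂.mul_mem hb2 (hT2 hs))).resolve_left hbs
    rcases hC3 _ (S₃.mul_mem hc3 (hT3 hs)) with h | h
    · apply hbs
      have := T.sub_mem h has
      rwa [show (a + b) * s - a * s = b * s by rw [add_mul]; abel] at this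
    · have hz : a * s + (b * s - b) ∈ T := T.add_mem has hbsb
      have := T.sub_mem h hz
      rw [show (a + b) * s - (a + b) - (a * s + (b * s - b)) = -a by rw [add_mul]; abel] at this
      exact hPna this
  have linkL2 : ∀ s : R, s ∈ T → b * s ∈ T → a * s ∈ T := by
    intro s hs hbs
    by_contra has
    have hasa : a * s - a ∈ T := (hC1 _ (S₁.mul_mem ha1 (hT1 hs))).resolve_left has
    rcases hC3 _ (S₃.mul_mem hc3 (hT3 hs)) with h | h
    · apply has
      have := T.sub_mem h hbs
      rwa [show (a + b) * s - b * s = a * s by rw [add_mul]; abel] at this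
    · have hz : b * s + (a * s - a) ∈ T := T.add_mem hbs hasa
      have := T.sub_mem h hz
      rw [show (a + b) * s - (a + b) - (b * s + (a * s - a)) = -b by rw [add_mul]; abel] at this
      exact hPnb this
  have linkR1 : ∀ s : R, s ∈ T → s * a ∈ T → s * b ∈ T := by
    intro s hs hsa
    by_contra hsb
    have hsbb : s * b - b ∈ T := (hC2 _ (S₂.mul_mem (hT2 hs) hb2)).resolve_left hsb
    rcases hC3 _ (S₃.mul_mem (hT3 hs) hc3) with h | h
    · apply hsb
      have := T.sub_mem h hsa
      rwa [show s * (a + b) - s * a = s * b by rw [mul_add]; abel] at this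
    · have hz : s * a + (s * b - b) ∈ T := T.add_mem hsa hsbb
      have := T.sub_mem h hz
      rw [show s * (a + b) - (a + b) - (s * a + (s * b - b)) = -a by rw [mul_add]; abel] at this
      exact hPna this
  have linkR2 : ∀ s : R, s ∈ T → s * b ∈ T → s * a ∈ T := by
    intro s hs hsb
    by_contra hsa
    have hsaa : s * a - a ∈ T := (hC1 _ (S₁.mul_mem (hT1 hs) ha1)).resolve_left hsa
    rcases hC3 _ (S₃.mul_mem (hT3 hs) hc3) with h | h
    · apply hsa
      have := T.sub_mem h hsb
      rwa [show s * (a + b) - s * b = s * a by rw [mul_add]; abel] at this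
    · have hz : s * b + (s * a - a) ∈ T := T.add_mem hsb hsaa
      have := T.sub_mem h hz
      rw [show s * (a + b) - (a + b) - (s * b + (s * a - a)) = -b by rw [mul_add]; abel] at this
      exact hPnb this
  -- the two-coordinate product lemmas
  have claimB : ∀ s : R, s ∈ T → s * a ∈ T → b * s ∈ T → b * (s * a) ∈ T := by
    intro s hs hsa hbs
    have h1 : b * (s * a) ∈ S₂ := S₂.mul_mem hb2 (hT2 hsa)
    have h2 : b * (s * a) ∈ S₁ := by
      rw [← mul_assoc]
      exact S₁.mul_mem (hT1 hbs) ha1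
    rcases hC1 _ h2 with h | h
    · exact h
    rcases hC2 _ h1 with h' | h'
    · exact h'
    exfalso
    have := T.sub_mem h' h
    rw [show b * (s * a) - b - (b * (s * a) - a) = a - b by abel] at this
    exact hPab this
  have key : ∀ s : R, s ∈ T → a * s ∈ T → s * a ∈ T → a * (s * a) ∈ T := by
    intro s hs has hsa
    exact linkL2 (s * a) hsa (claimB s hs hsa (linkL1 s hs has))
  -- multiplication by arbitrary elements
  have multL : ∀ s : R, s ∈ T → a * s ∈ T → ∀ r : R, r * s ∈ T := by
    intro s hs has r
    have hbs := linkL1 s hs has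
    rcases hdec r with h | h | h | h
    · exact T.mul_mem h hs
    · have := T.add_mem (T.mul_mem h hs) has
      rwa [show (r - a) * s + a * s = r * s by rw [sub_mul]; abel] at this
    · have := T.add_mem (T.mul_mem h hs) hbs
      rwa [show (r - b) * s + b * s = r * s by rw [sub_mul]; abel] at this
    · have := T.add_mem (T.mul_mem h hs) (T.add_mem has hbs)
      rwa [show (r - (a + b)) * s + (a * s + b * s) = r * s by rw [sub_mul, add_mul]; abel] at this
  have multR : ∀ s : R, s ∈ T → s * a ∈ T → ∀ r : R, s * r ∈ T := by
    intro s hs hsa r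
    have hsb := linkR1 s hs hsa
    rcases hdec r with h | h | h | h
    · exact T.mul_mem hs h
    · have := T.add_mem (T.mul_mem hs h) hsa
      rwa [show s * (r - a) + s * a = s * r by rw [mul_sub]; abel] at this
    · have := T.add_mem (T.mul_mem hs h) hsb
      rwa [show s * (r - b) + s * b = s * r by rw [mul_sub]; abel] at this
    · have := T.add_mem (T.mul_mem hs h) (T.add_mem hsa hsb)
      rwa [show s * (r - (a + b)) + (s * a + s * b) = s * r by rw [mul_sub, mul_add]; abel] at this
  -- the kernel is a two-sided ideal
  have hKleft : ∀ u v : R, (v ∈ T ∧ a * v ∈ T ∧ v * a ∈ T) →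
      (u * v ∈ T ∧ a * (u * v) ∈ T ∧ (u * v) * a ∈ T) := by
    rintro u v ⟨hv, hav, hva⟩
    refine ⟨multL v hv hav u, ?_, ?_⟩
    · have := multL v hv hav (a * u)
      rwa [mul_assoc] at this
    · have hkey : a * (v * a) ∈ T := key v hv hav hva
      have := multL (v * a) hva hkey u
      rwa [← mul_assoc] at this
  have hKright : ∀ u v : R, (u ∈ T ∧ a * u ∈ T ∧ u * a ∈ T) →
      (u * v ∈ T ∧ a * (u * v) ∈ T ∧ (u * v) * a ∈ T) := by
    rintro u v ⟨hu, hau, hua⟩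
    refine ⟨multR u hu hua v, ?_, ?_⟩
    · have hkey : (a * u) * a ∈ T := by
        rw [mul_assoc]
        exact key u hu hau hua
      have := multR (a * u) hau hkey v
      rwa [mul_assoc] at this
    · have := multR u hu hua (v * a)
      rwa [← mul_assoc] at this
  have hQ0 : ∀ x : R, x ∈ T → a * x ∈ T → x * a ∈ T → x = 0 := by
    intro x hx hax hxa
    let K : TwoSidedIdeal R := TwoSidedIdeal.mk' {y : R | y ∈ T ∧ a * y ∈ T ∧ y * a ∈ T}
      ⟨T.zero_mem, by rw [mul_zero]; exact T.zero_mem, by rw [zero_mul]; exact T.zero_mem⟩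
      (fun {u v} hu hv => ⟨T.add_mem hu.1 hv.1,
        by rw [mul_add]; exact T.add_mem hu.2.1 hv.2.1,
        by rw [add_mul]; exact T.add_mem hu.2.2 hv.2.2⟩)
      (fun {u} hu => ⟨T.neg_mem hu.1,
        by rw [mul_neg]; exact T.neg_mem hu.2.1,
        by rw [neg_mul]; exact T.neg_mem hu.2.2⟩)
      (fun {u v} hv => hKleft u v hv)
      (fun {u v} hu => hKright u v hu)
    have hKsub : (K : Set R) ⊆ (T : Set R) := by
      intro y hy
      rw [show (K : Set R) = {y : R | y ∈ T ∧ a * y ∈ T ∧ y * a ∈ T} from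
        TwoSidedIdeal.coe_mk' _ _ _ _ _ _] at hy
      exact hy.1
    have hKbot := hideal K hKsub
    have hxK : x ∈ K := (TwoSidedIdeal.mem_mk' _ _ _ _ _ _ x).mpr ⟨hx, hax, hxa⟩
    rw [hKbot] at hxK
    exact (TwoSidedIdeal.mem_bot R).mp hxK
  -- the flag homomorphism into ZMod 2 × ZMod 2
  have flagAdd : ∀ u v : R, u ∈ S₁ → v ∈ S₁ →
      (if (u + v) ∈ T then (0 : ZMod 2) else 1) =
        (if u ∈ T then (0 : ZMod 2) else 1) + (if v ∈ T then (0 : ZMod 2) else 1) := by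
    intro u v hu hv
    have hEx : ∀ w : R, w - a ∈ T → w ∉ T := by
      intro w h hw
      have := T.sub_mem hw h
      rw [show w - (w - a) = a by abel] at this
      exact hPa this
    by_cases hu' : u ∈ T <;> by_cases hv' : v ∈ T
    · have : u + v ∈ T := T.add_mem hu' hv'
      simp [hu', hv', this]
    · have hv2 : v - a ∈ T := (hC1 v hv).resolve_left hv'
      have hx : u + v - a ∈ T := by
        have := T.add_mem hu' hv2
        rwa [show u + (v - a) = u + v - a by abel] at this
      have : u + v ∉ T := hEx _ hx
      simp [hu', hv', this]
    · have hu2 : u - a ∈ T := (hC1 u hu).resolve_left hu'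
      have hx : u + v - a ∈ T := by
        have := T.add_mem hu2 hv'
        rwa [show (u - a) + v = u + v - a by abel] at this
      have : u + v ∉ T := hEx _ hx
      simp [hu', hv', this]
    · have hu2 : u - a ∈ T := (hC1 u hu).resolve_left hu'
      have hv2 : v - a ∈ T := (hC1 v hv).resolve_left hv'
      have : u + v ∈ T := by
        have := T.add_mem (T.add_mem hu2 hv2) h2a
        rwa [show (u - a) + (v - a) + (a + a) = u + v by abel] at this
      simp only [hu', hv', this, if_pos, if_neg, if_true, if_false]
      decide
  let φ : T →+ (ZMod 2 × ZMod 2) :=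
    { toFun := fun s => (if a * (s : R) ∈ T then (0 : ZMod 2) else 1,
        if (s : R) * a ∈ T then (0 : ZMod 2) else 1),
      map_zero' := by
        simp only [ZeroMemClass.coe_zero, mul_zero, zero_mul]
        simp [T.zero_mem]
      map_add' := by
        intro s t
        have hs1 : (s : R) ∈ S₁ := hT1 s.2
        have ht1 : (t : R) ∈ S₁ := hT1 t.2
        have hco : ((s + t : T) : R) = (s : R) + (t : R) := rfl
        refine Prod.ext ?_ ?_
        · show (if a * ((s + t : T) : R) ∈ T then (0 : ZMod 2) else 1) = _
          rw [hco, mul_add]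
          exact flagAdd _ _ (S₁.mul_mem ha1 hs1) (S₁.mul_mem ha1 ht1)
        · show (if ((s + t : T) : R) * a ∈ T then (0 : ZMod 2) else 1) = _
          rw [hco, add_mul]
          exact flagAdd _ _ (S₁.mul_mem hs1 ha1) (S₁.mul_mem ht1 ha1) }
  have hφinj : Function.Injective φ := by
    rw [injective_iff_map_eq_zero]
    intro s hs0
    have hfst : (if a * (s : R) ∈ T then (0 : ZMod 2) else 1) = 0 := congrArg Prod.fst hs0
    have hsnd : (if (s : R) * a ∈ T then (0 : ZMod 2) else 1) = 0 := congrArg Prod.snd hs0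
    have hA : a * (s : R) ∈ T := by
      by_contra h
      rw [if_neg h] at hfst
      exact one_ne_zero hfst
    have hB : (s : R) * a ∈ T := by
      by_contra h
      rw [if_neg h] at hsnd
      exact one_ne_zero hsnd
    exact Subtype.ext (hQ0 (s : R) s.2 hA hB)
  haveI hTfin : Finite T := Finite.of_injective φ hφinj
  have hdvd : Nat.card T ∣ 4 := by
    have := AddSubgroup.card_dvd_of_injective φ hφinj
    simpa [Nat.card_prod, Nat.card_zmod] using this
  -- the bijection R ≃ T × Bool × Bool
  have key16 : ∀ p q p' q' : Bool,
      ((cond p a 0 + cond q b 0) - (cond p' a 0 + cond q' b 0)) ∈ T → p = p' ∧ q = q' := by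
    intro p q p' q' h
    rcases p <;> rcases q <;> rcases p' <;> rcases q' <;>
      simp only [cond_true, cond_false, add_zero, zero_add, sub_zero, zero_sub, sub_self,
        add_sub_cancel_right, add_sub_cancel_left, sub_add_cancel_left] at h <;>
      first
        | exact ⟨rfl, rfl⟩
        | exact absurd h hPa
        | exact absurd h hPb
        | exact absurd h hPc
        | exact absurd h hPab
        | exact absurd h hPba
        | exact absurd h hPna
        | exact absurd h hPnb
        | exact absurd h hPnc
        | (rw [show b - (a + b) = -a by abel] at h; exact absurd h hPna)
  have hbij : Function.Bijective
      (fun x : T × Bool × Bool => ((x.1 : R) + (cond x.2.1 a 0 + cond x.2.2 b 0))) := by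
    constructor
    · rintro ⟨s, p, q⟩ ⟨t, p', q'⟩ h
      simp only at h
      have hst : (s : R) - (t : R) =
          (cond p' a 0 + cond q' b 0) - (cond p a 0 + cond q b 0) := by
        calc (s : R) - (t : R)
            = ((s : R) + (cond p a 0 + cond q b 0)) - (cond p a 0 + cond q b 0) - (t : R) := by
              abel
          _ = ((t : R) + (cond p' a 0 + cond q' b 0)) - (cond p a 0 + cond q b 0) - (t : R) := by
              rw [h]
          _ = (cond p' a 0 + cond q' b 0) - (cond p a 0 + cond q b 0) := by abel
      have hPd : ((cond p' a 0 + cond q' b 0) - (cond p a 0 + cond q b 0)) ∈ T := by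
        rw [← hst]
        exact T.sub_mem s.2 t.2
      obtain ⟨hp, hq⟩ := key16 p' q' p q hPd
      subst hp; subst hq
      have hz : (s : R) - (t : R) = 0 := by rw [hst]; abel
      have hst' : s = t := Subtype.ext (sub_eq_zero.mp hz)
      rw [hst']
    · intro r
      rcases hdec r with h | h | h | h
      · refine ⟨⟨⟨r, h⟩, false, false⟩, ?_⟩
        show r + ((0 : R) + 0) = r
        abel
      · refine ⟨⟨⟨r - a, h⟩, true, false⟩, ?_⟩
        show (r - a) + (a + 0) = r
        abel
      · refine ⟨⟨⟨r - b, h⟩, false, true⟩, ?_⟩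
        show (r - b) + ((0 : R) + b) = r
        abel
      · refine ⟨⟨⟨r - (a + b), h⟩, true, true⟩, ?_⟩
        show (r - (a + b)) + (a + b) = r
        abel
  have hcardR : Nat.card R = Nat.card T * 4 := by
    have hcongr := Nat.card_congr (Equiv.ofBijective _ hbij)
    have hbool : Nat.card Bool = 2 := by simp [Nat.card_eq_fintype_card]
    rw [← hcongr, Nat.card_prod, Nat.card_prod, hbool]
  haveI : Nonempty T := ⟨0⟩
  have hTpos : 0 < Nat.card T := Nat.card_pos
  have hle : Nat.card T ≤ 4 := Nat.le_of_dvd (by norm_num) hdvd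
  have hn : Nat.card T = 1 ∨ Nat.card T = 2 ∨ Nat.card T = 4 := by
    set n := Nat.card T with hndef
    interval_cases n
    · exact Or.inl rfl
    · exact Or.inr (Or.inl rfl)
    · exact absurd hdvd (by norm_num)
    · exact Or.inr (Or.inr rfl)
  rcases hn with h | h | h <;> rw [hcardR, h] <;> norm_num
end

section
/- Let R be a ring, S₁, S₂, S₃ proper subrings with R = S₁ ∪ S₂ ∪ S₃ and S = S₁ ∩ S₂ ∩ S₃ containing no nonzero ideal of R. Write (R,+) = S ⊕ {0, x, y, x+y} with (Sᵢ,+) = S ⊕ {0,x}, S ⊕ {0,y}, S ⊕ {0,x+y} respectively. Then for any s ∈ S: sx ∈ S if and only if sy ∈ S, and xs ∈ S if and only if ys ∈ S. -/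
private lemma gc_helper {R : Type*} [NonUnitalRing R] (S : NonUnitalSubring R)
    (hchar : ∀ r : R, r + r = 0) (x y a b : R) (hx : x ∉ S) (hy : y ∉ S)
    (ha : a ∈ S ∨ a + x ∈ S) (hb : b ∈ S ∨ b + y ∈ S)
    (hab : a + b ∈ S ∨ a + b + (x + y) ∈ S) : (a ∈ S ↔ b ∈ S) := by
  constructor
  · intro haS
    rcases hb with hbS | hbyS
    · exact hbS
    rcases hab with habS | habxyS
    · have : b = a + (a + b) := by
        rw [← add_assoc, hchar a, zero_add]
      rw [this]; exact S.add_mem haS habS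
    · exfalso; apply hx
      have : x = a + ((b + y) + (a + b + (x + y))) := by
        have h2 : ∀ r : R, r + r = 0 := hchar
        linear_combination (norm := abel_nf) -(h2 a) - (h2 b) - (h2 y)
      rw [this]
      exact S.add_mem haS (S.add_mem hbyS habxyS)
  · intro hbS
    rcases ha with haS | haxS
    · exact haS
    rcases hab with habS | habxyS
    · have : a = (a + b) + b := by
        rw [add_assoc, hchar b, add_zero]
      rw [this]; exact S.add_mem habS hbS
    · exfalso; apply hy
      have : y = b + ((a + x) + (a + b + (x + y))) := by
        have h2 : ∀ r : R, r + r = 0 := hchar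
        linear_combination (norm := abel_nf) -(h2 a) - (h2 b) - (h2 x)
      rw [this]
      exact S.add_mem hbS (S.add_mem haxS habxyS)

/-- Setup: `R = S₁ ∪ S₂ ∪ S₃` with the `Sᵢ` proper subrings,
`S = S₁ ∩ S₂ ∩ S₃` containing no nonzero two-sided ideal of `R`, `2R = 0`, and
`(R,+) = S ⊕ {0, x, y, x+y}` with `(S₁,+) = S ⊕ {0,x}`, `(S₂,+) = S ⊕ {0,y}`,
`(S₃,+) = S ⊕ {0,x+y}`.  Then for any `s ∈ S`: `sx ∈ S ↔ sy ∈ S` and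
`xs ∈ S ↔ ys ∈ S`. -/
theorem good_cover_lemma_one
    (R : Type*) [NonUnitalRing R] (S₁ S₂ S₃ : NonUnitalSubring R)
    (h₁ : S₁ ≠ ⊤) (h₂ : S₂ ≠ ⊤) (h₃ : S₃ ≠ ⊤)
    (hcover : ∀ r : R, r ∈ S₁ ∨ r ∈ S₂ ∨ r ∈ S₃)
    (hideal : ∀ I : TwoSidedIdeal R,
      (I : Set R) ⊆ ((S₁ ⊓ S₂ ⊓ S₃ : NonUnitalSubring R) : Set R) → I = ⊥)
    (hchar : ∀ r : R, r + r = 0)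
    (x y : R)
    (hxS : x ∉ S₁ ⊓ S₂ ⊓ S₃) (hyS : y ∉ S₁ ⊓ S₂ ⊓ S₃) (hxyS : x + y ∉ S₁ ⊓ S₂ ⊓ S₃)
    (hS₁ : (S₁ : Set R) = ((S₁ ⊓ S₂ ⊓ S₃ : NonUnitalSubring R) : Set R) ∪
      ((· + x) '' ((S₁ ⊓ S₂ ⊓ S₃ : NonUnitalSubring R) : Set R)))
    (hS₂ : (S₂ : Set R) = ((S₁ ⊓ S₂ ⊓ S₃ : NonUnitalSubring R) : Set R) ∪
      ((· + y) '' ((S₁ ⊓ S₂ ⊓ S₃ : NonUnitalSubring R) : Set R)))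
    (hS₃ : (S₃ : Set R) = ((S₁ ⊓ S₂ ⊓ S₃ : NonUnitalSubring R) : Set R) ∪
      ((· + (x + y)) '' ((S₁ ⊓ S₂ ⊓ S₃ : NonUnitalSubring R) : Set R))) :
    ∀ s ∈ S₁ ⊓ S₂ ⊓ S₃,
      (s * x ∈ S₁ ⊓ S₂ ⊓ S₃ ↔ s * y ∈ S₁ ⊓ S₂ ⊓ S₃) ∧
      (x * s ∈ S₁ ⊓ S₂ ⊓ S₃ ↔ y * s ∈ S₁ ⊓ S₂ ⊓ S₃) := by
  set S : NonUnitalSubring R := S₁ ⊓ S₂ ⊓ S₃ with hSdef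
  -- extraction lemmas
  have ext₁ : ∀ r : R, r ∈ S₁ → r ∈ S ∨ r + x ∈ S := by
    intro r hr
    have : r ∈ (S₁ : Set R) := hr
    rw [hS₁] at this
    rcases this with h | ⟨t, ht, htx⟩
    · exact Or.inl h
    · right
      have : r + x = t := by
        simp only at htx
        rw [← htx, add_assoc, hchar x, add_zero]
      rw [this]; exact ht
  have ext₂ : ∀ r : R, r ∈ S₂ → r ∈ S ∨ r + y ∈ S := by
    intro r hr
    have : r ∈ (S₂ : Set R) := hr
    rw [hS₂] at this
    rcases this with h | ⟨t, ht, hty⟩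
    · exact Or.inl h
    · right
      have : r + y = t := by
        simp only at hty
        rw [← hty, add_assoc, hchar y, add_zero]
      rw [this]; exact ht
  have ext₃ : ∀ r : R, r ∈ S₃ → r ∈ S ∨ r + (x + y) ∈ S := by
    intro r hr
    have : r ∈ (S₃ : Set R) := hr
    rw [hS₃] at this
    rcases this with h | ⟨t, ht, hty⟩
    · exact Or.inl h
    · right
      have : r + (x + y) = t := by
        simp only at hty
        rw [← hty, add_assoc, hchar (x + y), add_zero]
      rw [this]; exact ht
  -- x ∈ S₁, y ∈ S₂, x + y ∈ S₃
  have hx1 : x ∈ S₁ := by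
    have : x ∈ (S₁ : Set R) := by
      rw [hS₁]; right; exact ⟨0, S.zero_mem, by simp⟩
    exact this
  have hy2 : y ∈ S₂ := by
    have : y ∈ (S₂ : Set R) := by
      rw [hS₂]; right; exact ⟨0, S.zero_mem, by simp⟩
    exact this
  have hxy3 : x + y ∈ S₃ := by
    have : x + y ∈ (S₃ : Set R) := by
      rw [hS₃]; right; exact ⟨0, S.zero_mem, by simp⟩
    exact this
  intro s hs
  have hs1 : s ∈ S₁ := hs.1.1
  have hs2 : s ∈ S₂ := hs.1.2
  have hs3 : s ∈ S₃ := hs.2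
  constructor
  · refine gc_helper S hchar x y (s * x) (s * y) hxS hyS ?_ ?_ ?_
    · exact ext₁ _ (S₁.mul_mem hs1 hx1)
    · exact ext₂ _ (S₂.mul_mem hs2 hy2)
    · have := ext₃ _ (S₃.mul_mem hs3 hxy3)
      rwa [mul_add] at this
  · refine gc_helper S hchar x y (x * s) (y * s) hxS hyS ?_ ?_ ?_
    · exact ext₁ _ (S₁.mul_mem hx1 hs1)
    · exact ext₂ _ (S₂.mul_mem hy2 hs2)
    · have := ext₃ _ (S₃.mul_mem hxy3 hs3)
      rwa [add_mul] at this
end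

section
/- Under the setup of the previous lemma, let T = {s ∈ S : sx ∈ S and xs ∈ S}. If t ∈ T then all of tx, xt, ty, yt, xty, ytx, xtx, yty lie in S. -/
/-- Setup: `R = S₁ ∪ S₂ ∪ S₃` with the `Sᵢ` proper subrings,
`S = S₁ ∩ S₂ ∩ S₃` containing no nonzero two-sided ideal of `R`, `2R = 0`, and
`(R,+) = S ⊕ {0, x, y, x+y}` with `(S₁,+) = S ⊕ {0,x}`, `(S₂,+) = S ⊕ {0,y}`,
`(S₃,+) = S ⊕ {0,x+y}`.  Let `T = {s ∈ S : sx ∈ S and xs ∈ S}`.  If `t ∈ T`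
then all of `tx, xt, ty, yt, xty, ytx, xtx, yty` lie in `S`. -/
theorem good_cover_lemma_two
    (R : Type*) [NonUnitalRing R] (S₁ S₂ S₃ : NonUnitalSubring R)
    (h₁ : S₁ ≠ ⊤) (h₂ : S₂ ≠ ⊤) (h₃ : S₃ ≠ ⊤)
    (hcover : ∀ r : R, r ∈ S₁ ∨ r ∈ S₂ ∨ r ∈ S₃)
    (hideal : ∀ I : TwoSidedIdeal R,
      (I : Set R) ⊆ ((S₁ ⊓ S₂ ⊓ S₃ : NonUnitalSubring R) : Set R) → I = ⊥)
    (hchar : ∀ r : R, r + r = 0)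
    (x y : R)
    (hxS : x ∉ S₁ ⊓ S₂ ⊓ S₃) (hyS : y ∉ S₁ ⊓ S₂ ⊓ S₃) (hxyS : x + y ∉ S₁ ⊓ S₂ ⊓ S₃)
    (hS₁ : (S₁ : Set R) = ((S₁ ⊓ S₂ ⊓ S₃ : NonUnitalSubring R) : Set R) ∪
      ((· + x) '' ((S₁ ⊓ S₂ ⊓ S₃ : NonUnitalSubring R) : Set R)))
    (hS₂ : (S₂ : Set R) = ((S₁ ⊓ S₂ ⊓ S₃ : NonUnitalSubring R) : Set R) ∪
      ((· + y) '' ((S₁ ⊓ S₂ ⊓ S₃ : NonUnitalSubring R) : Set R)))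
    (hS₃ : (S₃ : Set R) = ((S₁ ⊓ S₂ ⊓ S₃ : NonUnitalSubring R) : Set R) ∪
      ((· + (x + y)) '' ((S₁ ⊓ S₂ ⊓ S₃ : NonUnitalSubring R) : Set R)))
    (t : R) (ht : t ∈ S₁ ⊓ S₂ ⊓ S₃)
    (htx : t * x ∈ S₁ ⊓ S₂ ⊓ S₃) (hxt : x * t ∈ S₁ ⊓ S₂ ⊓ S₃) :
    t * x ∈ S₁ ⊓ S₂ ⊓ S₃ ∧ x * t ∈ S₁ ⊓ S₂ ⊓ S₃ ∧
    t * y ∈ S₁ ⊓ S₂ ⊓ S₃ ∧ y * t ∈ S₁ ⊓ S₂ ⊓ S₃ ∧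
    x * t * y ∈ S₁ ⊓ S₂ ⊓ S₃ ∧ y * t * x ∈ S₁ ⊓ S₂ ⊓ S₃ ∧
    x * t * x ∈ S₁ ⊓ S₂ ⊓ S₃ ∧ y * t * y ∈ S₁ ⊓ S₂ ⊓ S₃ := by
  set S : NonUnitalSubring R := S₁ ⊓ S₂ ⊓ S₃ with hS
  -- basic memberships
  have hx1 : x ∈ S₁ := by
    rw [← SetLike.mem_coe, hS₁]; right; exact ⟨0, S.zero_mem, by simp⟩
  have hy2 : y ∈ S₂ := by
    rw [← SetLike.mem_coe, hS₂]; right; exact ⟨0, S.zero_mem, by simp⟩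
  have hxy3 : x + y ∈ S₃ := by
    rw [← SetLike.mem_coe, hS₃]; right; exact ⟨0, S.zero_mem, by simp⟩
  have ht1 : t ∈ S₁ := ht.1.1
  have ht2 : t ∈ S₂ := ht.1.2
  have ht3 : t ∈ S₃ := ht.2
  -- elements in two of the subrings lie in S
  have key12 : ∀ r : R, r ∈ S₁ → r ∈ S₂ → r ∈ S := by
    intro r h1 h2
    rw [← SetLike.mem_coe, hS₁] at h1
    rw [← SetLike.mem_coe, hS₂] at h2
    rcases h1 with h1 | ⟨s, hs, rfl⟩
    · exact h1
    rcases h2 with h2 | ⟨s', hs', he⟩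
    · exact h2
    · exfalso; apply hxyS
      have he' : s' + y = s + x := he
      have h0 : (s + x) + (s' + y) = 0 := by rw [← he']; exact hchar _
      have h1' : x + y = -(s + s') := by
        apply eq_neg_of_add_eq_zero_left; rw [← h0]; abel
      rw [h1']
      exact S.neg_mem (S.add_mem hs hs')
  have key13 : ∀ r : R, r ∈ S₁ → r ∈ S₃ → r ∈ S := by
    intro r h1 h2
    rw [← SetLike.mem_coe, hS₁] at h1
    rw [← SetLike.mem_coe, hS₃] at h2
    rcases h1 with h1 | ⟨s, hs, rfl⟩
    · exact h1
    rcases h2 with h2 | ⟨s', hs', he⟩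
    · exact h2
    · exfalso; apply hyS
      have he' : s' + (x + y) = s + x := he
      have h0 : (s + x) + (s' + (x + y)) = 0 := by rw [← he']; exact hchar _
      have hxx := hchar x
      have h1' : y = -(s + s') := by
        apply eq_neg_of_add_eq_zero_left
        have : y + (s + s') = (s + x) + (s' + (x + y)) - (x + x) := by abel
        rw [this, h0, hxx, sub_zero]
      rw [h1']
      exact S.neg_mem (S.add_mem hs hs')
  have key23 : ∀ r : R, r ∈ S₂ → r ∈ S₃ → r ∈ S := by
    intro r h1 h2
    rw [← SetLike.mem_coe, hS₂] at h1
    rw [← SetLike.mem_coe, hS₃] at h2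
    rcases h1 with h1 | ⟨s, hs, rfl⟩
    · exact h1
    rcases h2 with h2 | ⟨s', hs', he⟩
    · exact h2
    · exfalso; apply hxS
      have he' : s' + (x + y) = s + y := he
      have h0 : (s + y) + (s' + (x + y)) = 0 := by rw [← he']; exact hchar _
      have hyy := hchar y
      have h1' : x = -(s + s') := by
        apply eq_neg_of_add_eq_zero_left
        have : x + (s + s') = (s + y) + (s' + (x + y)) - (y + y) := by abel
        rw [this, h0, hyy, sub_zero]
      rw [h1']
      exact S.neg_mem (S.add_mem hs hs')
  -- t*y ∈ S
  have hty : t * y ∈ S := by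
    apply key23 _ (S₂.mul_mem ht2 hy2)
    have h3 : t * (x + y) - t * x ∈ S₃ := S₃.sub_mem (S₃.mul_mem ht3 hxy3) htx.2
    have : t * (x + y) - t * x = t * y := by rw [mul_add]; abel
    rwa [this] at h3
  -- y*t ∈ S
  have hyt : y * t ∈ S := by
    apply key23 _ (S₂.mul_mem hy2 ht2)
    have h3 : (x + y) * t - x * t ∈ S₃ := S₃.sub_mem (S₃.mul_mem hxy3 ht3) hxt.2
    have : (x + y) * t - x * t = y * t := by rw [add_mul]; abel
    rwa [this] at h3
  -- x*t*y ∈ S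
  have hxty : x * t * y ∈ S := by
    apply key12
    · have : x * t * y = x * (t * y) := by rw [mul_assoc]
      rw [this]; exact S₁.mul_mem hx1 hty.1.1
    · exact S₂.mul_mem hxt.1.2 hy2
  -- y*t*x ∈ S
  have hytx : y * t * x ∈ S := by
    apply key12
    · exact S₁.mul_mem hyt.1.1 hx1
    · have : y * t * x = y * (t * x) := by rw [mul_assoc]
      rw [this]; exact S₂.mul_mem hy2 htx.1.2
  -- x*t*x ∈ S
  have hxtx : x * t * x ∈ S := by
    apply key13
    · exact S₁.mul_mem hxt.1.1 hx1
    · have h3 : (x + y) * (t * x) - y * (t * x) ∈ S₃ :=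
        S₃.sub_mem (S₃.mul_mem hxy3 htx.2) (by rw [← mul_assoc]; exact hytx.2)
      have : (x + y) * (t * x) - y * (t * x) = x * t * x := by
        rw [add_mul, mul_assoc]; abel
      rwa [this] at h3
  -- y*t*y ∈ S
  have hyty : y * t * y ∈ S := by
    apply key23
    · exact S₂.mul_mem hyt.1.2 hy2
    · have h3 : (x + y) * (t * y) - x * (t * y) ∈ S₃ :=
        S₃.sub_mem (S₃.mul_mem hxy3 hty.2) (by rw [← mul_assoc]; exact hxty.2)
      have : (x + y) * (t * y) - x * (t * y) = y * t * y := by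
        rw [add_mul, mul_assoc]; abel
      rwa [this] at h3
  exact ⟨htx, hxt, hty, hyt, hxty, hytx, hxtx, hyty⟩
end

section
/- Let M be a not-necessarily-unital ring, and let M* = M ⊕ ⟨u⟩ with u + u = 0 and u acting as a multiplicative identity (unitalization over ℤ/2). If R = S₁ ∪ S₂ ∪ S₃ with the Sᵢ proper subrings, R has no multiplicative identity, and no nonzero ideal of R is contained in S₁ ∩ S₂ ∩ S₃, then R* = S₁* ∪ S₂* ∪ S₃* with the Sᵢ* proper subrings of R* and no nonzero ideal of R* contained in S₁* ∩ S₂* ∩ S₃*. -/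
section Aux

variable {R : Type*} [NonUnitalRing R] [Module (ZMod 2) R]
    [SMulCommClass (ZMod 2) R R] [IsScalarTower (ZMod 2) R R]

private lemma zmod2_smul_mem' (S : NonUnitalSubring R) (a : ZMod 2) {s : R} (hs : s ∈ S) :
    a • s ∈ S := by
  have h : ∀ b : ZMod 2, b = 0 ∨ b = 1 := by decide
  rcases h a with rfl | rfl
  · simpa using S.zero_mem
  · simpa using hs

private def sndIn' (S : NonUnitalSubring R) : Subring (Unitization (ZMod 2) R) where
  carrier := {z | z.snd ∈ S}
  one_mem' := by simpa using S.zero_mem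
  zero_mem' := by simpa using S.zero_mem
  add_mem' := fun {a b} ha hb => by simpa using S.add_mem ha hb
  neg_mem' := fun {a} ha => by simpa using S.neg_mem ha
  mul_mem' := fun {x y} hx hy => by
    simp only [Set.mem_setOf_eq, Unitization.snd_mul]
    exact S.add_mem (S.add_mem (zmod2_smul_mem' S _ hy) (zmod2_smul_mem' S _ hx)) (S.mul_mem hx hy)

private lemma mem_closure_iff' (S : NonUnitalSubring R) (z : Unitization (ZMod 2) R) :
    z ∈ Subring.closure ((Unitization.inr : R → Unitization (ZMod 2) R) '' (S : Set R)) ↔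
      z.snd ∈ S := by
  constructor
  · intro hz
    have hle : Subring.closure ((Unitization.inr : R → Unitization (ZMod 2) R) '' (S : Set R)) ≤
        sndIn' S := by
      apply Subring.closure_le.mpr
      rintro _ ⟨s, hs, rfl⟩
      exact (by simpa using hs : (Unitization.inr s : Unitization (ZMod 2) R).snd ∈ S)
    exact hle hz
  · intro hz
    have h1 : (Unitization.inr z.snd : Unitization (ZMod 2) R) ∈
        Subring.closure ((Unitization.inr : R → Unitization (ZMod 2) R) '' (S : Set R)) :=
      Subring.subset_closure ⟨z.snd, hz, rfl⟩
    have h2 : (Unitization.inl z.fst : Unitization (ZMod 2) R) ∈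
        Subring.closure ((Unitization.inr : R → Unitization (ZMod 2) R) '' (S : Set R)) := by
      have h : ∀ b : ZMod 2, b = 0 ∨ b = 1 := by decide
      rcases h z.fst with h0 | h0 <;> rw [h0]
      · simpa [Unitization.inl_zero] using Subring.zero_mem _
      · simpa [Unitization.inl_one] using Subring.one_mem _
    have := Subring.add_mem _ h2 h1
    rwa [Unitization.inl_fst_add_inr_snd_eq] at this

end Aux

/-- Let `R` be a not-necessarily-unital ring of characteristic 2 (a module
over `ℤ/2`), and let `R* = Unitization (ZMod 2) R` be its `ℤ/2`-unitalization,
obtained by adjoining a multiplicative identity `u` with `u + u = 0`.  If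
`R = S₁ ∪ S₂ ∪ S₃` with the `Sᵢ` proper subrings, `R` has no multiplicative
identity, and no nonzero two-sided ideal of `R` is contained in
`S₁ ∩ S₂ ∩ S₃`, then `R* = S₁* ∪ S₂* ∪ S₃*` where `Sᵢ*`, the subring of `R*`
generated by `Sᵢ` and `u`, is proper, and no nonzero two-sided ideal of `R*`
is contained in `S₁* ∩ S₂* ∩ S₃*`. -/
theorem unitization_of_good_tuple
    (R : Type*) [NonUnitalRing R] [Module (ZMod 2) R]
    [SMulCommClass (ZMod 2) R R] [IsScalarTower (ZMod 2) R R]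
    (S₁ S₂ S₃ : NonUnitalSubring R)
    (h₁ : S₁ ≠ ⊤) (h₂ : S₂ ≠ ⊤) (h₃ : S₃ ≠ ⊤)
    (hcover : ∀ r : R, r ∈ S₁ ∨ r ∈ S₂ ∨ r ∈ S₃)
    (hideal : ∀ I : TwoSidedIdeal R,
      (I : Set R) ⊆ ((S₁ ⊓ S₂ ⊓ S₃ : NonUnitalSubring R) : Set R) → I = ⊥)
    (hnoid : ¬ ∃ e : R, ∀ r : R, e * r = r ∧ r * e = r) :
    (Subring.closure ((Unitization.inr : R → Unitization (ZMod 2) R) '' (S₁ : Set R)) ≠ ⊤) ∧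
    (Subring.closure ((Unitization.inr : R → Unitization (ZMod 2) R) '' (S₂ : Set R)) ≠ ⊤) ∧
    (Subring.closure ((Unitization.inr : R → Unitization (ZMod 2) R) '' (S₃ : Set R)) ≠ ⊤) ∧
    (∀ z : Unitization (ZMod 2) R,
      z ∈ Subring.closure ((Unitization.inr : R → Unitization (ZMod 2) R) '' (S₁ : Set R)) ∨
      z ∈ Subring.closure ((Unitization.inr : R → Unitization (ZMod 2) R) '' (S₂ : Set R)) ∨
      z ∈ Subring.closure ((Unitization.inr : R → Unitization (ZMod 2) R) '' (S₃ : Set R))) ∧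
    (∀ J : TwoSidedIdeal (Unitization (ZMod 2) R),
      (J : Set (Unitization (ZMod 2) R)) ⊆
        (Subring.closure ((Unitization.inr : R → Unitization (ZMod 2) R) '' (S₁ : Set R)) : Set (Unitization (ZMod 2) R)) ∩
        (Subring.closure ((Unitization.inr : R → Unitization (ZMod 2) R) '' (S₂ : Set R)) : Set (Unitization (ZMod 2) R)) ∩
        (Subring.closure ((Unitization.inr : R → Unitization (ZMod 2) R) '' (S₃ : Set R)) : Set (Unitization (ZMod 2) R)) →
      J = ⊥) := by
  -- properness
  have proper : ∀ S : NonUnitalSubring R, S ≠ ⊤ →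
      Subring.closure ((Unitization.inr : R → Unitization (ZMod 2) R) '' (S : Set R)) ≠ ⊤ := by
    intro S hS htop
    apply hS
    ext r
    simp only [NonUnitalSubring.mem_top, iff_true]
    have : (Unitization.inr r : Unitization (ZMod 2) R) ∈
        Subring.closure ((Unitization.inr : R → Unitization (ZMod 2) R) '' (S : Set R)) := by
      rw [htop]; trivial
    simpa using (mem_closure_iff' S _).mp this
  refine ⟨proper S₁ h₁, proper S₂ h₂, proper S₃ h₃, ?_, ?_⟩
  · intro z
    rcases hcover z.snd with h | h | h
    · exact Or.inl ((mem_closure_iff' S₁ z).mpr h)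
    · exact Or.inr (Or.inl ((mem_closure_iff' S₂ z).mpr h))
    · exact Or.inr (Or.inr ((mem_closure_iff' S₃ z).mpr h))
  · intro J hJ
    -- the ideal I = {r | inr r ∈ J}
    set I : TwoSidedIdeal R := TwoSidedIdeal.mk'
      {r : R | (Unitization.inr r : Unitization (ZMod 2) R) ∈ J}
      (by simpa using J.zero_mem)
      (fun {x y} hx hy => by simpa using J.add_mem hx hy)
      (fun {x} hx => by simpa using J.neg_mem hx)
      (fun {x y} hy => by
        simpa [Unitization.inr_mul] using J.mul_mem_left (Unitization.inr x) _ hy)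
      (fun {x y} hx => by
        simpa [Unitization.inr_mul] using J.mul_mem_right _ (Unitization.inr y) hx)
      with hI
    have hIbot : I = ⊥ := by
      apply hideal
      intro r hr
      rw [hI] at hr
      rw [SetLike.mem_coe] at hr
      replace hr := (TwoSidedIdeal.mem_mk' _ _ _ _ _ _ _).mp hr
      have := hJ hr
      simp only [Set.mem_inter_iff, SetLike.mem_coe] at this
      obtain ⟨⟨hr1, hr2⟩, hr3⟩ := this
      exact ⟨⟨by simpa using (mem_closure_iff' S₁ _).mp hr1,
        by simpa using (mem_closure_iff' S₂ _).mp hr2⟩,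
        by simpa using (mem_closure_iff' S₃ _).mp hr3⟩
    have hIzero : ∀ r : R, (Unitization.inr r : Unitization (ZMod 2) R) ∈ J → r = 0 := by
      intro r hr
      have : r ∈ I := by rw [hI]; exact (TwoSidedIdeal.mem_mk' _ _ _ _ _ _ _).mpr hr
      rw [hIbot] at this
      exact (TwoSidedIdeal.mem_bot R).mp this
    -- now show J = ⊥
    refine le_antisymm ?_ bot_le
    intro z hz
    rw [TwoSidedIdeal.mem_bot]
    -- key computation
    have key : ∀ r : R, z.fst • r + z.snd * r = 0 := by
      intro r
      have hm : z * (Unitization.inr r : Unitization (ZMod 2) R) ∈ J :=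
        J.mul_mem_right _ _ hz
      have hsnd : (z * (Unitization.inr r : Unitization (ZMod 2) R)) =
          Unitization.inr (z.fst • r + z.snd * r) := by
        ext
        · simp
        · simp [Unitization.snd_mul]
      rw [hsnd] at hm
      exact hIzero _ hm
    have key' : ∀ r : R, z.fst • r + r * z.snd = 0 := by
      intro r
      have hm : (Unitization.inr r : Unitization (ZMod 2) R) * z ∈ J :=
        J.mul_mem_left _ _ hz
      have hsnd : ((Unitization.inr r : Unitization (ZMod 2) R) * z) =
          Unitization.inr (z.fst • r + r * z.snd) := by
        ext
        · simp
        · simp [Unitization.snd_mul]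
      rw [hsnd] at hm
      exact hIzero _ hm
    have hfst : z.fst = 0 := by
      by_contra hne
      have h1 : z.fst = 1 := by
        have h : ∀ b : ZMod 2, b = 0 ∨ b = 1 := by decide
        rcases h z.fst with h0 | h0
        · exact absurd h0 hne
        · exact h0
      apply hnoid
      refine ⟨-z.snd, fun r => ?_⟩
      constructor
      · have := key r
        rw [h1, one_smul] at this
        have : z.snd * r = -r := by linear_combination (norm := abel) this
        rw [neg_mul, this, neg_neg]
      · have := key' r
        rw [h1, one_smul] at this
        have : r * z.snd = -r := by linear_combination (norm := abel) this
        rw [mul_neg, this, neg_neg]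
    have hsnd0 : z.snd = 0 := by
      apply hIzero
      have : z = Unitization.inr z.snd := by
        ext
        · simp [hfst]
        · simp
      rwa [this] at hz
    ext
    · simp [hfst]
    · simp [hsnd0]
end

section
/- Suppose R is a ring with multiplicative identity 1 that is the union of three proper subrings S₁, S₂, S₃, with no nonzero ideal of R in S₁ ∩ S₂ ∩ S₃. Then either R ≅ ℤ/2 × ℤ/2, or 1 ∈ Sᵢ for all i = 1, 2, 3. -/
section KleinAux

variable {R : Type*} [Ring R]

/-- In a ring covered by three proper non-unital subrings, each subring contains
an element belonging to it alone. -/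
private lemma klein_exists_only (A B C : NonUnitalSubring R)
    (hB : B ≠ ⊤) (hC : C ≠ ⊤)
    (hcov : ∀ r : R, r ∈ A ∨ r ∈ B ∨ r ∈ C) :
    ∃ a, a ∈ A ∧ a ∉ B ∧ a ∉ C := by
  by_contra h
  push_neg at h
  obtain ⟨b, hb⟩ : ∃ b, b ∉ B := by
    by_contra hb; push_neg at hb
    exact hB (by ext x; simpa using hb x)
  obtain ⟨c, hc⟩ : ∃ c, c ∉ C := by
    by_contra hc; push_neg at hc
    exact hC (by ext x; simpa using hc x)
  have hbC : b ∈ C := by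
    rcases hcov b with h1 | h1 | h1
    · exact h b h1 hb
    · exact absurd h1 hb
    · exact h1
  have hcB : c ∈ B := by
    by_contra hcB
    rcases hcov c with h1 | h1 | h1
    · exact hc (h c h1 hcB)
    · exact hcB h1
    · exact hc h1
  have hbc : b + c ∈ B ∨ b + c ∈ C := by
    rcases hcov (b + c) with h1 | h1 | h1
    · by_cases h2 : b + c ∈ B
      · exact Or.inl h2
      · exact Or.inr (h _ h1 h2)
    · exact Or.inl h1
    · exact Or.inr h1
  rcases hbc with h1 | h1
  · exact hb (by simpa using B.sub_mem h1 hcB)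
  · exact hc (by simpa using C.sub_mem h1 hbC)

/-- Pairwise intersections are contained in the third subring. -/
private lemma klein_pairwise (A B C : NonUnitalSubring R)
    (hB : B ≠ ⊤) (hC : C ≠ ⊤)
    (hcov : ∀ r : R, r ∈ A ∨ r ∈ B ∨ r ∈ C) :
    ∀ x, x ∈ B → x ∈ C → x ∈ A := by
  obtain ⟨a, haA, haB, haC⟩ := klein_exists_only A B C hB hC hcov
  intro x hxB hxC
  by_contra hxA
  rcases hcov (a + x) with h1 | h1 | h1
  · exact hxA (by simpa using A.sub_mem h1 haA)
  · exact haB (by simpa using B.sub_mem h1 hxB)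
  · exact haC (by simpa using C.sub_mem h1 hxC)

/-- Each of the three subrings has additive index two. -/
private lemma klein_index2 (A B C : NonUnitalSubring R)
    (hB : B ≠ ⊤) (hC : C ≠ ⊤)
    (hcov : ∀ r : R, r ∈ A ∨ r ∈ B ∨ r ∈ C) :
    ∀ x y : R, x ∉ A → y ∉ A → x - y ∈ A := by
  obtain ⟨a, haA, haB, haC⟩ := klein_exists_only A B C hB hC hcov
  have pair := klein_pairwise A B C hB hC hcov
  have stepB : ∀ z, z ∉ A → z ∈ B → a + z ∈ C := by
    intro z hzA hzB
    rcases hcov (a + z) with h1 | h1 | h1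
    · exact absurd (by simpa using A.sub_mem h1 haA) hzA
    · exact absurd (by simpa using B.sub_mem h1 hzB) haB
    · exact h1
  have stepC : ∀ z, z ∉ A → z ∈ C → a + z ∈ B := by
    intro z hzA hzC
    rcases hcov (a + z) with h1 | h1 | h1
    · exact absurd (by simpa using A.sub_mem h1 haA) hzA
    · exact h1
    · exact absurd (by simpa using C.sub_mem h1 hzC) haC
  intro x y hx hy
  have hxBC : x ∈ B ∨ x ∈ C := by rcases hcov x with h | h | h; exacts [absurd h hx, Or.inl h, Or.inr h]
  have hyBC : y ∈ B ∨ y ∈ C := by rcases hcov y with h | h | h; exacts [absurd h hy, Or.inl h, Or.inr h]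
  rcases hxBC with hxB | hxC <;> rcases hyBC with hyB | hyC
  · -- both in B
    have h1 : x - y ∈ C := by
      have := C.sub_mem (stepB x hx hxB) (stepB y hy hyB)
      rwa [show a + x - (a + y) = x - y by abel] at this
    exact pair _ (B.sub_mem hxB hyB) h1
  · -- x ∈ B, y ∈ C
    have hax : a + x ∈ C := stepB x hx hxB
    have hay : a + y ∈ B := stepC y hy hyC
    by_contra hxyA
    rcases hcov (x - y) with h1 | h1 | h1
    · exact hxyA h1
    · -- x - y ∈ B ; x - (a+y) ∈ B ; difference is a
      have h2 : x - (a + y) ∈ B := B.sub_mem hxB hay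
      have := B.sub_mem h1 h2
      rw [show x - y - (x - (a + y)) = a by abel] at this
      exact haB this
    · have h2 : (a + x) - y ∈ C := C.sub_mem hax hyC
      have := C.sub_mem h2 h1
      rw [show (a + x) - y - (x - y) = a by abel] at this
      exact haC this
  · -- x ∈ C, y ∈ B
    have hax : a + x ∈ B := stepC x hx hxC
    have hay : a + y ∈ C := stepB y hy hyB
    by_contra hxyA
    rcases hcov (x - y) with h1 | h1 | h1
    · exact hxyA h1
    · have h2 : (a + x) - y ∈ B := B.sub_mem hax hyB
      have := B.sub_mem h2 h1
      rw [show (a + x) - y - (x - y) = a by abel] at this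
      exact haB this
    · have h2 : x - (a + y) ∈ C := C.sub_mem hxC hay
      have := C.sub_mem h1 h2
      rw [show x - y - (x - (a + y)) = a by abel] at this
      exact haC this
  · -- both in C
    have h1 : x - y ∈ B := by
      have := B.sub_mem (stepC x hx hxC) (stepC y hy hyC)
      rwa [show a + x - (a + y) = x - y by abel] at this
    exact pair _ h1 (C.sub_mem hxC hyC)


open Classical in
private lemma klein_main (A B C : NonUnitalSubring R)
    (hA : A ≠ ⊤) (hB : B ≠ ⊤) (hC : C ≠ ⊤)
    (hcov : ∀ r : R, r ∈ A ∨ r ∈ B ∨ r ∈ C)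
    (hT : ∀ I : TwoSidedIdeal R, (∀ x, x ∈ I → x ∈ A ∧ x ∈ B ∧ x ∈ C) → I = ⊥)
    (h1A : (1 : R) ∈ A) (h1B : (1 : R) ∉ B) (h1C : (1 : R) ∉ C) :
    Nonempty (R ≃+* ZMod 2 × ZMod 2) := by
  have covB : ∀ r : R, r ∈ B ∨ r ∈ C ∨ r ∈ A := fun r => by rcases hcov r with h | h | h <;> tauto
  have covC : ∀ r : R, r ∈ C ∨ r ∈ A ∨ r ∈ B := fun r => by rcases hcov r with h | h | h <;> tauto
  -- pairwise intersection lemmas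
  have pBC : ∀ x : R, x ∈ B → x ∈ C → x ∈ A := klein_pairwise A B C hB hC hcov
  have pCA : ∀ x : R, x ∈ C → x ∈ A → x ∈ B := klein_pairwise B C A hC hA covB
  have pAB : ∀ x : R, x ∈ A → x ∈ B → x ∈ C := klein_pairwise C A B hA hB covC
  -- index-two lemmas (in additive form)
  have i2A := klein_index2 A B C hB hC hcov
  have i2B := klein_index2 B C A hC hA covB
  have i2C := klein_index2 C A B hA hB covC
  have addA : ∀ x y : R, x ∉ A → y ∉ A → x + y ∈ A := by
    intro x y hx hy
    have h1 : -y ∉ A := fun h => hy (by simpa using A.neg_mem h)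
    simpa [sub_neg_eq_add] using i2A x (-y) hx h1
  have addB : ∀ x y : R, x ∉ B → y ∉ B → x + y ∈ B := by
    intro x y hx hy
    have h1 : -y ∉ B := fun h => hy (by simpa using B.neg_mem h)
    simpa [sub_neg_eq_add] using i2B x (-y) hx h1
  have addC : ∀ x y : R, x ∉ C → y ∉ C → x + y ∈ C := by
    intro x y hx hy
    have h1 : -y ∉ C := fun h => hy (by simpa using C.neg_mem h)
    simpa [sub_neg_eq_add] using i2C x (-y) hx h1
  -- the fixed element v, in B only
  obtain ⟨v, hv, hvC', hvA⟩ := klein_exists_only B C A hC hA covB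
  have hvC : v ∉ C := hvC'
  -- step lemmas
  have stepB : ∀ x : R, x ∈ B → x ∉ A → (1 + x ∈ C ∧ 1 + x ∉ A ∧ 1 + x ∉ B) := by
    intro x hxB hxA
    have h1 : 1 + x ∉ A := fun h => hxA (by simpa using A.sub_mem h h1A)
    have h2 : 1 + x ∉ B := fun h => h1B (by simpa using B.sub_mem h hxB)
    have h3 : 1 + x ∈ C := by
      rcases hcov (1 + x) with h | h | h
      exacts [absurd h h1, absurd h h2, h]
    exact ⟨h3, h1, h2⟩
  have stepC : ∀ x : R, x ∈ C → x ∉ A → (1 + x ∈ B ∧ 1 + x ∉ A ∧ 1 + x ∉ C) := by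
    intro x hxC hxA
    have h1 : 1 + x ∉ A := fun h => hxA (by simpa using A.sub_mem h h1A)
    have h2 : 1 + x ∉ C := fun h => h1C (by simpa using C.sub_mem h hxC)
    have h3 : 1 + x ∈ B := by
      rcases hcov (1 + x) with h | h | h
      exacts [absurd h h1, h, absurd h h2]
    exact ⟨h3, h1, h2⟩
  -- product of two B-only elements is B-only
  have q2B : ∀ x y : R, x ∈ B → x ∉ A → y ∈ B → y ∉ A → (x * y ∈ B ∧ x * y ∉ A) := by
    intro x y hxB hxA hyB hyA
    refine ⟨B.mul_mem hxB hyB, ?_⟩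
    intro hxyA
    have hxyC : x * y ∈ C := pAB _ hxyA (B.mul_mem hxB hyB)
    have hsA : x + y ∈ A := addA x y hxA hyA
    have hsC : x + y ∈ C := pAB _ hsA (B.add_mem hxB hyB)
    have hprod : (1 + x) * (1 + y) ∈ C := C.mul_mem (stepB x hxB hxA).1 (stepB y hyB hyA).1
    have h1 : (1 : R) ∈ C := by
      have h := C.sub_mem (C.sub_mem hprod hsC) hxyC
      rwa [show (1 + x) * (1 + y) - (x + y) - x * y = 1 by noncomm_ring] at h
    exact h1C h1
  have q2C : ∀ x y : R, x ∈ C → x ∉ A → y ∈ C → y ∉ A → (x * y ∈ C ∧ x * y ∉ A) := by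
    intro x y hxC hxA hyC hyA
    refine ⟨C.mul_mem hxC hyC, ?_⟩
    intro hxyA
    have hxyB : x * y ∈ B := pCA _ (C.mul_mem hxC hyC) hxyA
    have hsA : x + y ∈ A := addA x y hxA hyA
    have hsB : x + y ∈ B := pCA _ (C.add_mem hxC hyC) hsA
    have hprod : (1 + x) * (1 + y) ∈ B := B.mul_mem (stepC x hxC hxA).1 (stepC y hyC hyA).1
    have h1 : (1 : R) ∈ B := by
      have h := B.sub_mem (B.sub_mem hprod hsB) hxyB
      rwa [show (1 + x) * (1 + y) - (x + y) - x * y = 1 by noncomm_ring] at h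
    exact h1B h1
  -- T := A ∩ B ∩ C is a two-sided ideal
  have tid : ∀ t r : R, (t ∈ A ∧ t ∈ B ∧ t ∈ C) →
      ((t * r ∈ A ∧ t * r ∈ B ∧ t * r ∈ C) ∧ (r * t ∈ A ∧ r * t ∈ B ∧ r * t ∈ C)) := by
    intro t r ⟨htA, htB, htC⟩
    by_cases hrA : r ∈ A
    · by_cases hrB : r ∈ B
      · -- r ∈ T
        have hrC : r ∈ C := pAB r hrA hrB
        exact ⟨⟨A.mul_mem htA hrA, B.mul_mem htB hrB, C.mul_mem htC hrC⟩,
               ⟨A.mul_mem hrA htA, B.mul_mem hrB htB, C.mul_mem hrC htC⟩⟩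
      · -- r is A-only ; 1 + r ∈ T
        have hrC : r ∉ C := fun h => hrB (pCA r h hrA)
        have h1rA : 1 + r ∈ A := A.add_mem h1A hrA
        have h1rB : 1 + r ∈ B := addB 1 r h1B hrB
        have h1rC : 1 + r ∈ C := addC 1 r h1C hrC
        have etr : t * r = t * (1 + r) - t := by noncomm_ring
        have ert : r * t = (1 + r) * t - t := by noncomm_ring
        refine ⟨?_, ?_⟩
        · rw [etr]
          exact ⟨A.sub_mem (A.mul_mem htA h1rA) htA, B.sub_mem (B.mul_mem htB h1rB) htB,
                 C.sub_mem (C.mul_mem htC h1rC) htC⟩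
        · rw [ert]
          exact ⟨A.sub_mem (A.mul_mem h1rA htA) htA, B.sub_mem (B.mul_mem h1rB htB) htB,
                 C.sub_mem (C.mul_mem h1rC htC) htC⟩
    · rcases hcov r with h | hrB | hrC
      · exact absurd h hrA
      · -- r is B-only
        have htr : t + r ∈ B := B.add_mem htB hrB
        have htrA : t + r ∉ A := fun h => hrA (by simpa using A.sub_mem h htA)
        have q1 := q2B (t + r) r htr htrA hrB hrA
        have q2 := q2B r r hrB hrA hrB hrA
        have q3 := q2B r (t + r) hrB hrA htr htrA
        have htrB : t * r ∈ B := B.mul_mem htB hrB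
        have hrtB : r * t ∈ B := B.mul_mem hrB htB
        have htrA2 : t * r ∈ A := by
          by_contra hn
          exact q1.2 (by
            rw [show (t + r) * r = t * r + r * r by noncomm_ring]
            exact addA _ _ hn q2.2)
        have hrtA2 : r * t ∈ A := by
          by_contra hn
          exact q3.2 (by
            rw [show r * (t + r) = r * t + r * r by noncomm_ring]
            exact addA _ _ hn q2.2)
        exact ⟨⟨htrA2, htrB, pAB _ htrA2 htrB⟩, ⟨hrtA2, hrtB, pAB _ hrtA2 hrtB⟩⟩
      · -- r is C-only
        have htr : t + r ∈ C := C.add_mem htC hrC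
        have htrA : t + r ∉ A := fun h => hrA (by simpa using A.sub_mem h htA)
        have q1 := q2C (t + r) r htr htrA hrC hrA
        have q2 := q2C r r hrC hrA hrC hrA
        have q3 := q2C r (t + r) hrC hrA htr htrA
        have htrC : t * r ∈ C := C.mul_mem htC hrC
        have hrtC : r * t ∈ C := C.mul_mem hrC htC
        have htrA2 : t * r ∈ A := by
          by_contra hn
          exact q1.2 (by
            rw [show (t + r) * r = t * r + r * r by noncomm_ring]
            exact addA _ _ hn q2.2)
        have hrtA2 : r * t ∈ A := by
          by_contra hn
          exact q3.2 (by
            rw [show r * (t + r) = r * t + r * r by noncomm_ring]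
            exact addA _ _ hn q2.2)
        exact ⟨⟨htrA2, pCA _ htrC htrA2, htrC⟩, ⟨hrtA2, pCA _ hrtC hrtA2, hrtC⟩⟩
  -- hence T = 0
  have Tzero : ∀ x : R, x ∈ A → x ∈ B → x ∈ C → x = 0 := by
    set I : TwoSidedIdeal R := TwoSidedIdeal.mk'
      {x : R | x ∈ A ∧ x ∈ B ∧ x ∈ C}
      ⟨A.zero_mem, B.zero_mem, C.zero_mem⟩
      (fun hx hy => ⟨A.add_mem hx.1 hy.1, B.add_mem hx.2.1 hy.2.1, C.add_mem hx.2.2 hy.2.2⟩)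
      (fun hx => ⟨A.neg_mem hx.1, B.neg_mem hx.2.1, C.neg_mem hx.2.2⟩)
      (fun hy => (tid _ _ hy).2)
      (fun hx => (tid _ _ hx).1) with hI
    have hIbot : I = ⊥ := by
      refine hT I (fun x hx => ?_)
      rwa [hI, TwoSidedIdeal.mem_mk'] at hx
    intro x hxA hxB hxC
    have hxI : x ∈ I := by rw [hI, TwoSidedIdeal.mem_mk']; exact ⟨hxA, hxB, hxC⟩
    rw [hIbot] at hxI
    simpa using hxI
  -- characteristic 2
  have two : ∀ x : R, x + x = 0 := by
    intro x
    have tA : x + x ∈ A := by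
      by_cases h : x ∈ A
      · exact A.add_mem h h
      · exact addA x x h h
    have tB : x + x ∈ B := by
      by_cases h : x ∈ B
      · exact B.add_mem h h
      · exact addB x x h h
    have tC : x + x ∈ C := by
      by_cases h : x ∈ C
      · exact C.add_mem h h
      · exact addC x x h h
    exact Tzero _ tA tB tC
  have negeq : ∀ x : R, -x = x := fun x => neg_eq_of_add_eq_zero_left (two x)
  -- the four elements
  have eq1 : ∀ x : R, x ∈ A → x ∉ B → x = 1 := by
    intro x hxA hxB
    have hxC : x ∉ C := fun h => hxB (pCA x h hxA)
    have h0 : 1 + x = 0 :=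
      Tzero _ (A.add_mem h1A hxA) (addB 1 x h1B hxB) (addC 1 x h1C hxC)
    have : x = -1 := eq_neg_of_add_eq_zero_right h0
    rw [this, negeq]
  have eqv : ∀ x : R, x ∈ B → x ∉ A → x = v := by
    intro x hxB hxA
    have hxC : x ∉ C := fun h => hxA (pBC x hxB h)
    have h0 : x + v = 0 :=
      Tzero _ (addA x v hxA hvA) (B.add_mem hxB hv) (addC x v hxC hvC)
    have : x = -v := eq_neg_of_add_eq_zero_left h0
    rw [this, negeq]
  have eq1v : ∀ x : R, x ∈ C → x ∉ A → x = 1 + v := by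
    intro x hxC hxA
    have h1x := stepC x hxC hxA
    have hx' : 1 + x = v := eqv _ h1x.1 h1x.2.1
    have : x = 1 + (1 + x) := by rw [← add_assoc, two 1, zero_add]
    rw [this, hx']
  have cl4 : ∀ x : R, x = 0 ∨ x = 1 ∨ x = v ∨ x = 1 + v := by
    intro x
    by_cases hxA : x ∈ A
    · by_cases hxB : x ∈ B
      · exact Or.inl (Tzero x hxA hxB (pAB x hxA hxB))
      · exact Or.inr (Or.inl (eq1 x hxA hxB))
    · rcases hcov x with h | hxB | hxC
      · exact absurd h hxA
      · exact Or.inr (Or.inr (Or.inl (eqv x hxB hxA)))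
      · exact Or.inr (Or.inr (Or.inr (eq1v x hxC hxA)))
  -- basic membership facts
  have h1vB : (1 : R) + v ∉ B := fun h => h1B (by simpa using B.sub_mem h hv)
  have h1vC : (1 : R) + v ∈ C := (stepB v hv hvA).1
  have h1vA : (1 : R) + v ∉ A := (stepB v hv hvA).2.1
  -- multiplication table
  have pvv : v * v = v := by
    have q := q2B v v hv hvA hv hvA
    exact eqv _ q.1 q.2
  have pv1v : v * (1 + v) = 0 := by
    rw [mul_add, mul_one, pvv, two]
  have p1vv : (1 + v) * v = 0 := by
    rw [add_mul, one_mul, pvv, two]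
  have p1v1v : (1 + v) * (1 + v) = 1 + v := by
    rw [mul_add, mul_one, p1vv, add_zero]
  -- memberships of products
  have mulB : ∀ x y : R, x * y ∈ B ↔ (x ∈ B ∨ y ∈ B) := by
    intro x y
    constructor
    · intro h
      by_contra hn
      push_neg at hn
      obtain ⟨hx, hy⟩ := hn
      have hx4 := cl4 x
      have hy4 := cl4 y
      have hx' : x = 1 ∨ x = 1 + v := by
        rcases hx4 with rfl | rfl | rfl | rfl
        · exact absurd B.zero_mem hx
        · exact Or.inl rfl
        · exact absurd hv hx
        · exact Or.inr rfl
      have hy' : y = 1 ∨ y = 1 + v := by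
        rcases hy4 with rfl | rfl | rfl | rfl
        · exact absurd B.zero_mem hy
        · exact Or.inl rfl
        · exact absurd hv hy
        · exact Or.inr rfl
      rcases hx' with rfl | rfl <;> rcases hy' with rfl | rfl
      · rw [one_mul] at h; exact h1B h
      · rw [one_mul] at h; exact h1vB h
      · rw [mul_one] at h; exact h1vB h
      · rw [p1v1v] at h; exact h1vB h
    · intro h
      rcases h with hx | hy
      · -- x ∈ B, so x = 0 or v
        have hx' : x = 0 ∨ x = v := by
          rcases cl4 x with rfl | rfl | rfl | rfl
          · exact Or.inl rfl
          · exact absurd hx h1B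
          · exact Or.inr rfl
          · exact absurd hx h1vB
        rcases hx' with rfl | rfl
        · rw [zero_mul]; exact B.zero_mem
        · rcases cl4 y with rfl | rfl | rfl | rfl
          · rw [mul_zero]; exact B.zero_mem
          · rw [mul_one]; exact hv
          · rw [pvv]; exact hv
          · rw [pv1v]; exact B.zero_mem
      · have hy' : y = 0 ∨ y = v := by
          rcases cl4 y with rfl | rfl | rfl | rfl
          · exact Or.inl rfl
          · exact absurd hy h1B
          · exact Or.inr rfl
          · exact absurd hy h1vB
        rcases hy' with rfl | rfl
        · rw [mul_zero]; exact B.zero_mem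
        · rcases cl4 x with rfl | rfl | rfl | rfl
          · rw [zero_mul]; exact B.zero_mem
          · rw [one_mul]; exact hv
          · rw [pvv]; exact hv
          · rw [p1vv]; exact B.zero_mem
  have mulC : ∀ x y : R, x * y ∈ C ↔ (x ∈ C ∨ y ∈ C) := by
    intro x y
    constructor
    · intro h
      by_contra hn
      push_neg at hn
      obtain ⟨hx, hy⟩ := hn
      have hx' : x = 1 ∨ x = v := by
        rcases cl4 x with rfl | rfl | rfl | rfl
        · exact absurd C.zero_mem hx
        · exact Or.inl rfl
        · exact Or.inr rfl
        · exact absurd h1vC hx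
      have hy' : y = 1 ∨ y = v := by
        rcases cl4 y with rfl | rfl | rfl | rfl
        · exact absurd C.zero_mem hy
        · exact Or.inl rfl
        · exact Or.inr rfl
        · exact absurd h1vC hy
      rcases hx' with rfl | rfl <;> rcases hy' with rfl | rfl
      · rw [one_mul] at h; exact h1C h
      · rw [one_mul] at h; exact hvC h
      · rw [mul_one] at h; exact hvC h
      · rw [pvv] at h; exact hvC h
    · intro h
      rcases h with hx | hy
      · have hx' : x = 0 ∨ x = 1 + v := by
          rcases cl4 x with rfl | rfl | rfl | rfl
          · exact Or.inl rfl
          · exact absurd hx h1C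
          · exact absurd hx hvC
          · exact Or.inr rfl
        rcases hx' with rfl | rfl
        · rw [zero_mul]; exact C.zero_mem
        · rcases cl4 y with rfl | rfl | rfl | rfl
          · rw [mul_zero]; exact C.zero_mem
          · rw [mul_one]; exact h1vC
          · rw [p1vv]; exact C.zero_mem
          · rw [p1v1v]; exact h1vC
      · have hy' : y = 0 ∨ y = 1 + v := by
          rcases cl4 y with rfl | rfl | rfl | rfl
          · exact Or.inl rfl
          · exact absurd hy h1C
          · exact absurd hy hvC
          · exact Or.inr rfl
        rcases hy' with rfl | rfl
        · rw [mul_zero]; exact C.zero_mem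
        · rcases cl4 x with rfl | rfl | rfl | rfl
          · rw [zero_mul]; exact C.zero_mem
          · rw [one_mul]; exact h1vC
          · rw [pv1v]; exact C.zero_mem
          · rw [p1v1v]; exact h1vC
  -- the ring homomorphism
  have addcomp : ∀ (S : NonUnitalSubring R), (∀ x y : R, x ∉ S → y ∉ S → x + y ∈ S) →
      ∀ x y : R, (if x + y ∈ S then (0 : ZMod 2) else 1)
        = (if x ∈ S then (0 : ZMod 2) else 1) + (if y ∈ S then (0 : ZMod 2) else 1) := by
    intro S hS x y
    by_cases hx : x ∈ S <;> by_cases hy : y ∈ S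
    · simp [hx, hy, S.add_mem hx hy]
    · have h : x + y ∉ S := fun h => hy (by simpa using S.sub_mem h hx)
      simp [hx, hy, h]
    · have h : x + y ∉ S := fun h => hx (by simpa using S.sub_mem h hy)
      simp [hx, hy, h]
    · have h : x + y ∈ S := hS x y hx hy
      simp [hx, hy, h]
      decide
  let f : R →+* ZMod 2 × ZMod 2 :=
  { toFun := fun x => (if x ∈ B then (0 : ZMod 2) else 1, if x ∈ C then (0 : ZMod 2) else 1)
    map_one' := by simp [h1B, h1C]
    map_mul' := by
      intro x y
      have hB' : (if x * y ∈ B then (0 : ZMod 2) else 1)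
          = (if x ∈ B then (0 : ZMod 2) else 1) * (if y ∈ B then (0 : ZMod 2) else 1) := by
        by_cases hx : x ∈ B
        · have hm : x * y ∈ B := (mulB x y).mpr (Or.inl hx)
          simp [hx, hm]
        · by_cases hy : y ∈ B
          · have hm : x * y ∈ B := (mulB x y).mpr (Or.inr hy)
            simp [hx, hy, hm]
          · have hm : x * y ∉ B := fun h => by
              rcases (mulB x y).mp h with h | h
              exacts [hx h, hy h]
            simp [hx, hy, hm]
      have hC' : (if x * y ∈ C then (0 : ZMod 2) else 1)
          = (if x ∈ C then (0 : ZMod 2) else 1) * (if y ∈ C then (0 : ZMod 2) else 1) := by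
        by_cases hx : x ∈ C
        · have hm : x * y ∈ C := (mulC x y).mpr (Or.inl hx)
          simp [hx, hm]
        · by_cases hy : y ∈ C
          · have hm : x * y ∈ C := (mulC x y).mpr (Or.inr hy)
            simp [hx, hy, hm]
          · have hm : x * y ∉ C := fun h => by
              rcases (mulC x y).mp h with h | h
              exacts [hx h, hy h]
            simp [hx, hy, hm]
      exact Prod.ext hB' hC'
    map_zero' := by simp [B.zero_mem, C.zero_mem]
    map_add' := by
      intro x y
      exact Prod.ext (addcomp B addB x y) (addcomp C addC x y) }
  have hf : ∀ x : R, f x = (if x ∈ B then (0 : ZMod 2) else 1, if x ∈ C then (0 : ZMod 2) else 1) :=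
    fun _ => rfl
  have inj : Function.Injective f := by
    intro x y h
    rw [hf, hf] at h
    have h01 : (0 : ZMod 2) ≠ 1 := by decide
    have h1 : (if x ∈ B then (0 : ZMod 2) else 1) = (if y ∈ B then (0 : ZMod 2) else 1) :=
      congrArg Prod.fst h
    have h2 : (if x ∈ C then (0 : ZMod 2) else 1) = (if y ∈ C then (0 : ZMod 2) else 1) :=
      congrArg Prod.snd h
    have hBxy : x ∈ B ↔ y ∈ B := by
      by_cases hx : x ∈ B <;> by_cases hy : y ∈ B
      · exact iff_of_true hx hy
      · rw [if_pos hx, if_neg hy] at h1; exact absurd h1 h01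
      · rw [if_neg hx, if_pos hy] at h1; exact absurd h1.symm h01
      · exact iff_of_false hx hy
    have hCxy : x ∈ C ↔ y ∈ C := by
      by_cases hx : x ∈ C <;> by_cases hy : y ∈ C
      · exact iff_of_true hx hy
      · rw [if_pos hx, if_neg hy] at h2; exact absurd h2 h01
      · rw [if_neg hx, if_pos hy] at h2; exact absurd h2.symm h01
      · exact iff_of_false hx hy
    have hsB : x + y ∈ B := by
      by_cases hx : x ∈ B
      · exact B.add_mem hx (hBxy.mp hx)
      · exact addB x y hx (fun h' => hx (hBxy.mpr h'))
    have hsC : x + y ∈ C := by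
      by_cases hx : x ∈ C
      · exact C.add_mem hx (hCxy.mp hx)
      · exact addC x y hx (fun h' => hx (hCxy.mpr h'))
    have h0 : x + y = 0 := Tzero _ (pBC _ hsB hsC) hsB hsC
    have := eq_neg_of_add_eq_zero_left h0
    rw [this, negeq]
  have surj : Function.Surjective f := by
    rintro ⟨i, j⟩
    have hz : ∀ z : ZMod 2, z = 0 ∨ z = 1 := by decide
    rcases hz i with rfl | rfl <;> rcases hz j with rfl | rfl
    · exact ⟨0, by rw [hf]; simp [B.zero_mem, C.zero_mem]⟩
    · exact ⟨v, by rw [hf]; simp [hv, hvC]⟩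
    · exact ⟨1 + v, by rw [hf]; simp [h1vB, h1vC]⟩
    · exact ⟨1, by rw [hf]; simp [h1B, h1C]⟩
  exact ⟨RingEquiv.ofBijective f ⟨inj, surj⟩⟩


end KleinAux

/-- Suppose `R` is a ring with multiplicative identity `1` that is the union
of three proper subrings `S₁, S₂, S₃` (which need not contain `1`), with no
nonzero two-sided ideal of `R` contained in `S₁ ∩ S₂ ∩ S₃`.  Then either
`R ≅ ℤ/2 × ℤ/2`, or `1 ∈ Sᵢ` for all `i = 1, 2, 3`. -/
theorem one_in_subrings_or_klein
    (R : Type*) [Ring R] (S₁ S₂ S₃ : NonUnitalSubring R)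
    (h₁ : S₁ ≠ ⊤) (h₂ : S₂ ≠ ⊤) (h₃ : S₃ ≠ ⊤)
    (hcover : ∀ r : R, r ∈ S₁ ∨ r ∈ S₂ ∨ r ∈ S₃)
    (hideal : ∀ I : TwoSidedIdeal R,
      (I : Set R) ⊆ ((S₁ ⊓ S₂ ⊓ S₃ : NonUnitalSubring R) : Set R) → I = ⊥) :
    Nonempty (R ≃+* (ZMod 2 × ZMod 2)) ∨
      ((1 : R) ∈ S₁ ∧ (1 : R) ∈ S₂ ∧ (1 : R) ∈ S₃) := by
  have hT0 : ∀ I : TwoSidedIdeal R, (∀ x, x ∈ I → x ∈ S₁ ∧ x ∈ S₂ ∧ x ∈ S₃) → I = ⊥ := by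
    intro I h
    refine hideal I (fun x hx => ?_)
    have hx' := h x hx
    simp only [SetLike.mem_coe, NonUnitalSubring.mem_inf]
    exact ⟨⟨hx'.1, hx'.2.1⟩, hx'.2.2⟩
  have cov231 : ∀ r : R, r ∈ S₂ ∨ r ∈ S₃ ∨ r ∈ S₁ := fun r => by
    rcases hcover r with h | h | h <;> tauto
  have cov312 : ∀ r : R, r ∈ S₃ ∨ r ∈ S₁ ∨ r ∈ S₂ := fun r => by
    rcases hcover r with h | h | h <;> tauto
  have cov213 : ∀ r : R, r ∈ S₂ ∨ r ∈ S₁ ∨ r ∈ S₃ := fun r => by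
    rcases hcover r with h | h | h <;> tauto
  by_cases e1 : (1 : R) ∈ S₁
  · by_cases e2 : (1 : R) ∈ S₂
    · exact Or.inr ⟨e1, e2, klein_pairwise S₃ S₁ S₂ h₁ h₂ cov312 1 e1 e2⟩
    · by_cases e3 : (1 : R) ∈ S₃
      · exact Or.inr ⟨e1, klein_pairwise S₂ S₃ S₁ h₃ h₁ cov231 1 e3 e1, e3⟩
      · exact Or.inl (klein_main S₁ S₂ S₃ h₁ h₂ h₃ hcover hT0 e1 e2 e3)
  · by_cases e2 : (1 : R) ∈ S₂
    · by_cases e3 : (1 : R) ∈ S₃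
      · exact Or.inr ⟨klein_pairwise S₁ S₂ S₃ h₂ h₃ hcover 1 e2 e3, e2, e3⟩
      · refine Or.inl (klein_main S₂ S₁ S₃ h₂ h₁ h₃ cov213
          (fun I h => hT0 I (fun x hx => by have := h x hx; tauto)) e2 e1 e3)
    · have e3 : (1 : R) ∈ S₃ := by rcases hcover 1 with h | h | h <;> tauto
      refine Or.inl (klein_main S₃ S₁ S₂ h₃ h₁ h₂ cov312
        (fun I h => hT0 I (fun x hx => by have := h x hx; tauto)) e3 e1 e2)
end

section
/- Up to isomorphism, there is a unique unital ring R of order 4 that is the union of three proper subrings none of which contains a nonzero ideal common to all three, namely R ≅ ℤ/2 × ℤ/2, and the three subrings are its three subrings of order 2. -/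
private def Tsub (u : ZMod 2 × ZMod 2) (hu : u + u = 0) (hm : u * u = 0 ∨ u * u = u) :
    NonUnitalSubring (ZMod 2 × ZMod 2) where
  carrier := {x | x = 0 ∨ x = u}
  zero_mem' := Or.inl rfl
  add_mem' := by
    rintro a b (rfl | ha) (rfl | hb)
    · exact Or.inl (zero_add 0)
    · rw [hb]; exact Or.inr (zero_add u)
    · rw [ha]; exact Or.inr (add_zero u)
    · rw [ha, hb]; exact Or.inl hu
  neg_mem' := by
    rintro a (rfl | ha)
    · exact Or.inl neg_zero
    · rw [ha]; exact Or.inr (neg_eq_of_add_eq_zero_left hu)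
  mul_mem' := by
    rintro a b (rfl | ha) (rfl | hb)
    · exact Or.inl (zero_mul 0)
    · rw [hb]; exact Or.inl (zero_mul u)
    · rw [ha]; exact Or.inl (mul_zero u)
    · rw [ha, hb]; exact hm

private lemma mem_Tsub {u : ZMod 2 × ZMod 2} {hu : u + u = 0} {hm : u * u = 0 ∨ u * u = u}
    {x : ZMod 2 × ZMod 2} : x ∈ Tsub u hu hm ↔ x = 0 ∨ x = u := Iff.rfl


set_option maxHeartbeats 1000000 in
/-- Up to isomorphism there is a unique unital ring `R` of order 4 that is the
union of three proper subrings with no nonzero two-sided ideal of `R` in their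
common intersection, namely `R ≅ ℤ/2 × ℤ/2`; the three subrings are the three
subrings of `R` of order 2.  We state: (a) such a cover of `ℤ/2 × ℤ/2` exists,
and (b) any unital ring of order 4 with such a cover is isomorphic to
`ℤ/2 × ℤ/2` and the three covering subrings are pairwise distinct of order 2,
and every subring of order 2 is one of them. -/
theorem good_unital_ring_of_order_four :
    (∃ T₁ T₂ T₃ : NonUnitalSubring (ZMod 2 × ZMod 2),
      T₁ ≠ ⊤ ∧ T₂ ≠ ⊤ ∧ T₃ ≠ ⊤ ∧
      (∀ r, r ∈ T₁ ∨ r ∈ T₂ ∨ r ∈ T₃) ∧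
      (∀ I : TwoSidedIdeal (ZMod 2 × ZMod 2),
        (I : Set (ZMod 2 × ZMod 2)) ⊆
          ((T₁ ⊓ T₂ ⊓ T₃ : NonUnitalSubring (ZMod 2 × ZMod 2)) : Set (ZMod 2 × ZMod 2)) →
        I = ⊥)) ∧
    (∀ (R : Type) (_ : Ring R), Nat.card R = 4 →
      ∀ S₁ S₂ S₃ : NonUnitalSubring R,
        S₁ ≠ ⊤ → S₂ ≠ ⊤ → S₃ ≠ ⊤ →
        (∀ r : R, r ∈ S₁ ∨ r ∈ S₂ ∨ r ∈ S₃) →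
        (∀ I : TwoSidedIdeal R,
          (I : Set R) ⊆ ((S₁ ⊓ S₂ ⊓ S₃ : NonUnitalSubring R) : Set R) → I = ⊥) →
        Nonempty (R ≃+* (ZMod 2 × ZMod 2)) ∧
        Nat.card S₁ = 2 ∧ Nat.card S₂ = 2 ∧ Nat.card S₃ = 2 ∧
        S₁ ≠ S₂ ∧ S₁ ≠ S₃ ∧ S₂ ≠ S₃ ∧
        (∀ T : NonUnitalSubring R, Nat.card T = 2 → T = S₁ ∨ T = S₂ ∨ T = S₃)) := by
  constructor
  · refine ⟨Tsub (1,0) (by decide) (by decide), Tsub (0,1) (by decide) (by decide),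
      Tsub (1,1) (by decide) (by decide), ?_, ?_, ?_, ?_, ?_⟩
    · intro h
      have : ((1,1) : ZMod 2 × ZMod 2) ∈ Tsub (1,0) (by decide) (by decide) := h ▸ trivial
      rw [mem_Tsub] at this
      revert this; decide
    · intro h
      have : ((1,1) : ZMod 2 × ZMod 2) ∈ Tsub (0,1) (by decide) (by decide) := h ▸ trivial
      rw [mem_Tsub] at this
      revert this; decide
    · intro h
      have : ((1,0) : ZMod 2 × ZMod 2) ∈ Tsub (1,1) (by decide) (by decide) := h ▸ trivial
      rw [mem_Tsub] at this
      revert this; decide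
    · intro r
      have : r = 0 ∨ r = (1,0) ∨ r = (0,1) ∨ r = (1,1) := by revert r; decide
      rcases this with rfl | rfl | rfl | rfl
      · exact Or.inl (Or.inl rfl)
      · exact Or.inl (Or.inr rfl)
      · exact Or.inr (Or.inl (Or.inr rfl))
      · exact Or.inr (Or.inr (Or.inr rfl))
    · intro I hI
      rw [eq_bot_iff]
      intro x hx
      rw [TwoSidedIdeal.mem_bot]
      have h := hI hx
      rw [SetLike.mem_coe, NonUnitalSubring.mem_inf, NonUnitalSubring.mem_inf,
        mem_Tsub, mem_Tsub, mem_Tsub] at h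
      obtain ⟨⟨h1, h2⟩, h3⟩ := h
      rcases h1 with rfl | rfl
      · rfl
      · rcases h2 with h2 | h2 <;> exact absurd h2 (by decide)
  · intro R instR hc S₁ S₂ S₃ h1 h2 h3 hcov _hideal
    classical
    have hfin : Finite R := Nat.finite_of_card_ne_zero (by omega)
    haveI fint : Fintype R := Fintype.ofFinite R
    have hcard : Fintype.card R = 4 := by rw [← Nat.card_eq_fintype_card]; exact hc
    have h01 : (0 : R) ≠ 1 := by
      intro h
      have hall : ∀ x : R, x = 0 := fun x => by rw [← mul_one x, ← h, mul_zero]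
      have : Fintype.card R ≤ 1 := Fintype.card_le_one_iff.mpr fun a b => by rw [hall a, hall b]
      omega
    have key4 : ∀ x0 x1 x2 x3 : R, x0 ≠ x1 → x0 ≠ x2 → x0 ≠ x3 → x1 ≠ x2 → x1 ≠ x3 → x2 ≠ x3 →
        ∀ r : R, r = x0 ∨ r = x1 ∨ r = x2 ∨ r = x3 := by
      intro x0 x1 x2 x3 h01' h02 h03 h12 h13 h23 r
      have hs : ({x0, x1, x2, x3} : Finset R).card = 4 := by
        rw [Finset.card_insert_of_notMem (by simp [h01', h02, h03]),
          Finset.card_insert_of_notMem (by simp [h12, h13]),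
          Finset.card_insert_of_notMem (by simp [h23]), Finset.card_singleton]
      have huniv := Finset.eq_univ_of_card _ (hs.trans hcard.symm)
      have : r ∈ ({x0, x1, x2, x3} : Finset R) := huniv ▸ Finset.mem_univ r
      simpa using this
    have hexists : ∀ s : Finset R, s.card < 4 → ∃ z, z ∉ s := by
      intro s hs
      by_contra h
      push_neg at h
      have : (Finset.univ : Finset R) ⊆ s := fun z _ => h z
      have := Finset.card_le_card this
      rw [Finset.card_univ, hcard] at this
      omega
    have h12' : (1 : R) ≠ 1 + 1 := by
      intro h
      apply h01
      have : (1 : R) + 0 = 1 + 1 := by rwa [add_zero]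
      exact add_left_cancel this
    -- characteristic 2
    have hchar : (1 : R) + 1 = 0 := by
      by_contra h2z
      have h3ne : (1 : R) + 1 + 1 ≠ 0 := by
        intro h3
        obtain ⟨z, hz⟩ := hexists {0, 1, 1 + 1} (by
          calc ({0, 1, 1+1} : Finset R).card ≤ ({1, 1+1} : Finset R).card + 1 :=
                Finset.card_insert_le _ _
            _ ≤ (({1+1} : Finset R).card + 1) + 1 :=
                Nat.add_le_add_right (Finset.card_insert_le _ _) 1
            _ < 4 := by rw [Finset.card_singleton]; omega)
        simp only [Finset.mem_insert, Finset.mem_singleton, not_or] at hz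
        obtain ⟨hz0, hz1, hz2⟩ := hz
        have hall := key4 0 1 (1+1) z h01 (fun h => h2z h.symm) (Ne.symm hz0) h12'
          (Ne.symm hz1) (Ne.symm hz2)
        rcases hall (z + 1) with h | h | h | h
        · exact hz2 ((eq_neg_of_add_eq_zero_left h).trans (eq_neg_of_add_eq_zero_left h3).symm)
        · have : z + 1 = 0 + 1 := by rwa [zero_add]
          exact hz0 (add_right_cancel this)
        · exact hz1 (add_right_cancel h)
        · have : z + 1 = z + 0 := by rwa [add_zero]
          exact h01 (add_left_cancel this).symm
      have h13 : (1 : R) ≠ 1 + 1 + 1 := by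
        intro h
        have : (0 : R) + 1 = 1 + 1 + 1 := by rwa [zero_add]
        exact h2z (add_right_cancel this).symm
      have h23 : (1 : R) + 1 ≠ 1 + 1 + 1 := by
        intro h
        have : (1 : R) + 1 + 0 = 1 + 1 + 1 := by rwa [add_zero]
        exact h01 (add_left_cancel this)
      have hall := key4 0 1 (1+1) (1+1+1) h01 (fun h => h2z h.symm) (fun h => h3ne h.symm)
        h12' h13 h23
      have main : ∀ S : NonUnitalSubring R, S ≠ ⊤ → (1 : R) ∈ S → False := by
        intro S hS hone
        apply hS
        rw [NonUnitalSubring.eq_top_iff']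
        intro x
        rcases hall x with rfl | rfl | rfl | rfl
        exacts [S.zero_mem, hone, S.add_mem hone hone, S.add_mem (S.add_mem hone hone) hone]
      rcases hcov 1 with h | h | h
      exacts [main S₁ h1 h, main S₂ h2 h, main S₃ h3 h]
    -- all elements have additive order 2
    have hx2 : ∀ x : R, x + x = 0 := by
      intro x
      have : x + x = (1 + 1) * x := by rw [add_mul, one_mul]
      rw [this, hchar, zero_mul]
    have hneg : ∀ x : R, -x = x := fun x => neg_eq_of_add_eq_zero_left (hx2 x)
    -- pick a ∉ {0, 1}
    obtain ⟨a, ha⟩ := hexists {0, 1} (by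
      calc ({0, 1} : Finset R).card ≤ ({1} : Finset R).card + 1 := Finset.card_insert_le _ _
        _ < 4 := by rw [Finset.card_singleton]; omega)
    simp only [Finset.mem_insert, Finset.mem_singleton, not_or] at ha
    obtain ⟨ha0, ha1⟩ := ha
    have hb0 : (1 : R) + a ≠ 0 := by
      intro h
      exact ha1 ((eq_neg_of_add_eq_zero_right h).trans (hneg 1))
    have hb1 : (1 : R) + a ≠ 1 := by
      intro h
      have : (1 : R) + a = 1 + 0 := by rwa [add_zero]
      exact ha0 (add_left_cancel this)
    have hba : (1 : R) + a ≠ a := by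
      intro h
      have : (1 : R) + a = 0 + a := by rwa [zero_add]
      exact h01 (add_right_cancel this).symm
    have huniv : ∀ r : R, r = 0 ∨ r = 1 ∨ r = a ∨ r = 1 + a :=
      key4 0 1 a (1 + a) h01 (Ne.symm ha0) (Ne.symm hb0) (Ne.symm ha1) (Ne.symm hb1) (Ne.symm hba)
    -- a subring that contains 1 and a nonzero non-one element is everything
    have hfull : ∀ S : NonUnitalSubring R, (1 : R) ∈ S → ∀ x : R, x ∈ S → x ≠ 0 → x ≠ 1 →
        S = ⊤ := by
      intro S h1S x hxS hx0 hx1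
      have hu0 : (1 : R) + x ≠ 0 := by
        intro h
        exact hx1 ((eq_neg_of_add_eq_zero_right h).trans (hneg 1))
      have hu1 : (1 : R) + x ≠ 1 := by
        intro h
        have : (1 : R) + x = 1 + 0 := by rwa [add_zero]
        exact hx0 (add_left_cancel this)
      have hux : (1 : R) + x ≠ x := by
        intro h
        have : (1 : R) + x = 0 + x := by rwa [zero_add]
        exact h01 (add_right_cancel this).symm
      have hall := key4 0 1 x (1 + x) h01 (Ne.symm hx0) (Ne.symm hu0) (Ne.symm hx1)
        (Ne.symm hu1) (Ne.symm hux)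
      rw [NonUnitalSubring.eq_top_iff']
      intro r
      rcases hall r with rfl | rfl | rfl | rfl
      exacts [S.zero_mem, h1S, hxS, S.add_mem h1S hxS]
    have haab : a + (1 + a) = 1 := by
      rw [add_comm 1 a, ← add_assoc, hx2, zero_add]
    -- a proper subring contains at most one nonzero element
    have hone : ∀ S : NonUnitalSubring R, S ≠ ⊤ → ∀ x, x ∈ S → ∀ y, y ∈ S → x ≠ 0 → y ≠ 0 →
        x = y := by
      intro S hS x hx y hy hx0 hy0
      rcases huniv x with rfl | rfl | rfl | rfl
      · exact absurd rfl hx0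
      · rcases huniv y with rfl | rfl | rfl | rfl
        · exact absurd rfl hy0
        · rfl
        · exact absurd (hfull S hx _ hy ha0 ha1) hS
        · exact absurd (hfull S hx _ hy hb0 hb1) hS
      · rcases huniv y with rfl | rfl | rfl | rfl
        · exact absurd rfl hy0
        · exact absurd (hfull S hy _ hx ha0 ha1) hS
        · rfl
        · have h1S : (1 : R) ∈ S := haab ▸ S.add_mem hx hy
          exact absurd (hfull S h1S _ hx ha0 ha1) hS
      · rcases huniv y with rfl | rfl | rfl | rfl
        · exact absurd rfl hy0
        · exact absurd (hfull S hy _ hx hb0 hb1) hS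
        · have h1S : (1 : R) ∈ S := haab ▸ S.add_mem hy hx
          exact absurd (hfull S h1S _ hy ha0 ha1) hS
        · rfl
    -- square of a nonzero element
    have hsq : ∀ x : R, x ≠ 0 → x * x = 0 ∨ x * x = x := by
      intro x hx0
      obtain ⟨S, hStop, hxS⟩ : ∃ S : NonUnitalSubring R, S ≠ ⊤ ∧ x ∈ S := by
        rcases hcov x with h | h | h
        exacts [⟨S₁, h1, h⟩, ⟨S₂, h2, h⟩, ⟨S₃, h3, h⟩]
      by_cases h : x * x = 0
      · exact Or.inl h
      · exact Or.inr (hone S hStop (x * x) (S.mul_mem hxS hxS) x hxS h hx0)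
    have hbb : (1 + a) * (1 + a) = 1 + a * a := by
      have h' : (1 + a) * (1 + a) = 1 + (a + a) + a * a := by noncomm_ring
      rw [h', hx2, add_zero]
    have haa : a * a = a := by
      rcases hsq a ha0 with h | h
      · exfalso
        have hb2 : (1 + a) * (1 + a) = 1 := by rw [hbb, h, add_zero]
        rcases hsq (1 + a) hb0 with h' | h'
        · rw [hb2] at h'
          exact h01 h'.symm
        · rw [hb2] at h'
          exact hb1 h'.symm
      · exact h
    have h10 : (1 : R) ≠ 0 := Ne.symm h01
    -- multiplication table
    have hz2 : ∀ x : ZMod 2, x = 0 ∨ x = 1 := by decide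
    have hZ : (1 : ZMod 2) + 1 = 0 := by decide
    have hab : a * (1 + a) = 0 := by rw [mul_add, mul_one, haa]; exact hx2 a
    have hba' : (1 + a) * a = 0 := by rw [add_mul, one_mul, haa]; exact hx2 a
    have hbb' : (1 + a) * (1 + a) = 1 + a := by rw [hbb, haa]
    have h11a : (1 : R) + (1 + a) = a := by rw [← add_assoc, hchar, zero_add]
    have hb1' : ((1 : R) + a) + 1 = a := by rw [add_comm, h11a]
    have hba2 : ((1 : R) + a) + a = 1 := by rw [add_assoc, hx2, add_zero]
    have ha1c : a + 1 = 1 + a := add_comm a 1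
    obtain ⟨f, hf⟩ : ∃ f : ZMod 2 × ZMod 2 →+* R,
        ∀ p, f p = (if p.1 = 1 then a else 0) + (if p.2 = 1 then 1 + a else 0) := by
      refine ⟨{
        toFun := fun p => (if p.1 = 1 then a else 0) + (if p.2 = 1 then 1 + a else 0)
        map_one' := by simp [haab]
        map_mul' := by
          rintro ⟨p1, p2⟩ ⟨q1, q2⟩
          rcases hz2 p1 with rfl | rfl <;> rcases hz2 p2 with rfl | rfl <;>
            rcases hz2 q1 with rfl | rfl <;> rcases hz2 q2 with rfl | rfl <;>
            simp [Prod.mk_mul_mk, haa, hab, hba', hbb', haab, hx2, hchar]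
        map_zero' := by simp
        map_add' := by
          rintro ⟨p1, p2⟩ ⟨q1, q2⟩
          rcases hz2 p1 with rfl | rfl <;> rcases hz2 p2 with rfl | rfl <;>
            rcases hz2 q1 with rfl | rfl <;> rcases hz2 q2 with rfl | rfl <;>
            simp [Prod.mk_add_mk, hZ, haab, hx2, hchar, h11a, hb1', hba2, ha1c] },
        fun p => rfl⟩
    have hinj : Function.Injective f := by
      rw [injective_iff_map_eq_zero]
      rintro ⟨p1, p2⟩ h
      rcases hz2 p1 with rfl | rfl <;> rcases hz2 p2 with rfl | rfl
      · rfl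
      · rw [hf] at h; simp at h; exact absurd h hb0
      · rw [hf] at h; simp at h; exact absurd h ha0
      · rw [hf] at h; simp [haab] at h; exact absurd h.symm h01
    have hsurj : Function.Surjective f := by
      intro r
      rcases huniv r with rfl | rfl | rfl | rfl
      · exact ⟨0, map_zero f⟩
      · exact ⟨1, map_one f⟩
      · exact ⟨(1, 0), by rw [hf]; simp⟩
      · exact ⟨(0, 1), by rw [hf]; simp⟩
    have hiso : Nonempty (R ≃+* (ZMod 2 × ZMod 2)) :=
      ⟨(RingEquiv.ofBijective f ⟨hinj, hsurj⟩).symm⟩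
    -- cardinality two subrings
    have hcard2 : ∀ S : NonUnitalSubring R, S ≠ ⊤ → ∀ x, x ∈ S → x ≠ 0 → Nat.card S = 2 := by
      intro S hS x hx hx0
      rw [Nat.card_eq_two_iff]
      refine ⟨⟨0, S.zero_mem⟩, ⟨x, hx⟩, fun h => hx0 (congrArg Subtype.val h).symm, ?_⟩
      rw [Set.eq_univ_iff_forall]
      rintro ⟨z, hz⟩
      by_cases hz0 : z = 0
      · subst hz0
        exact Set.mem_insert_iff.mpr (Or.inl (Subtype.ext rfl))
      · have hzx := hone S hS z hz x hx hz0 hx0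
        exact Set.mem_insert_iff.mpr (Or.inr (Subtype.ext hzx))
    have hTchar : ∀ T : NonUnitalSubring R, Nat.card T = 2 →
        ∃ t, t ≠ 0 ∧ t ∈ T ∧ ∀ z ∈ T, z = 0 ∨ z = t := by
      intro T hT
      obtain ⟨u, v, huv, hUV⟩ := Nat.card_eq_two_iff.mp hT
      have hmem : ∀ w : T, w = u ∨ w = v := by
        intro w
        have : w ∈ ({u, v} : Set T) := by rw [hUV]; trivial
        simpa using this
      rcases hmem ⟨0, T.zero_mem⟩ with h0 | h0
      · refine ⟨(v : R), ?_, v.2, ?_⟩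
        · intro hv0
          exact huv (h0.symm.trans (Subtype.ext hv0.symm))
        · intro w hw
          rcases hmem ⟨w, hw⟩ with h | h
          · exact Or.inl (congrArg Subtype.val (h.trans h0.symm))
          · exact Or.inr (congrArg Subtype.val h)
      · refine ⟨(u : R), ?_, u.2, ?_⟩
        · intro hu0
          exact huv ((Subtype.ext hu0 : u = ⟨0, T.zero_mem⟩).trans h0)
        · intro w hw
          rcases hmem ⟨w, hw⟩ with h | h
          · exact Or.inr (congrArg Subtype.val h)
          · exact Or.inl (congrArg Subtype.val (h.trans h0.symm))
    have final : ∀ x y z : R, x ≠ 0 → y ≠ 0 → z ≠ 0 → x ≠ y → x ≠ z → y ≠ z →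
        x ∈ S₁ → y ∈ S₂ → z ∈ S₃ →
        Nat.card S₁ = 2 ∧ Nat.card S₂ = 2 ∧ Nat.card S₃ = 2 ∧ S₁ ≠ S₂ ∧ S₁ ≠ S₃ ∧ S₂ ≠ S₃ ∧
        (∀ T : NonUnitalSubring R, Nat.card T = 2 → T = S₁ ∨ T = S₂ ∨ T = S₃) := by
      intro x y z hx0 hy0 hz0 hxy hxz hyz hx hy hz
      refine ⟨hcard2 S₁ h1 x hx hx0, hcard2 S₂ h2 y hy hy0, hcard2 S₃ h3 z hz hz0, ?_, ?_, ?_, ?_⟩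
      · intro h; exact hxy (hone S₂ h2 x (h ▸ hx) y hy hx0 hy0)
      · intro h; exact hxz (hone S₃ h3 x (h ▸ hx) z hz hx0 hz0)
      · intro h; exact hyz (hone S₃ h3 y (h ▸ hy) z hz hy0 hz0)
      · intro T hT
        obtain ⟨t, ht0, htT, htchar⟩ := hTchar T hT
        have key : ∀ S : NonUnitalSubring R, S ≠ ⊤ → ∀ w, w ≠ 0 → w ∈ S → t = w → T = S := by
          intro S hS w hw0 hwS htw
          ext r
          constructor
          · intro hr
            rcases htchar r hr with rfl | rfl
            · exact S.zero_mem
            · exact htw ▸ hwS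
          · intro hr
            by_cases hr0 : r = 0
            · rw [hr0]; exact T.zero_mem
            · have hrw : r = w := hone S hS r hr w hwS hr0 hw0
              rw [hrw, ← htw]; exact htT
        rcases hcov t with h | h | h
        · exact Or.inl (key S₁ h1 x hx0 hx (hone S₁ h1 t h x hx ht0 hx0))
        · exact Or.inr (Or.inl (key S₂ h2 y hy0 hy (hone S₂ h2 t h y hy ht0 hy0)))
        · exact Or.inr (Or.inr (key S₃ h3 z hz0 hz (hone S₃ h3 t h z hz ht0 hz0)))
    refine ⟨hiso, ?_⟩
    rcases hcov 1 with hA | hA | hA <;> rcases hcov a with hB | hB | hB <;>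
      rcases hcov (1 + a) with hC | hC | hC <;>
      first
      | exact absurd (hone S₁ h1 1 hA _ hB h10 ha0) (Ne.symm ha1)
      | exact absurd (hone S₂ h2 1 hA _ hB h10 ha0) (Ne.symm ha1)
      | exact absurd (hone S₃ h3 1 hA _ hB h10 ha0) (Ne.symm ha1)
      | exact absurd (hone S₁ h1 1 hA _ hC h10 hb0) (Ne.symm hb1)
      | exact absurd (hone S₂ h2 1 hA _ hC h10 hb0) (Ne.symm hb1)
      | exact absurd (hone S₃ h3 1 hA _ hC h10 hb0) (Ne.symm hb1)
      | exact absurd (hone S₁ h1 _ hB _ hC ha0 hb0) (Ne.symm hba)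
      | exact absurd (hone S₂ h2 _ hB _ hC ha0 hb0) (Ne.symm hba)
      | exact absurd (hone S₃ h3 _ hB _ hC ha0 hb0) (Ne.symm hba)
      | exact final 1 a (1 + a) h10 ha0 hb0 (Ne.symm ha1) (Ne.symm hb1) (Ne.symm hba) hA hB hC
      | exact final 1 (1 + a) a h10 hb0 ha0 (Ne.symm hb1) (Ne.symm ha1) hba hA hC hB
      | exact final a 1 (1 + a) ha0 h10 hb0 ha1 (Ne.symm hba) (Ne.symm hb1) hB hA hC
      | exact final (1 + a) 1 a hb0 h10 ha0 hb1 hba (Ne.symm ha1) hC hA hB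
      | exact final a (1 + a) 1 ha0 hb0 h10 (Ne.symm hba) ha1 hb1 hB hC hA
      | exact final (1 + a) a 1 hb0 ha0 h10 hba hb1 ha1 hC hB hA
end

section
/- Let R be a unital ring of order 8 that is the union of three proper subrings with no nonzero ideal in their common intersection. Then u² = 0 for every element u of the Jacobson radical of R. -/
-- Two order-4 non-unital subrings of a ring of order 8 cannot intersect trivially.
private lemma aux_inter_nontrivial {R : Type*} [Ring R] [Finite R] (hcard : Nat.card R = 8)
    (A B : NonUnitalSubring R) (hA : Nat.card A = 4) (hB : Nat.card B = 4)
    (h : ∀ x : R, x ∈ A → x ∈ B → x = 0) : False := by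
  have hinj : Function.Injective (fun p : A × B => (p.1 : R) + (p.2 : R)) := by
    rintro ⟨⟨a, ha⟩, ⟨b, hb⟩⟩ ⟨⟨a', ha'⟩, ⟨b', hb'⟩⟩ hab
    simp only [Subtype.mk.injEq] at hab ⊢
    have hmem : a - a' = b' - b := by
      rw [sub_eq_sub_iff_add_eq_add, add_comm b' a']
      exact hab
    have h0 : a - a' = 0 := h _ (A.sub_mem ha ha') (hmem ▸ B.sub_mem hb' hb)
    have h1 : a = a' := by rwa [sub_eq_zero] at h0
    simp only [Prod.mk.injEq, Subtype.mk.injEq]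
    refine ⟨h1, ?_⟩
    rw [h1] at hab
    exact add_left_cancel hab
  have := Nat.card_le_card_of_injective _ hinj
  rw [Nat.card_prod, hA, hB, hcard] at this
  omega

private lemma aux_card_options {R : Type*} [Ring R] [Finite R] (hcard : Nat.card R = 8)
    (T : NonUnitalSubring R) (hT : T ≠ ⊤) :
    Nat.card T = 1 ∨ Nat.card T = 2 ∨ Nat.card T = 4 := by
  have hdvd : Nat.card T ∣ Nat.card R := T.toAddSubgroup.card_addSubgroup_dvd_card
  rw [hcard] at hdvd
  have hne : Nat.card T ≠ 8 := by
    intro h8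
    apply hT
    have htop : T.toAddSubgroup = ⊤ :=
      AddSubgroup.eq_top_of_card_eq _ (by rw [hcard]; exact h8)
    refine SetLike.ext fun x => ⟨fun _ => trivial, fun _ => ?_⟩
    have hx : x ∈ T.toAddSubgroup := htop ▸ AddSubgroup.mem_top x
    exact hx
  have hpos : 0 < Nat.card T := Nat.card_pos
  have hle : Nat.card T ≤ 8 := Nat.le_of_dvd (by norm_num) hdvd
  set n := Nat.card ↥T with hn
  interval_cases n <;> revert hne hdvd <;> decide

private lemma aux_card_four {R : Type*} [Ring R] [Finite R] (hcard : Nat.card R = 8)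
    (A B C : NonUnitalSubring R) (hA : A ≠ ⊤) (hB : B ≠ ⊤) (hC : C ≠ ⊤)
    (hcover : ∀ r : R, r ∈ A ∨ r ∈ B ∨ r ∈ C) :
    Nat.card A = 4 := by
  have hunion : ((B : Set R) ∪ C) ∪ A = Set.univ := by
    ext x
    simp only [Set.mem_union, Set.mem_univ, iff_true, SetLike.mem_coe]
    rcases hcover x with h | h | h <;> tauto
  have h8 : (((B : Set R) ∪ C) ∪ (A : Set R)).ncard = 8 := by
    rw [hunion, Set.ncard_univ, hcard]
  have e1 := Set.ncard_union_add_ncard_inter ((B : Set R) ∪ C) (A : Set R)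
  have e2 := Set.ncard_union_add_ncard_inter (B : Set R) (C : Set R)
  have hcA : (A : Set R).ncard = Nat.card A := (Nat.card_coe_set_eq _).symm
  have hcB : (B : Set R).ncard = Nat.card B := (Nat.card_coe_set_eq _).symm
  have hcC : (C : Set R).ncard = Nat.card C := (Nat.card_coe_set_eq _).symm
  have hi1 : 1 ≤ (((B : Set R) ∪ C) ∩ (A : Set R)).ncard := by
    rw [Nat.one_le_iff_ne_zero, ← Nat.pos_iff_ne_zero,
      Set.ncard_pos (Set.toFinite _)]
    exact ⟨0, ⟨Or.inl B.zero_mem, A.zero_mem⟩⟩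
  have hi2 : 1 ≤ ((B : Set R) ∩ (C : Set R)).ncard := by
    rw [Nat.one_le_iff_ne_zero, ← Nat.pos_iff_ne_zero,
      Set.ncard_pos (Set.toFinite _)]
    exact ⟨0, ⟨B.zero_mem, C.zero_mem⟩⟩
  rcases aux_card_options hcard A hA with h | h | h
  rotate_left
  rotate_left
  · exact h
  all_goals exfalso
  all_goals {
    have hB4 : Nat.card B = 4 := by
      rcases aux_card_options hcard B hB with hb | hb | hb <;>
        rcases aux_card_options hcard C hC with hc | hc | hc <;> omega
    have hC4 : Nat.card C = 4 := by
      rcases aux_card_options hcard C hC with hc | hc <;> omega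
    have hi2' : 2 ≤ ((B : Set R) ∩ (C : Set R)).ncard := by
      by_contra hlt
      push_neg at hlt
      have htriv : ∀ x : R, x ∈ B → x ∈ C → x = 0 := by
        intro x hxB hxC
        have h1 : ((B : Set R) ∩ (C : Set R)).ncard ≤ 1 := by omega
        rw [Set.ncard_le_one (Set.toFinite _)] at h1
        exact h1 x ⟨hxB, hxC⟩ 0 ⟨B.zero_mem, C.zero_mem⟩
      exact aux_inter_nontrivial hcard B C hB4 hC4 htriv
    omega
  }

private lemma aux_five {R : Type*} [Ring R] [Finite R] (hcard : Nat.card R = 8)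
    (T : NonUnitalSubring R) (hT : T ≠ ⊤)
    (a b c d e : R) (haT : a ∈ T) (hbT : b ∈ T) (hcT : c ∈ T) (hdT : d ∈ T) (heT : e ∈ T)
    (hab : a ≠ b) (hac : a ≠ c) (had : a ≠ d) (hae : a ≠ e)
    (hbc : b ≠ c) (hbd : b ≠ d) (hbe : b ≠ e)
    (hcd : c ≠ d) (hce : c ≠ e) (hde : d ≠ e) : False := by
  have hsub : ({a, b, c, d, e} : Set R) ⊆ (T : Set R) := by
    rintro x (rfl | rfl | rfl | rfl | rfl) <;> assumption
  have hn5 : ({a, b, c, d, e} : Set R).ncard = 5 := by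
    rw [Set.ncard_insert_of_notMem
        (by simp only [Set.mem_insert_iff, Set.mem_singleton_iff]; push_neg;
            exact ⟨hab, hac, had, hae⟩) (Set.toFinite _),
      Set.ncard_insert_of_notMem
        (by simp only [Set.mem_insert_iff, Set.mem_singleton_iff]; push_neg;
            exact ⟨hbc, hbd, hbe⟩) (Set.toFinite _),
      Set.ncard_insert_of_notMem
        (by simp only [Set.mem_insert_iff, Set.mem_singleton_iff]; push_neg;
            exact ⟨hcd, hce⟩) (Set.toFinite _),
      Set.ncard_pair hde]
  have hle : (5 : ℕ) ≤ (T : Set R).ncard :=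
    hn5 ▸ Set.ncard_le_ncard hsub (Set.toFinite _)
  have hTcard : Nat.card T = (T : Set R).ncard := Nat.card_coe_set_eq _
  rcases aux_card_options hcard T hT with h | h | h <;> omega

set_option maxHeartbeats 2000000 in
/-- Let `R` be a unital ring of order 8 that is the union of three proper
subrings with no nonzero two-sided ideal of `R` in their common intersection.
Then `u² = 0` for every element `u` of the Jacobson radical of `R`. -/
theorem jacobson_radical_square_zero
    (R : Type*) [Ring R] (hcard : Nat.card R = 8)
    (S₁ S₂ S₃ : NonUnitalSubring R)
    (h₁ : S₁ ≠ ⊤) (h₂ : S₂ ≠ ⊤) (h₃ : S₃ ≠ ⊤)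
    (hcover : ∀ r : R, r ∈ S₁ ∨ r ∈ S₂ ∨ r ∈ S₃)
    (hideal : ∀ I : TwoSidedIdeal R,
      (I : Set R) ⊆ ((S₁ ⊓ S₂ ⊓ S₃ : NonUnitalSubring R) : Set R) → I = ⊥) :
    ∀ u ∈ (⊥ : Ideal R).jacobson, u * u = 0 := by
  have hfin : Finite R := Nat.finite_of_card_ne_zero (by rw [hcard]; norm_num)
  have hnt : Nontrivial R := Finite.one_lt_card_iff_nontrivial.mp (by rw [hcard]; norm_num)
  have hA4 : Nat.card S₁ = 4 := aux_card_four hcard S₁ S₂ S₃ h₁ h₂ h₃ hcover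
  have hB4 : Nat.card S₂ = 4 := aux_card_four hcard S₂ S₁ S₃ h₂ h₁ h₃
    (fun r => by rcases hcover r with h | h | h <;> tauto)
  have hC4 : Nat.card S₃ = 4 := aux_card_four hcard S₃ S₁ S₂ h₃ h₁ h₂
    (fun r => by rcases hcover r with h | h | h <;> tauto)
  have hidx : ∀ T : NonUnitalSubring R, Nat.card T = 4 → ∀ x : R, x + x ∈ T := by
    intro T hT x
    have hmul := T.toAddSubgroup.index_mul_card
    rw [hcard] at hmul
    have h4 : Nat.card T.toAddSubgroup = 4 := hT
    rw [h4] at hmul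
    have hi : T.toAddSubgroup.index = 2 := by omega
    exact AddSubgroup.add_self_mem_of_index_two hi x
  -- characteristic two
  have htwo : (1 : R) + 1 = 0 := by
    by_contra h2
    -- the intersection of S₁ and S₂ has at most two elements
    have hunion : ((S₁ : Set R) ∪ S₂) ∪ S₃ = Set.univ := by
      ext x
      simp only [Set.mem_union, Set.mem_univ, iff_true, SetLike.mem_coe]
      rcases hcover x with h | h | h <;> tauto
    have h8 : (((S₁ : Set R) ∪ S₂) ∪ (S₃ : Set R)).ncard = 8 := by
      rw [hunion, Set.ncard_univ, hcard]
    have e1 := Set.ncard_union_add_ncard_inter ((S₁ : Set R) ∪ S₂) (S₃ : Set R)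
    have e2 := Set.ncard_union_add_ncard_inter (S₁ : Set R) (S₂ : Set R)
    have hcA : (S₁ : Set R).ncard = 4 := by
      rw [← Nat.card_coe_set_eq]; exact hA4
    have hcB : (S₂ : Set R).ncard = 4 := by
      rw [← Nat.card_coe_set_eq]; exact hB4
    have hcC : (S₃ : Set R).ncard = 4 := by
      rw [← Nat.card_coe_set_eq]; exact hC4
    have hi1 : 1 ≤ (((S₁ : Set R) ∪ S₂) ∩ (S₃ : Set R)).ncard := by
      rw [Nat.one_le_iff_ne_zero, ← Nat.pos_iff_ne_zero, Set.ncard_pos (Set.toFinite _)]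
      exact ⟨0, ⟨Or.inl S₁.zero_mem, S₃.zero_mem⟩⟩
    have hinter : ((S₁ : Set R) ∩ (S₂ : Set R)) = ((S₁ ⊓ S₂ : NonUnitalSubring R) : Set R) := rfl
    have hdvd : ((S₁ : Set R) ∩ (S₂ : Set R)).ncard ∣ 8 := by
      rw [hinter, ← Nat.card_coe_set_eq]
      have := (S₁ ⊓ S₂ : NonUnitalSubring R).toAddSubgroup.card_addSubgroup_dvd_card
      rwa [hcard] at this
    have hne3 : ((S₁ : Set R) ∩ (S₂ : Set R)).ncard ≠ 3 := by
      intro h3; rw [h3] at hdvd; norm_num at hdvd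
    have hle2 : ((S₁ : Set R) ∩ (S₂ : Set R)).ncard ≤ 2 := by omega
    have hss : ({0, (1:R)+1} : Set R) ⊆ (S₁ : Set R) ∩ S₂ := by
      rintro x (rfl | rfl)
      · exact ⟨S₁.zero_mem, S₂.zero_mem⟩
      · exact ⟨hidx S₁ hA4 1, hidx S₂ hB4 1⟩
    have hPeq : ({0, (1:R)+1} : Set R) = (S₁ : Set R) ∩ S₂ := by
      apply Set.eq_of_subset_of_ncard_le hss _ (Set.toFinite _)
      rw [Set.ncard_pair (Ne.symm h2)]
      exact hle2
    have htt : ∀ x : R, x + x = 0 ∨ x + x = 1 + 1 := by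
      intro x
      have hx : x + x ∈ ({0, (1:R)+1} : Set R) := by
        rw [hPeq]
        exact ⟨hidx S₁ hA4 x, hidx S₂ hB4 x⟩
      simpa using hx
    have hmulr : ∀ x : R, x * (1 + 1) = x + x := by
      intro x; rw [mul_add, mul_one]
    have hmull : ∀ x : R, (1 + 1) * x = x + x := by
      intro x; rw [add_mul, one_mul]
    let I : TwoSidedIdeal R := TwoSidedIdeal.mk' {0, (1:R)+1}
      (Set.mem_insert _ _)
      (by rintro x y (rfl | hx) (rfl | hy)
          · left; rw [add_zero]
          · rw [Set.mem_singleton_iff] at hy; rw [hy, zero_add]; right; rfl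
          · rw [Set.mem_singleton_iff] at hx; rw [hx, add_zero]; right; rfl
          · rw [Set.mem_singleton_iff] at hx hy; rw [hx, hy]
            simpa using htt (1 + 1))
      (by rintro x (rfl | hx)
          · left; rw [neg_zero]
          · rw [Set.mem_singleton_iff] at hx; rw [hx]
            have := htt (-1)
            rw [neg_add]
            simpa using this)
      (by rintro x y (rfl | hy)
          · left; rw [mul_zero]
          · rw [Set.mem_singleton_iff] at hy; rw [hy, hmulr]
            simpa using htt x)
      (by rintro x y (rfl | hx)
          · left; rw [zero_mul]
          · rw [Set.mem_singleton_iff] at hx; rw [hx, hmull]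
            simpa using htt y)
    have hIsub : (I : Set R) ⊆ ((S₁ ⊓ S₂ ⊓ S₃ : NonUnitalSubring R) : Set R) := by
      rw [TwoSidedIdeal.coe_mk']
      rintro x (rfl | hx)
      · exact (S₁ ⊓ S₂ ⊓ S₃).zero_mem
      · rw [Set.mem_singleton_iff] at hx; rw [hx]
        exact ⟨⟨hidx S₁ hA4 1, hidx S₂ hB4 1⟩, hidx S₃ hC4 1⟩
    have hbot := hideal I hIsub
    have hcI : (1:R) + 1 ∈ I := by
      show (1:R) + 1 ∈ TwoSidedIdeal.mk' _ _ _ _ _ _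
      rw [TwoSidedIdeal.mem_mk']
      right; rfl
    rw [hbot] at hcI
    exact h2 ((TwoSidedIdeal.mem_bot R).mp hcI)
  have hchar : ∀ x : R, x + x = 0 := by
    intro x
    have hx : x + x = x * (1 + 1) := by rw [mul_add, mul_one]
    rw [hx, htwo, mul_zero]
  -- main argument
  intro u hu
  by_contra hu2
  have hJ : ∀ y : R, IsUnit (y * u + 1) := by
    have hmem : ∀ y : R, ∃ z : R, z * (y * u + 1) = 1 := by
      intro y
      obtain ⟨z, hz⟩ := Ideal.mem_jacobson_iff.mp hu y
      refine ⟨z, ?_⟩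
      have h0 : z * y * u + z - 1 = 0 := (Submodule.mem_bot R).mp hz
      have he : z * (y * u + 1) = z * y * u + z := by noncomm_ring
      rw [he, ← sub_eq_zero]
      exact h0
    intro y
    obtain ⟨z, hz⟩ := hmem y
    obtain ⟨w, hw⟩ := hmem (-(z * y))
    have h1 : z * y * u + z = 1 := by
      have he : z * (y * u + 1) = z * y * u + z := by noncomm_ring
      rw [← he, hz]
    have hz' : -(z * y) * u + 1 = z := by
      rw [← h1]; noncomm_ring
    rw [hz'] at hw
    have hwa : w = y * u + 1 := by
      calc w = w * (z * (y * u + 1)) := by rw [hz, mul_one]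
      _ = (w * z) * (y * u + 1) := by rw [mul_assoc]
      _ = y * u + 1 := by rw [hw, one_mul]
    exact ⟨⟨y * u + 1, z, hwa ▸ hw, hz⟩, rfl⟩
  have hu0 : u ≠ 0 := fun h => hu2 (by rw [h, mul_zero])
  have neq : ∀ x y z : R, x + y = z → z ≠ 0 → x ≠ y := by
    intro x y z hz h0 hxy
    apply h0
    rw [← hz, hxy]
    exact hchar y
  have hus : IsUnit (1 + u) := by have := hJ 1; rwa [one_mul, add_comm] at this
  have hut : IsUnit (1 + u * u) := by have := hJ u; rwa [add_comm] at this
  have huv : IsUnit (1 + u + u * u + u * u * u) := by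
    have h := hJ (1 + u + u * u)
    have he : (1 + u + u * u) * u + 1 = 1 + u + u * u + u * u * u := by noncomm_ring
    rwa [he] at h
  have huw : IsUnit (1 + u * u * u) := by
    have h := hJ (u * u)
    have he : (u * u) * u + 1 = 1 + u * u * u := by noncomm_ring
    rwa [he] at h
  have hns : (1 + u) ≠ 0 := hus.ne_zero
  have hnt' : (1 + u * u) ≠ 0 := hut.ne_zero
  have hnv : (1 + u + u * u + u * u * u) ≠ 0 := huv.ne_zero
  have hnw' : (1 + u * u * u) ≠ 0 := huw.ne_zero
  have hnw : (u + u * u) ≠ 0 := by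
    intro h
    have he : u * (1 + u) = u + u * u := by noncomm_ring
    exact hu0 (hus.mul_left_eq_zero.mp (by rw [he, h]))
  have hnsv : (u * u + u * u * u) ≠ 0 := by
    intro h
    have he : (u * u) * (1 + u) = u * u + u * u * u := by noncomm_ring
    exact hu2 (hus.mul_left_eq_zero.mp (by rw [he, h]))
  have hntv : (u + u * u * u) ≠ 0 := by
    intro h
    have he : u * (1 + u * u) = u + u * u * u := by noncomm_ring
    exact hu0 (hut.mul_left_eq_zero.mp (by rw [he, h]))
  -- sum identities
  have eqst : (1 + u) + (1 + u * u) = u + u * u := by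
    have h : (1 + u) + (1 + u * u) = (1 + 1) + (u + u * u) := by abel
    rw [h, htwo, zero_add]
  have eqsw : (1 + u) + (u + u * u) = 1 + u * u := by
    have h : (1 + u) + (u + u * u) = (u + u) + (1 + u * u) := by abel
    rw [h, hchar u, zero_add]
  have eqsv : (1 + u) + (1 + u + u * u + u * u * u) = u * u + u * u * u := by
    have h : (1 + u) + (1 + u + u * u + u * u * u)
        = (1 + 1) + ((u + u) + (u * u + u * u * u)) := by abel
    rw [h, htwo, hchar u, zero_add, zero_add]
  have eqtw : (1 + u * u) + (u + u * u) = 1 + u := by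
    have h : (1 + u * u) + (u + u * u) = (u * u + u * u) + (1 + u) := by abel
    rw [h, hchar (u * u), zero_add]
  have eqtv : (1 + u * u) + (1 + u + u * u + u * u * u) = u + u * u * u := by
    have h : (1 + u * u) + (1 + u + u * u + u * u * u)
        = (1 + 1) + ((u * u + u * u) + (u + u * u * u)) := by abel
    rw [h, htwo, hchar (u * u), zero_add, zero_add]
  have eqwv : (u + u * u) + (1 + u + u * u + u * u * u) = 1 + u * u * u := by
    have h : (u + u * u) + (1 + u + u * u + u * u * u)
        = (u + u) + ((u * u + u * u) + (1 + u * u * u)) := by abel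
    rw [h, hchar u, hchar (u * u), zero_add, zero_add]
  -- distinctness
  have d0s : (0 : R) ≠ 1 + u := Ne.symm hns
  have d0t : (0 : R) ≠ 1 + u * u := Ne.symm hnt'
  have d0w : (0 : R) ≠ u + u * u := Ne.symm hnw
  have d0v : (0 : R) ≠ 1 + u + u * u + u * u * u := Ne.symm hnv
  have dst : (1 + u) ≠ 1 + u * u := neq _ _ _ eqst hnw
  have dsw : (1 + u) ≠ u + u * u := neq _ _ _ eqsw hnt'
  have dsv : (1 + u) ≠ 1 + u + u * u + u * u * u := neq _ _ _ eqsv hnsv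
  have dtw : (1 + u * u) ≠ u + u * u := neq _ _ _ eqtw hns
  have dtv : (1 + u * u) ≠ 1 + u + u * u + u * u * u := neq _ _ _ eqtv hntv
  have dwv : (u + u * u) ≠ 1 + u + u * u + u * u * u := neq _ _ _ eqwv hnw'
  -- the subring containing 1 + u must be everything
  have main : ∀ T : NonUnitalSubring R, T ≠ ⊤ → (1 + u) ∈ T → False := by
    intro T hT hsT
    have htT : (1 : R) + u * u ∈ T := by
      have hm := T.mul_mem hsT hsT
      have he : (1 + u) * (1 + u) = (1 + u * u) + (u + u) := by noncomm_ring
      rw [he, hchar u, add_zero] at hm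
      exact hm
    have hwT : u + u * u ∈ T := by
      have hm := T.add_mem hsT htT
      rwa [eqst] at hm
    have hvT : (1 : R) + u + u * u + u * u * u ∈ T := by
      have hm := T.mul_mem hsT htT
      have he : (1 + u) * (1 + u * u) = 1 + u + u * u + u * u * u := by noncomm_ring
      rwa [he] at hm
    exact aux_five hcard T hT 0 (1 + u) (1 + u * u) (u + u * u)
      (1 + u + u * u + u * u * u) T.zero_mem hsT htT hwT hvT
      d0s d0t d0w d0v dst dsw dsv dtw dtv dwv
  rcases hcover (1 + u) with h | h | h
  · exact main S₁ h₁ h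
  · exact main S₂ h₂ h
  · exact main S₃ h₃ h
end

section
/- The ring R of upper triangular 2×2 matrices over GF(2) is the union of three proper subrings: S₁ = diagonal matrices, S₂ = matrices with equal diagonal entries, S₃ = matrices [[a,c],[0,b]] with a+b+c = 0; and no nonzero two-sided ideal of R is contained in S₁ ∩ S₂ ∩ S₃. -/
open Matrix

private lemma zmod2_aux : ∀ a00 a01 a11 b00 b01 b11 : ZMod 2,
    a00 + a11 + a01 = 0 → b00 + b11 + b01 = 0 →
    a00 * b00 + a11 * b11 + (a00 * b01 + a01 * b11) = 0 := by decide

private lemma zmod2_union : ∀ a b c : ZMod 2, c = 0 ∨ a = b ∨ a + b + c = 0 := by decide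

def Rtri : Subring (Matrix (Fin 2) (Fin 2) (ZMod 2)) where
  carrier := {M | M 1 0 = 0}
  mul_mem' := by
    intro a b ha hb
    simp only [Set.mem_setOf_eq] at *
    simp [Matrix.mul_apply, Fin.sum_univ_two, ha, hb]
  one_mem' := by simp [Matrix.one_apply]
  add_mem' := by
    intro a b ha hb
    simp only [Set.mem_setOf_eq] at *
    simp [ha, hb]
  zero_mem' := by simp
  neg_mem' := by
    intro a ha
    simp only [Set.mem_setOf_eq] at *
    simp [ha]

def S1 : NonUnitalSubring Rtri where
  carrier := {m : Rtri | (m : Matrix (Fin 2) (Fin 2) (ZMod 2)) 0 1 = 0}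
  mul_mem' := by
    rintro ⟨a, ha⟩ ⟨b, hb⟩ h1 h2
    simp only [Set.mem_setOf_eq] at *
    simp [Matrix.mul_apply, Fin.sum_univ_two, h1, h2]
  add_mem' := by
    rintro ⟨a, ha⟩ ⟨b, hb⟩ h1 h2
    simp only [Set.mem_setOf_eq] at *
    simp [h1, h2]
  zero_mem' := by simp
  neg_mem' := by
    rintro ⟨a, ha⟩ h1
    simp only [Set.mem_setOf_eq] at *
    simp [h1]

def S2 : NonUnitalSubring Rtri where
  carrier := {m : Rtri | (m : Matrix (Fin 2) (Fin 2) (ZMod 2)) 0 0 =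
    (m : Matrix (Fin 2) (Fin 2) (ZMod 2)) 1 1}
  mul_mem' := by
    rintro ⟨a, ha⟩ ⟨b, hb⟩ h1 h2
    have ha' : a 1 0 = 0 := ha
    have hb' : b 1 0 = 0 := hb
    simp only [Set.mem_setOf_eq] at *
    simp [Matrix.mul_apply, Fin.sum_univ_two, h1, h2, ha', hb']
  add_mem' := by
    rintro ⟨a, ha⟩ ⟨b, hb⟩ h1 h2
    simp only [Set.mem_setOf_eq] at *
    simp [h1, h2]
  zero_mem' := by simp
  neg_mem' := by
    rintro ⟨a, ha⟩ h1
    simp only [Set.mem_setOf_eq] at *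
    simp [h1]

def S3 : NonUnitalSubring Rtri where
  carrier := {m : Rtri | (m : Matrix (Fin 2) (Fin 2) (ZMod 2)) 0 0 +
    (m : Matrix (Fin 2) (Fin 2) (ZMod 2)) 1 1 +
    (m : Matrix (Fin 2) (Fin 2) (ZMod 2)) 0 1 = 0}
  mul_mem' := by
    rintro ⟨a, ha⟩ ⟨b, hb⟩ h1 h2
    simp only [Set.mem_setOf_eq] at *
    have ha' : a 1 0 = 0 := ha
    have hb' : b 1 0 = 0 := hb
    simp only [Matrix.mul_apply, Fin.sum_univ_two, ha', hb', mul_zero, zero_mul,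
      add_zero, zero_add, MulMemClass.mk_mul_mk]
    exact zmod2_aux _ _ _ _ _ _ h1 h2
  add_mem' := by
    rintro ⟨a, ha⟩ ⟨b, hb⟩ h1 h2
    simp only [Set.mem_setOf_eq] at *
    simp only [AddMemClass.mk_add_mk, Matrix.add_apply]
    linear_combination h1 + h2
  zero_mem' := by
    show ((0 : Rtri) : Matrix (Fin 2) (Fin 2) (ZMod 2)) 0 0 +
      ((0 : Rtri) : Matrix (Fin 2) (Fin 2) (ZMod 2)) 1 1 +
      ((0 : Rtri) : Matrix (Fin 2) (Fin 2) (ZMod 2)) 0 1 = 0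
    norm_num
  neg_mem' := by
    rintro ⟨a, ha⟩ h1
    simp only [Set.mem_setOf_eq] at *
    show (-a) 0 0 + (-a) 1 1 + (-a) 0 1 = 0
    simp only [Matrix.neg_apply]
    linear_combination -h1

def E01 : Rtri := ⟨!![0,1;0,0], show !![(0:ZMod 2),1;0,0] 1 0 = 0 by simp⟩
def E00 : Rtri := ⟨!![1,0;0,0], show !![(1:ZMod 2),0;0,0] 1 0 = 0 by simp⟩

/-- The ring `R` of upper triangular 2×2 matrices over `GF(2)` is the union of
three proper subrings: `S₁` the diagonal matrices, `S₂` the matrices with equal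
diagonal entries, and `S₃` the matrices `[[a,c],[0,b]]` with `a+b+c = 0`; and
no nonzero two-sided ideal of `R` is contained in `S₁ ∩ S₂ ∩ S₃`. -/
theorem upper_triangular_good_tuple :
    ∃ R : Subring (Matrix (Fin 2) (Fin 2) (ZMod 2)),
      (R : Set (Matrix (Fin 2) (Fin 2) (ZMod 2))) = {M | M 1 0 = 0} ∧
      ∃ S₁ S₂ S₃ : NonUnitalSubring R,
        (S₁ : Set R) = {m : R | (m : Matrix (Fin 2) (Fin 2) (ZMod 2)) 0 1 = 0} ∧
        (S₂ : Set R) = {m : R | (m : Matrix (Fin 2) (Fin 2) (ZMod 2)) 0 0 =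
          (m : Matrix (Fin 2) (Fin 2) (ZMod 2)) 1 1} ∧
        (S₃ : Set R) = {m : R | (m : Matrix (Fin 2) (Fin 2) (ZMod 2)) 0 0 +
          (m : Matrix (Fin 2) (Fin 2) (ZMod 2)) 1 1 +
          (m : Matrix (Fin 2) (Fin 2) (ZMod 2)) 0 1 = 0} ∧
        S₁ ≠ ⊤ ∧ S₂ ≠ ⊤ ∧ S₃ ≠ ⊤ ∧
        (∀ m : R, m ∈ S₁ ∨ m ∈ S₂ ∨ m ∈ S₃) ∧
        (∀ I : TwoSidedIdeal R,
          (I : Set R) ⊆ ((S₁ ⊓ S₂ ⊓ S₃ : NonUnitalSubring R) : Set R) → I = ⊥) := by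
  refine ⟨Rtri, rfl, S1, S2, S3, rfl, rfl, rfl, ?_, ?_, ?_, ?_, ?_⟩
  · intro h
    have h' : ((E01 : Rtri) : Matrix (Fin 2) (Fin 2) (ZMod 2)) 0 1 = 0 := by
      have : E01 ∈ S1 := by rw [h]; trivial
      exact this
    simp only [E01] at h'
    norm_num at h'
  · intro h
    have h' : ((E00 : Rtri) : Matrix (Fin 2) (Fin 2) (ZMod 2)) 0 0 =
        ((E00 : Rtri) : Matrix (Fin 2) (Fin 2) (ZMod 2)) 1 1 := by
      have : E00 ∈ S2 := by rw [h]; trivial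
      exact this
    simp only [E00] at h'
    norm_num at h'
  · intro h
    have h' : ((E00 : Rtri) : Matrix (Fin 2) (Fin 2) (ZMod 2)) 0 0 +
        ((E00 : Rtri) : Matrix (Fin 2) (Fin 2) (ZMod 2)) 1 1 +
        ((E00 : Rtri) : Matrix (Fin 2) (Fin 2) (ZMod 2)) 0 1 = 0 := by
      have : E00 ∈ S3 := by rw [h]; trivial
      exact this
    simp only [E00] at h'
    norm_num at h'
  · rintro ⟨m, hm⟩
    exact zmod2_union (m 0 0) (m 1 1) (m 0 1)
  · intro I hI
    rw [eq_bot_iff]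
    rintro ⟨m, hm⟩ hx
    rw [TwoSidedIdeal.mem_bot]
    have hm' : m 1 0 = 0 := hm
    obtain ⟨⟨h01, hdiag⟩, -⟩ := hI hx
    have hy : (⟨m, hm⟩ : Rtri) * E01 ∈ I := I.mul_mem_right _ _ hx
    obtain ⟨⟨h01', -⟩, -⟩ := hI hy
    have hd : m 0 0 = m 1 1 := hdiag
    have h01a : m 0 1 = 0 := h01
    have h00 : m 0 0 = 0 := by
      have key : (((⟨m, hm⟩ : Rtri) * E01 : Rtri) : Matrix (Fin 2) (Fin 2) (ZMod 2)) 0 1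
          = m 0 0 := by
        simp [E01, Matrix.mul_apply, Fin.sum_univ_two]
      have h01'' : (((⟨m, hm⟩ : Rtri) * E01 : Rtri) : Matrix (Fin 2) (Fin 2) (ZMod 2)) 0 1 = 0 :=
        h01'
      rw [key] at h01''
      exact h01''
    have h11 : m 1 1 = 0 := hd.symm.trans h00
    ext i j
    fin_cases i <;> fin_cases j <;> simp [hm', h00, h01a, h11]
end

section
/- Let R be a unital ring with R = S₁ ∪ S₂ ∪ S₃, the Sᵢ proper subrings, |R| = 8, |J(R)| = 4, and no nonzero ideal of R in S₁ ∩ S₂ ∩ S₃. Then R is isomorphic to the ring generated over ℤ/2 by 1, x, y with relations x² = y² = xy = yx = 0, i.e., the ℤ/2-unitalization of a zero ring of order 4. -/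
private lemma exNot {R : Type*} [Ring R] (X : NonUnitalSubring R) (hX : X ≠ ⊤) :
    ∃ z, z ∉ X := by
  by_contra hc
  push_neg at hc
  exact hX (by ext x; simp [hc x])

private lemma notwoCover {R : Type*} [Ring R] (X Y : NonUnitalSubring R)
    (hX : X ≠ ⊤) (hY : Y ≠ ⊤) : ∃ z, z ∉ X ∧ z ∉ Y := by
  obtain ⟨u, hu⟩ := exNot X hX
  obtain ⟨v, hv⟩ := exNot Y hY
  by_cases huY : u ∈ Y
  · by_cases hvX : v ∈ X
    · refine ⟨u + v, fun h => hu ?_, fun h => hv ?_⟩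
      · have := X.sub_mem h hvX; simpa using this
      · have := Y.sub_mem h huY; simpa using this
    · exact ⟨v, hvX, hv⟩
  · exact ⟨u, hu, huY⟩

private lemma two_mem {R : Type*} [Ring R] (A B C : NonUnitalSubring R)
    (hB : B ≠ ⊤) (hC : C ≠ ⊤)
    (hcov : ∀ r : R, r ∈ A ∨ r ∈ B ∨ r ∈ C) (g : R) : g + g ∈ A := by
  obtain ⟨z, hzB, hzC⟩ := notwoCover B C hB hC
  have hzA : z ∈ A := by rcases hcov z with h | h | h <;> tauto
  by_cases hgA : g ∈ A
  · exact A.add_mem hgA hgA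
  have core : ∀ (Y Z : NonUnitalSubring R), (∀ r : R, r ∈ A ∨ r ∈ Y ∨ r ∈ Z) →
      z ∉ Y → z ∉ Z → g ∈ Y → g + g ∈ A := by
    intro Y Z hcov' hzY hzZ hgY
    by_contra hgg
    have h1 : z + g ∈ Z := by
      rcases hcov' (z + g) with h | h | h
      · exact absurd (by simpa using A.sub_mem h hzA) hgA
      · exact absurd (by simpa using Y.sub_mem h hgY) hzY
      · exact h
    have h2 : z + (g + g) ∈ Z := by
      rcases hcov' (z + (g + g)) with h | h | h
      · exact absurd (by simpa using A.sub_mem h hzA) hgg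
      · exact absurd (by simpa using Y.sub_mem h (Y.add_mem hgY hgY)) hzY
      · exact h
    have hgZ : g ∈ Z := by
      have := Z.sub_mem h2 h1
      have heq : z + (g + g) - (z + g) = g := by abel
      rwa [heq] at this
    exact hzZ (by simpa using Z.sub_mem h1 hgZ)
  rcases hcov g with h | h | h
  · exact absurd h hgA
  · exact core B C hcov hzB hzC h
  · exact core C B (fun r => by rcases hcov r with h|h|h <;> tauto) hzC hzB h

private lemma inter3 {R : Type*} [Ring R] (X Y Z : NonUnitalSubring R)
    (hcov : ∀ r : R, r ∈ X ∨ r ∈ Y ∨ r ∈ Z) (hX : X ≠ ⊤) (hY : Y ≠ ⊤) :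
    ∀ z, z ∈ X → z ∈ Y → z ∈ Z := by
  intro z hzX hzY
  obtain ⟨w, hwX, hwY⟩ := notwoCover X Y hX hY
  have hwZ : w ∈ Z := by rcases hcov w with h | h | h <;> tauto
  have h1 : z + w ∈ Z := by
    rcases hcov (z + w) with h | h | h
    · exact absurd (by simpa using X.sub_mem h hzX) hwX
    · exact absurd (by simpa using Y.sub_mem h hzY) hwY
    · exact h
  have := Z.sub_mem h1 hwZ
  simpa using this

private lemma span8 {R : Type*} [Ring R] (hcard : Nat.card R = 8)
    (h2 : ∀ r : R, r + r = 0) (a p q : R)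
    (hp : p ≠ 0) (hq : q ≠ 0) (hpq : p + q ≠ 0) (ha : a ≠ 0)
    (hap : a + p ≠ 0) (haq : a + q ≠ 0) (hapq : a + p + q ≠ 0) :
    ∀ r : R, r = 0 ∨ r = p ∨ r = q ∨ r = p + q ∨ r = a ∨ r = a + p ∨ r = a + q ∨ r = a + p + q := by
  haveI : Finite R := Nat.finite_of_card_ne_zero (by omega)
  classical
  have all2 : ∀ n : ZMod 2, n = 0 ∨ n = 1 := by decide
  set c : ZMod 2 → R := fun n => if n = 0 then 0 else 1 with hcdef
  have hc0 : c 0 = 0 := by simp [hcdef]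
  have hc1 : c 1 = 1 := by simp [hcdef]
  have hcadd : ∀ m n : ZMod 2, c (m + n) = c m + c n := by
    intro m n
    rcases all2 m with rfl | rfl <;> rcases all2 n with rfl | rfl <;>
      simp [hc0, hc1, show (1 + 1 : ZMod 2) = 0 from by decide, h2 1]
  set f : ZMod 2 × ZMod 2 × ZMod 2 → R := fun t => c t.1 * a + c t.2.1 * p + c t.2.2 * q with hfdef
  have hfadd : ∀ u v, f (u + v) = f u + f v := by
    intro u v
    show c (u.1 + v.1) * a + c (u.2.1 + v.2.1) * p + c (u.2.2 + v.2.2) * q = _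
    rw [hcadd, hcadd, hcadd, add_mul, add_mul, add_mul]
    simp only [hfdef]
    abel
  have hker : ∀ u, f u = 0 → u = 0 := by
    rintro ⟨m, n, k⟩ hu
    rcases all2 m with rfl | rfl <;> rcases all2 n with rfl | rfl <;> rcases all2 k with rfl | rfl <;>
      simp only [hfdef, hc0, hc1, zero_mul, one_mul, zero_add, add_zero] at hu <;>
      first
        | rfl
        | exact absurd hu hp
        | exact absurd hu hq
        | exact absurd hu hpq
        | exact absurd hu ha
        | exact absurd hu hap
        | exact absurd hu haq
        | exact absurd hu hapq
  have hinj : Function.Injective f := by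
    intro u v huv
    have h0 : f (u + v) = 0 := by rw [hfadd, huv]; exact h2 (f v)
    have hzero := hker _ h0
    have h4 : ∀ w z : ZMod 2 × ZMod 2 × ZMod 2, w + z = 0 → w = z := by decide
    exact h4 u v hzero
  have hbij : Function.Bijective f :=
    (Nat.bijective_iff_injective_and_card f).mpr ⟨hinj, by
      simp [Nat.card_prod, Nat.card_zmod, hcard]⟩
  intro r
  obtain ⟨⟨m, n, k⟩, rfl⟩ := hbij.2 r
  rcases all2 m with rfl | rfl <;> rcases all2 n with rfl | rfl <;> rcases all2 k with rfl | rfl <;>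
    simp only [hfdef, hc0, hc1, zero_mul, one_mul, zero_add, add_zero] <;> tauto

private lemma set4 {R : Type*} [Ring R] [Finite R] {s : Set R} (hs : s.ncard = 4)
    {p q : R} (h0 : (0:R) ∈ s) (hp : p ∈ s) (hq : q ∈ s) (hpq : p + q ∈ s)
    (hp0 : p ≠ 0) (hq0 : q ≠ 0) (hne : p ≠ q) (hpq0 : p + q ≠ 0)
    (hpqp : p + q ≠ p) (hpqq : p + q ≠ q) :
    ∀ z ∈ s, z = 0 ∨ z = p ∨ z = q ∨ z = p + q := by
  have hsub : ({0, p, q, p + q} : Set R) ⊆ s := by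
    intro z hz
    rcases hz with rfl | rfl | rfl | rfl
    exacts [h0, hp, hq, hpq]
  have hn4 : ({0, p, q, p + q} : Set R).ncard = 4 := by
    rw [Set.ncard_insert_of_notMem (by simp [Ne.symm hp0, Ne.symm hq0, Ne.symm hpq0]),
      Set.ncard_insert_of_notMem (by simp [hne, Ne.symm hpqp]),
      Set.ncard_insert_of_notMem (by simp [Ne.symm hpqq]),
      Set.ncard_singleton]
  have heq : ({0, p, q, p + q} : Set R) = s :=
    Set.eq_of_subset_of_ncard_le hsub (by rw [hs, hn4])
  intro z hz
  rw [← heq] at hz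
  simpa using hz

private lemma isUnit_one_add {R : Type*} [Ring R] [Finite R] {j : R}
    (hj : j ∈ (⊥ : Ideal R).jacobson) : IsUnit (1 + j) := by
  have hspan : Ideal.span {1 + j} = ⊤ := by
    by_contra h
    obtain ⟨M, hM, hle⟩ := Ideal.exists_le_maximal _ h
    have hjac : (⊥ : Ideal R).jacobson ≤ M := sInf_le ⟨bot_le, hM⟩
    have hjM : j ∈ M := hjac hj
    have h1jM : (1 + j) ∈ M := hle (Ideal.subset_span rfl)
    have h1 : (1 : R) ∈ M := by simpa using M.sub_mem h1jM hjM
    exact hM.ne_top (Ideal.eq_top_iff_one M |>.mpr h1)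
  have h1 : (1 : R) ∈ Ideal.span ({1 + j} : Set R) := by
    rw [hspan]; exact Submodule.mem_top
  obtain ⟨u, hu⟩ := Submodule.mem_span_singleton.mp h1
  rw [smul_eq_mul] at hu
  have hinj : Function.Injective (fun x : R => (1 + j) * x) := by
    intro x y hxy
    have := congrArg (fun z => u * z) hxy
    simpa [← mul_assoc, hu] using this
  obtain ⟨v, hv'⟩ := Finite.injective_iff_surjective.mp hinj 1
  have hv : (1 + j) * v = 1 := hv'
  have hvu : v = u := by
    calc v = 1 * v := (one_mul v).symm
    _ = u * (1 + j) * v := by rw [hu]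
    _ = u * ((1 + j) * v) := by rw [mul_assoc]
    _ = u := by rw [hv, mul_one]
  exact ⟨⟨1 + j, v, hv, by rw [hvu, hu]⟩, rfl⟩

private lemma idem_zero {R : Type*} [Ring R] [Finite R] {e : R}
    (he : e ∈ (⊥ : Ideal R).jacobson) (h : e * e = e) : e = 0 := by
  have hu : IsUnit (1 + -e) := isUnit_one_add (Submodule.neg_mem _ he)
  have : (1 + -e) * e = (1 + -e) * 0 := by
    rw [mul_zero, add_mul, one_mul, neg_mul, h, add_neg_cancel]
  exact hu.mul_left_cancel this

private lemma one_notMem_jac {R : Type*} [Ring R] (hcard : Nat.card R = 8)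
    (hJ : Nat.card ((⊥ : Ideal R).jacobson) = 4) : (1 : R) ∉ (⊥ : Ideal R).jacobson := by
  intro h1
  have hall : ∀ r : R, r ∈ (⊥ : Ideal R).jacobson := by
    intro r
    have := Submodule.smul_mem ((⊥ : Ideal R).jacobson) r h1
    simpa using this
  have : Nat.card ((⊥ : Ideal R).jacobson) = Nat.card R :=
    Nat.card_congr (Equiv.subtypeUnivEquiv hall)
  omega

private lemma jac_union {R : Type*} [Ring R] (hcard : Nat.card R = 8)
    (hJ : Nat.card ((⊥ : Ideal R).jacobson) = 4) (h2 : ∀ r : R, r + r = 0) :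
    ∀ r : R, r ∈ (⊥ : Ideal R).jacobson ∨ 1 + r ∈ (⊥ : Ideal R).jacobson := by
  haveI : Finite R := Nat.finite_of_card_ne_zero (by omega)
  have h1J := one_notMem_jac hcard hJ
  set J : Set R := ((⊥ : Ideal R).jacobson : Set R) with hJdef
  have hJ4 : J.ncard = 4 := by
    rw [← Nat.card_coe_set_eq]; exact hJ
  set t : Set R := (fun x => 1 + x) '' J with htdef
  have ht4 : t.ncard = 4 := by
    rw [htdef, Set.ncard_image_of_injective _ (fun x y h => by simpa using h), hJ4]
  have hdisj : Disjoint J t := by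
    rw [Set.disjoint_left]
    rintro x hxJ ⟨w, hwJ, rfl⟩
    have : (1 : R) ∈ (⊥ : Ideal R).jacobson := by
      have := Submodule.add_mem _ (show (1 + w) ∈ (⊥ : Ideal R).jacobson from hxJ)
        (show w ∈ (⊥ : Ideal R).jacobson from hwJ)
      rwa [add_assoc, h2 w, add_zero] at this
    exact h1J this
  have huniv : J ∪ t = Set.univ := by
    apply Set.eq_of_subset_of_ncard_le (Set.subset_univ _)
    rw [Set.ncard_univ, hcard, Set.ncard_union_eq hdisj, hJ4, ht4]
  intro r
  have : r ∈ J ∪ t := by rw [huniv]; trivial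
  rcases this with h | ⟨w, hwJ, hw⟩
  · exact Or.inl h
  · right
    have : 1 + r = w := by rw [← hw, ← add_assoc, h2 1, zero_add]
    rwa [this]

set_option maxHeartbeats 1000000 in
private lemma build_equiv {R : Type*} [Ring R] (hcard : Nat.card R = 8)
    (h2 : ∀ r : R, r + r = 0) (x y : R)
    (hx : x * x = 0) (hy : y * y = 0) (hxy : x * y = 0) (hyx : y * x = 0)
    (hclass : ∀ r : R, r = 0 ∨ r = x ∨ r = y ∨ r = x + y ∨ r = 1 ∨ r = 1 + x ∨ r = 1 + y ∨ r = 1 + x + y) :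
    Nonempty (R ≃+* TrivSqZeroExt (ZMod 2) (ZMod 2 × ZMod 2)) := by
  haveI : Finite R := Nat.finite_of_card_ne_zero (by omega)
  classical
  have all2 : ∀ n : ZMod 2, n = 0 ∨ n = 1 := by decide
  have hh : ∀ r : R, (2 : ℕ) • r = 0 := fun r => by
    rw [two_nsmul]; exact h2 r
  have h2' : ∀ r : R, 2 * r = 0 := fun r => by
    rw [two_mul]; exact h2 r
  set c : ZMod 2 → R := fun n => if n = 0 then 0 else 1 with hcdef
  have hc0 : c 0 = 0 := by simp [hcdef]
  have hc1 : c 1 = 1 := by simp [hcdef]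
  have hcadd : ∀ m n : ZMod 2, c (m + n) = c m + c n := by
    intro m n
    rcases all2 m with rfl | rfl <;> rcases all2 n with rfl | rfl <;>
      simp [hc0, hc1, show (1 + 1 : ZMod 2) = 0 from by decide, h2 1]
  set f : TrivSqZeroExt (ZMod 2) (ZMod 2 × ZMod 2) → R :=
    fun t => c t.fst + c t.snd.1 * x + c t.snd.2 * y with hfdef
  have hone : f 1 = 1 := by
    simp [hfdef, TrivSqZeroExt.fst_one, TrivSqZeroExt.snd_one, hc0, hc1]
  have hmul : ∀ t s, f (t * s) = f t * f s := by
    intro t s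
    have hfst : (t * s).fst = t.fst * s.fst := TrivSqZeroExt.fst_mul t s
    have hsnd1 : (t * s).snd.1 = t.fst * s.snd.1 + t.snd.1 * s.fst := by
      rw [TrivSqZeroExt.snd_mul]
      simp [smul_eq_mul, MulOpposite.smul_eq_mul_unop, mul_comm]
    have hsnd2 : (t * s).snd.2 = t.fst * s.snd.2 + t.snd.2 * s.fst := by
      rw [TrivSqZeroExt.snd_mul]
      simp [smul_eq_mul, MulOpposite.smul_eq_mul_unop, mul_comm]
    rw [hfdef]
    simp only [hfst, hsnd1, hsnd2]
    rcases all2 t.fst with hm | hm <;> rcases all2 t.snd.1 with hn | hn <;>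
      rcases all2 t.snd.2 with hk | hk <;> rcases all2 s.fst with hm' | hm' <;>
      rcases all2 s.snd.1 with hn' | hn' <;> rcases all2 s.snd.2 with hk' | hk' <;>
      rw [hm, hn, hk, hm', hn', hk'] <;>
      simp only [mul_zero, zero_mul, mul_one, one_mul, add_zero, zero_add,
        show (1 + 1 : ZMod 2) = 0 from by decide, hc0, hc1] <;>
      simp only [mul_add, add_mul, one_mul, mul_one, hx, hy, hxy, hyx,
        add_zero, zero_add, zero_mul, mul_zero] <;>
      first
        | rfl
        | (abel_nf <;> simp [hh, h2'])
  have hadd : ∀ t s, f (t + s) = f t + f s := by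
    intro t s
    simp only [hfdef, TrivSqZeroExt.fst_add, TrivSqZeroExt.snd_add, Prod.fst_add, Prod.snd_add,
      hcadd, add_mul]
    abel
  let F : TrivSqZeroExt (ZMod 2) (ZMod 2 × ZMod 2) →+* R :=
    RingHom.mk' ⟨⟨f, hone⟩, fun a b => hmul a b⟩ hadd
  have hFval : ∀ t, F t = f t := fun t => rfl
  have hF1x : F (TrivSqZeroExt.inl 1 + TrivSqZeroExt.inr (1, 0)) = 1 + x := by
    rw [map_add, hFval, hFval, hfdef]
    simp [TrivSqZeroExt.fst_inl, TrivSqZeroExt.snd_inl, TrivSqZeroExt.fst_inr,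
      TrivSqZeroExt.snd_inr, hc0, hc1]
  have hsurj : Function.Surjective F := by
    intro r
    rcases hclass r with rfl | rfl | rfl | rfl | rfl | rfl | rfl | rfl
    · exact ⟨0, map_zero F⟩
    · refine ⟨TrivSqZeroExt.inr (1, 0), ?_⟩
      rw [hFval, hfdef]
      simp [TrivSqZeroExt.fst_inr, TrivSqZeroExt.snd_inr, hc0, hc1]
    · refine ⟨TrivSqZeroExt.inr (0, 1), ?_⟩
      rw [hFval, hfdef]
      simp [TrivSqZeroExt.fst_inr, TrivSqZeroExt.snd_inr, hc0, hc1]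
    · refine ⟨TrivSqZeroExt.inr (1, 1), ?_⟩
      rw [hFval, hfdef]
      simp [TrivSqZeroExt.fst_inr, TrivSqZeroExt.snd_inr, hc0, hc1]
    · exact ⟨1, map_one F⟩
    · exact ⟨_, hF1x⟩
    · refine ⟨TrivSqZeroExt.inl 1 + TrivSqZeroExt.inr (0, 1), ?_⟩
      rw [map_add, hFval, hFval, hfdef]
      simp [TrivSqZeroExt.fst_inl, TrivSqZeroExt.snd_inl, TrivSqZeroExt.fst_inr,
        TrivSqZeroExt.snd_inr, hc0, hc1]
    · refine ⟨TrivSqZeroExt.inl 1 + TrivSqZeroExt.inr (1, 1), ?_⟩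
      rw [map_add, hFval, hFval, hfdef]
      simp [TrivSqZeroExt.fst_inl, TrivSqZeroExt.snd_inl, TrivSqZeroExt.fst_inr,
        TrivSqZeroExt.snd_inr, hc0, hc1, add_assoc]
  have hcards : Nat.card (TrivSqZeroExt (ZMod 2) (ZMod 2 × ZMod 2)) = 8 := by
    have : Nat.card (TrivSqZeroExt (ZMod 2) (ZMod 2 × ZMod 2))
        = Nat.card (ZMod 2 × ZMod 2 × ZMod 2) := rfl
    rw [this]; simp [Nat.card_prod, Nat.card_zmod]
  haveI : Finite (TrivSqZeroExt (ZMod 2) (ZMod 2 × ZMod 2)) :=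
    Nat.finite_of_card_ne_zero (by rw [hcards]; omega)
  have hbij : Function.Bijective F :=
    (Nat.bijective_iff_surjective_and_card F).mpr ⟨hsurj, by rw [hcards, hcard]⟩
  exact ⟨(RingEquiv.ofBijective F hbij).symm⟩

set_option maxHeartbeats 1000000 in
private lemma case2 {R : Type*} [Ring R] (hcard : Nat.card R = 8)
    (hJ : Nat.card ((⊥ : Ideal R).jacobson) = 4) (h2 : ∀ r : R, r + r = 0)
    (A B C : NonUnitalSubring R) (hA : A ≠ ⊤) (hB : B ≠ ⊤) (hC : C ≠ ⊤)
    (hcov : ∀ r : R, r ∈ A ∨ r ∈ B ∨ r ∈ C)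
    (h1A : (1 : R) ∈ A) (h1C : (1 : R) ∉ C) : False := by
  haveI : Finite R := Nat.finite_of_card_ne_zero (by omega)
  haveI : Nontrivial R := Finite.one_lt_card_iff_nontrivial.mp (by omega)
  classical
  have h1J := one_notMem_jac hcard hJ
  -- cover permutations
  have hcovACB : ∀ r : R, r ∈ A ∨ r ∈ C ∨ r ∈ B := fun r => by rcases hcov r with h|h|h <;> tauto
  have hcovBCA : ∀ r : R, r ∈ B ∨ r ∈ C ∨ r ∈ A := fun r => by rcases hcov r with h|h|h <;> tauto
  have hcovBAC : ∀ r : R, r ∈ B ∨ r ∈ A ∨ r ∈ C := fun r => by rcases hcov r with h|h|h <;> tauto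
  have hcovCAB : ∀ r : R, r ∈ C ∨ r ∈ A ∨ r ∈ B := fun r => by rcases hcov r with h|h|h <;> tauto
  have hcovCBA : ∀ r : R, r ∈ C ∨ r ∈ B ∨ r ∈ A := fun r => by rcases hcov r with h|h|h <;> tauto
  -- D-predicate facts
  have hD0 : (0:R) ∈ A ∧ (0:R) ∈ B ∧ (0:R) ∈ C := ⟨A.zero_mem, B.zero_mem, C.zero_mem⟩
  have hDadd : ∀ z w : R, (z ∈ A ∧ z ∈ B ∧ z ∈ C) → (w ∈ A ∧ w ∈ B ∧ w ∈ C) →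
      (z + w ∈ A ∧ z + w ∈ B ∧ z + w ∈ C) := by
    rintro z w ⟨h1, h2', h3⟩ ⟨h4, h5, h6⟩
    exact ⟨A.add_mem h1 h4, B.add_mem h2' h5, C.add_mem h3 h6⟩
  -- existence of coset representatives outside D
  have hrep : ∀ (X Y Z : NonUnitalSubring R), (∀ r : R, r ∈ X ∨ r ∈ Y ∨ r ∈ Z) →
      Y ≠ ⊤ → Z ≠ ⊤ → ∃ a, a ∈ X ∧ ¬(a ∈ X ∧ a ∈ Y ∧ a ∈ Z) := by
    intro X Y Z hc hY hZ
    by_contra h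
    push_neg at h
    obtain ⟨z, hzY, hzZ⟩ := notwoCover Y Z hY hZ
    have hzX : z ∈ X := by rcases hc z with h'|h'|h' <;> tauto
    exact hzY (h z hzX).2.1
  obtain ⟨a, haA, haD⟩ := hrep A B C hcov hB hC
  obtain ⟨b, hbB, hbD'⟩ := hrep B A C hcovBAC hA hC
  obtain ⟨c, hcC, hcD'⟩ := hrep C A B hcovCAB hA hB
  have hbD : ¬(b ∈ A ∧ b ∈ B ∧ b ∈ C) := fun h => hbD' ⟨h.2.1, h.1, h.2.2⟩
  have hcD : ¬(c ∈ A ∧ c ∈ B ∧ c ∈ C) := fun h => hcD' ⟨h.2.2, h.1, h.2.1⟩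
  -- from membership in two, membership in all three
  have hall3 : ∀ z : R, ((z ∈ A ∧ z ∈ B) ∨ (z ∈ A ∧ z ∈ C) ∨ (z ∈ B ∧ z ∈ C)) →
      (z ∈ A ∧ z ∈ B ∧ z ∈ C) := by
    rintro z (⟨h1, h2'⟩ | ⟨h1, h2'⟩ | ⟨h1, h2'⟩)
    · exact ⟨h1, h2', inter3 A B C hcov hA hB z h1 h2'⟩
    · exact ⟨h1, inter3 A C B hcovACB hA hC z h1 h2', h2'⟩
    · exact ⟨inter3 B C A hcovBCA hB hC z h1 h2', h1, h2'⟩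
  -- non-D elements of a subring are in no other subring
  have honly : ∀ z : R, z ∈ A → ¬(z ∈ A ∧ z ∈ B ∧ z ∈ C) → z ∉ B ∧ z ∉ C := by
    intro z h hd
    constructor
    · exact fun hb => hd (hall3 z (Or.inl ⟨h, hb⟩))
    · exact fun hc' => hd (hall3 z (Or.inr (Or.inl ⟨h, hc'⟩)))
  have honlyB : ∀ z : R, z ∈ B → ¬(z ∈ A ∧ z ∈ B ∧ z ∈ C) → z ∉ A ∧ z ∉ C := by
    intro z h hd
    constructor
    · exact fun ha => hd (hall3 z (Or.inl ⟨ha, h⟩))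
    · exact fun hc' => hd (hall3 z (Or.inr (Or.inr ⟨h, hc'⟩)))
  have honlyC : ∀ z : R, z ∈ C → ¬(z ∈ A ∧ z ∈ B ∧ z ∈ C) → z ∉ A ∧ z ∉ B := by
    intro z h hd
    constructor
    · exact fun ha => hd (hall3 z (Or.inr (Or.inl ⟨ha, h⟩)))
    · exact fun hb => hd (hall3 z (Or.inr (Or.inr ⟨hb, h⟩)))
  -- difference of two non-D elements of the same subring is in D
  have hdiff : ∀ (X Y Z : NonUnitalSubring R), (∀ r : R, r ∈ X ∨ r ∈ Y ∨ r ∈ Z) →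
      (∀ r : R, r ∈ X ∨ r ∈ Z ∨ r ∈ Y) →
      X ≠ ⊤ → Y ≠ ⊤ → Z ≠ ⊤ → ∀ z w, z ∈ X → w ∈ X → z ∉ Y → z ∉ Z → w ∉ Y → w ∉ Z →
      (z + w ∈ X ∧ z + w ∈ Y ∧ z + w ∈ Z) := by
    intro X Y Z hc hc' hX hY hZ z w hzX hwX hzY hzZ hwY hwZ
    have hXmem : z + w ∈ X := X.add_mem hzX hwX
    obtain ⟨u, huX⟩ := exNot X hX
    have core : ∀ (Y' Z' : NonUnitalSubring R), (∀ r : R, r ∈ X ∨ r ∈ Y' ∨ r ∈ Z') →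
        u ∈ Y' → z ∉ Y' → w ∉ Y' → z + w ∈ Z' := by
      intro Y' Z' hcc huY hzY' hwY'
      have hzu : z + u ∈ Z' := by
        rcases hcc (z + u) with h|h|h
        · exact absurd (by simpa using X.sub_mem h hzX) huX
        · exact absurd (by simpa using Y'.sub_mem h huY) hzY'
        · exact h
      have hwu : w + u ∈ Z' := by
        rcases hcc (w + u) with h|h|h
        · exact absurd (by simpa using X.sub_mem h hwX) huX
        · exact absurd (by simpa using Y'.sub_mem h huY) hwY'
        · exact h
      have := Z'.add_mem hzu hwu
      have heq : z + u + (w + u) = z + w := by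
        rw [add_add_add_comm, h2 u, add_zero]
      rwa [heq] at this
    rcases hc u with h|h|h
    · exact absurd h huX
    · have hZ' : z + w ∈ Z := core Y Z hc h hzY hwY
      exact ⟨hXmem, inter3 X Z Y hc' hX hZ _ hXmem hZ', hZ'⟩
    · have hY' : z + w ∈ Y := core Z Y hc' h hzZ hwZ
      exact ⟨hXmem, hY', inter3 X Y Z hc hX hY _ hXmem hY'⟩
  -- existence of a nonzero element of D
  have hdex : ∃ d : R, (d ∈ A ∧ d ∈ B ∧ d ∈ C) ∧ d ≠ 0 := by
    by_contra h
    push_neg at h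
    have hclass : ∀ r : R, r = 0 ∨ r = a ∨ r = b ∨ r = c := by
      intro r
      have key : ∀ (X Y Z : NonUnitalSubring R) (v : R), (∀ s : R, s ∈ X ∨ s ∈ Y ∨ s ∈ Z) →
          (∀ s : R, s ∈ X ∨ s ∈ Z ∨ s ∈ Y) → X ≠ ⊤ → Y ≠ ⊤ → Z ≠ ⊤ →
          v ∈ X → r ∈ X → v ∉ Y → v ∉ Z → r ∉ Y → r ∉ Z →
          (r + v ∈ A ∧ r + v ∈ B ∧ r + v ∈ C) → r = v := by
        intro X Y Z v _ _ _ _ _ _ _ _ _ _ _ hrv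
        have h0 : r + v = 0 := h _ hrv
        have : r = v := by
          have := congrArg (fun t => t + v) h0
          simpa [add_assoc, h2 v] using this
        exact this
      rcases hcov r with hr|hr|hr
      · by_cases hD : r ∈ A ∧ r ∈ B ∧ r ∈ C
        · exact Or.inl (h r hD)
        · obtain ⟨hrB, hrC⟩ := honly r hr hD
          obtain ⟨haB, haC⟩ := honly a haA haD
          exact Or.inr (Or.inl (key A B C a hcov hcovACB hA hB hC haA hr haB haC hrB hrC
            (by
              have := hdiff A B C hcov hcovACB hA hB hC r a hr haA hrB hrC haB haC
              exact this)))
      · by_cases hD : r ∈ A ∧ r ∈ B ∧ r ∈ C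
        · exact Or.inl (h r hD)
        · obtain ⟨hrA, hrC⟩ := honlyB r hr hD
          obtain ⟨hbA, hbC⟩ := honlyB b hbB hbD
          refine Or.inr (Or.inr (Or.inl (key B A C b hcovBAC hcovBCA hB hA hC hbB hr hbA hbC hrA hrC ?_)))
          have := hdiff B A C hcovBAC hcovBCA hB hA hC r b hr hbB hrA hrC hbA hbC
          exact ⟨this.2.1, this.1, this.2.2⟩
      · by_cases hD : r ∈ A ∧ r ∈ B ∧ r ∈ C
        · exact Or.inl (h r hD)
        · obtain ⟨hrA, hrB⟩ := honlyC r hr hD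
          obtain ⟨hcA, hcB⟩ := honlyC c hcC hcD
          refine Or.inr (Or.inr (Or.inr (key C A B c hcovCAB hcovCBA hC hA hB hcC hr hcA hcB hrA hrB ?_)))
          have := hdiff C A B hcovCAB hcovCBA hC hA hB r c hr hcC hrA hrB hcA hcB
          exact ⟨this.2.1, this.2.2, this.1⟩
    have hsub : (Set.univ : Set R) ⊆ {0, a, b, c} := by
      intro r _
      rcases hclass r with rfl|rfl|rfl|rfl <;> simp
    have hle : (Set.univ : Set R).ncard ≤ 4 := by
      calc (Set.univ : Set R).ncard ≤ ({0, a, b, c} : Set R).ncard := Set.ncard_le_ncard hsub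
      _ ≤ ({a, b, c} : Set R).ncard + 1 := Set.ncard_insert_le _ _
      _ ≤ (({b, c} : Set R).ncard + 1) + 1 := by
          have := Set.ncard_insert_le a ({b, c} : Set R); omega
      _ ≤ ((({c} : Set R).ncard + 1) + 1) + 1 := by
          have := Set.ncard_insert_le b ({c} : Set R); omega
      _ ≤ 4 := by rw [Set.ncard_singleton]
    rw [Set.ncard_univ, hcard] at hle
    omega
  obtain ⟨d, hDd, hd0⟩ := hdex
  -- D ⊆ {0, d}
  have hD2 : ∀ z : R, (z ∈ A ∧ z ∈ B ∧ z ∈ C) → z = 0 ∨ z = d := by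
    intro z hDz
    by_cases hz0 : z = 0
    · exact Or.inl hz0
    right
    by_contra hzd
    have ha0 : a ≠ 0 := fun h => haD (h ▸ hD0)
    have haz : a + z ≠ 0 := by
      intro h
      have : a = z := by
        have := congrArg (fun t => t + z) h
        simpa [add_assoc, h2 z] using this
      exact haD (this ▸ hDz)
    have had : a + d ≠ 0 := by
      intro h
      have : a = d := by
        have := congrArg (fun t => t + d) h
        simpa [add_assoc, h2 d] using this
      exact haD (this ▸ hDd)
    have hazd : a + z + d ≠ 0 := by
      intro h
      have : a = z + d := by
        have := congrArg (fun t => t + (z + d)) h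
        simpa [add_assoc, h2, h2 (z+d)] using this
      exact haD (this ▸ hDadd z d hDz hDd)
    have hzd0 : z + d ≠ 0 := by
      intro h
      have : z = d := by
        have := congrArg (fun t => t + d) h
        simpa [add_assoc, h2 d] using this
      exact hzd this
    have hall := span8 hcard h2 a z d hz0 hd0 hzd0 ha0 haz had hazd
    apply hA
    ext r
    simp only [NonUnitalSubring.mem_top, iff_true]
    rcases hall r with rfl|rfl|rfl|rfl|rfl|rfl|rfl|rfl
    · exact A.zero_mem
    · exact hDz.1
    · exact hDd.1
    · exact A.add_mem hDz.1 hDd.1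
    · exact haA
    · exact A.add_mem haA hDz.1
    · exact A.add_mem haA hDd.1
    · exact A.add_mem (A.add_mem haA hDz.1) hDd.1
  -- d ∈ J
  set J := (⊥ : Ideal R).jacobson with hJdef
  have hDmul : d * d ∈ A ∧ d * d ∈ B ∧ d * d ∈ C :=
    ⟨A.mul_mem hDd.1 hDd.1, B.mul_mem hDd.2.1 hDd.2.1, C.mul_mem hDd.2.2 hDd.2.2⟩
  have hdJ : d ∈ J := by
    rcases jac_union hcard hJ h2 d with h | h
    · exact h
    exfalso
    have hu : IsUnit d := by
      have := isUnit_one_add h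
      rwa [← add_assoc, h2 1, zero_add] at this
    rcases hD2 _ hDmul with h' | h'
    · exact hd0 (hu.mul_left_cancel (by rw [h', mul_zero]))
    · have : d = 1 := by
        have := hu.mul_left_cancel (show d * d = d * 1 by rw [h', mul_one])
        exact this
      exact h1C (this ▸ hDd.2.2)
  have hdd : d * d = 0 := by
    rcases hD2 _ hDmul with h | h
    · exact h
    · exact absurd (idem_zero hdJ h) hd0
  -- pick e ∈ J outside {0, d}
  have hJ4 : ((J : Set R)).ncard = 4 := by
    rw [← Nat.card_coe_set_eq]; exact hJ
  have hJne : ¬((J : Set R) ⊆ {0, d}) := by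
    intro h
    have h1 := Set.ncard_le_ncard h
    have h2'' : ({0, d} : Set R).ncard ≤ 2 := by
      calc ({0, d} : Set R).ncard ≤ ({d} : Set R).ncard + 1 := Set.ncard_insert_le _ _
      _ ≤ 2 := by rw [Set.ncard_singleton]
    rw [hJ4] at h1
    omega
  obtain ⟨e, heJ', hed'⟩ := Set.not_subset.mp hJne
  have heJ : e ∈ J := heJ'
  have he0 : e ≠ 0 := fun h => hed' (by simp [h])
  have hed : e ≠ d := fun h => hed' (by simp [h])
  have hde0 : d + e ≠ 0 := by
    intro h
    have : d = e := by
      have := congrArg (fun t => t + e) h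
      simpa [add_assoc, h2 e] using this
    exact hed this.symm
  have hdeJ : d + e ∈ J := Submodule.add_mem _ hdJ heJ
  have h1d0 : (1:R) + d ≠ 0 := by
    intro h
    have : (1:R) = d := by
      have := congrArg (fun t => t + d) h
      simpa [add_assoc, h2 d] using this
    exact h1J (this ▸ hdJ)
  have h1e0 : (1:R) + e ≠ 0 := by
    intro h
    have : (1:R) = e := by
      have := congrArg (fun t => t + e) h
      simpa [add_assoc, h2 e] using this
    exact h1J (this ▸ heJ)
  have h1de0 : (1:R) + d + e ≠ 0 := by
    intro h
    have : (1:R) = d + e := by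
      have := congrArg (fun t => t + (d + e)) h
      simpa [add_assoc, h2, h2 (d+e)] using this
    exact h1J (this ▸ hdeJ)
  -- classification of J
  have hJset : ∀ z : R, z ∈ J → z = 0 ∨ z = d ∨ z = e ∨ z = d + e := by
    have hded : d + e ≠ d := by
      intro h
      apply he0
      have := congrArg (fun t => d + t) h.symm
      simp [← add_assoc, h2 d] at this
      exact this.symm
    have hdee : d + e ≠ e := by
      intro h
      apply hd0
      have := congrArg (fun t => t + e) h
      simpa [add_assoc, h2 e] using this
    intro z hz
    exact set4 hJ4 (by simp) (by exact hdJ) (by exact heJ) (by exact hdeJ)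
      hd0 he0 (fun h => hed h.symm) hde0 hded hdee z hz
  -- e is not in A
  have heA : e ∉ A := by
    intro heA
    have hall := span8 hcard h2 1 d e hd0 he0 hde0 one_ne_zero h1d0 h1e0 h1de0
    apply hA
    ext r
    simp only [NonUnitalSubring.mem_top, iff_true]
    rcases hall r with rfl|rfl|rfl|rfl|rfl|rfl|rfl|rfl
    · exact A.zero_mem
    · exact hDd.1
    · exact heA
    · exact A.add_mem hDd.1 heA
    · exact h1A
    · exact A.add_mem h1A hDd.1
    · exact A.add_mem h1A heA
    · exact A.add_mem (A.add_mem h1A hDd.1) heA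
  -- the main contradiction machine
  have main : ∀ S : NonUnitalSubring R, d ∈ S → (1 + e) ∈ S → (1:R) ∉ S → False := by
    intro S hdS huS h1S
    have heS : e ∉ S := by
      intro heS
      apply h1S
      have := S.add_mem huS heS
      rwa [add_assoc, h2 e, add_zero] at this
    have heeJ : e * e ∈ J := by
      have := Submodule.smul_mem J e heJ
      simpa [smul_eq_mul] using this
    rcases hJset _ heeJ with hq | hq | hq | hq
    · apply h1S
      have hsq : (1 + e) * (1 + e) = 1 := by
        calc (1 + e) * (1 + e) = 1 * (1 + e) + e * (1 + e) := by rw [add_mul]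
        _ = (1 + e) + (e * 1 + e * e) := by rw [one_mul, mul_add]
        _ = (1 + e) + (e + 0) := by rw [mul_one, hq]
        _ = 1 + (e + e) := by rw [add_zero, add_assoc]
        _ = 1 := by rw [h2 e, add_zero]
      exact hsq ▸ S.mul_mem huS huS
    · apply h1S
      have hsq : (1 + e) * (1 + e) = 1 + d := by
        calc (1 + e) * (1 + e) = 1 * (1 + e) + e * (1 + e) := by rw [add_mul]
        _ = (1 + e) + (e * 1 + e * e) := by rw [one_mul, mul_add]
        _ = (1 + e) + (e + d) := by rw [mul_one, hq]
        _ = 1 + (e + e) + d := by rw [add_assoc, ← add_assoc e e d, ← add_assoc]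
        _ = 1 + d := by rw [h2 e, add_zero]
      have h1dS : 1 + d ∈ S := hsq ▸ S.mul_mem huS huS
      have := S.add_mem h1dS hdS
      rwa [add_assoc, h2 d, add_zero] at this
    · exact he0 (idem_zero heJ hq)
    · -- e * e = d + e
      have hcomm : e * d = d * e := by
        have hassoc : e * (e * e) = (e * e) * e := (mul_assoc e e e).symm
        rw [hq, mul_add, add_mul] at hassoc
        exact add_right_cancel hassoc
      have hsq : (e * e) * (e * e) = e * e := by
        conv_lhs => rw [hq]
        calc (d + e) * (d + e) = d * (d + e) + e * (d + e) := by rw [add_mul]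
        _ = (d * d + d * e) + (e * d + e * e) := by rw [mul_add, mul_add]
        _ = (0 + d * e) + (d * e + e * e) := by rw [hdd, hcomm]
        _ = (d * e + d * e) + e * e := by rw [zero_add, ← add_assoc]
        _ = e * e := by rw [h2 (d * e), zero_add]
      have he2 : e * e = 0 := idem_zero heeJ hsq
      rw [hq] at he2
      apply hed
      have := congrArg (fun t => d + t) he2
      simpa [← add_assoc, h2 d] using this
  -- where does 1 + e live?
  rcases hcov (1 + e) with hu | hu | hu
  · apply heA
    have := A.add_mem h1A hu
    rwa [← add_assoc, h2 1, zero_add] at this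
  · have h1B : (1:R) ∉ B := fun h1B => h1C (inter3 A B C hcov hA hB 1 h1A h1B)
    exact main B hDd.2.1 hu h1B
  · exact main C hDd.2.2 hu h1C


set_option maxHeartbeats 1000000 in
/-- Let `R` be a unital ring of order 8 which is the union of three proper
subrings `S₁, S₂, S₃` with no nonzero two-sided ideal of `R` in
`S₁ ∩ S₂ ∩ S₃`, and whose Jacobson radical has order 4.  Then `R` is
isomorphic to the ring generated over `ℤ/2` by `1, x, y` with relations
`x² = y² = xy = yx = 0`, i.e. the `ℤ/2`-unitalization of a zero ring of
order 4, realized here as the trivial square-zero extension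
`TrivSqZeroExt (ZMod 2) (ZMod 2 × ZMod 2)`. -/
theorem good_ring_order_eight_radical_four
    (R : Type*) [Ring R] (hcard : Nat.card R = 8)
    (hJ : Nat.card ((⊥ : Ideal R).jacobson) = 4)
    (S₁ S₂ S₃ : NonUnitalSubring R)
    (h₁ : S₁ ≠ ⊤) (h₂ : S₂ ≠ ⊤) (h₃ : S₃ ≠ ⊤)
    (hcover : ∀ r : R, r ∈ S₁ ∨ r ∈ S₂ ∨ r ∈ S₃)
    (hideal : ∀ I : TwoSidedIdeal R,
      (I : Set R) ⊆ ((S₁ ⊓ S₂ ⊓ S₃ : NonUnitalSubring R) : Set R) → I = ⊥) :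
    Nonempty (R ≃+* TrivSqZeroExt (ZMod 2) (ZMod 2 × ZMod 2)) := by
  haveI : Finite R := Nat.finite_of_card_ne_zero (by omega)
  haveI : Nontrivial R := Finite.one_lt_card_iff_nontrivial.mp (by omega)
  classical
  have ht1 : ∀ g : R, g + g ∈ S₁ := two_mem S₁ S₂ S₃ h₂ h₃ hcover
  have ht2 : ∀ g : R, g + g ∈ S₂ :=
    two_mem S₂ S₁ S₃ h₁ h₃ (fun r => by rcases hcover r with h|h|h <;> tauto)
  have ht3 : ∀ g : R, g + g ∈ S₃ :=
    two_mem S₃ S₁ S₂ h₁ h₂ (fun r => by rcases hcover r with h|h|h <;> tauto)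
  have h2char : (1 : R) + 1 = 0 := by
    set I : TwoSidedIdeal R := TwoSidedIdeal.mk' {x : R | ∃ y, x = y + y}
      ⟨0, by rw [add_zero]⟩
      (by rintro x y ⟨u, rfl⟩ ⟨v, rfl⟩; exact ⟨u + v, by abel⟩)
      (by rintro x ⟨u, rfl⟩; exact ⟨-u, by abel⟩)
      (by rintro x y ⟨u, rfl⟩; exact ⟨x * u, by rw [mul_add]⟩)
      (by rintro x y ⟨u, rfl⟩; exact ⟨u * y, by rw [add_mul]⟩) with hIdef
    have hsub : (I : Set R) ⊆ ((S₁ ⊓ S₂ ⊓ S₃ : NonUnitalSubring R) : Set R) := by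
      intro x hx
      have hx' : x ∈ I := hx
      rw [hIdef, TwoSidedIdeal.mem_mk'] at hx'
      obtain ⟨u, rfl⟩ := hx'
      have hmem : u + u ∈ S₁ ⊓ S₂ ⊓ S₃ := by
        rw [NonUnitalSubring.mem_inf, NonUnitalSubring.mem_inf]
        exact ⟨⟨ht1 u, ht2 u⟩, ht3 u⟩
      exact hmem
    have hbot := hideal I hsub
    have hmem : (1 : R) + 1 ∈ I := by
      rw [hIdef, TwoSidedIdeal.mem_mk']; exact ⟨1, rfl⟩
    rw [hbot] at hmem
    exact (TwoSidedIdeal.mem_bot R).mp hmem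
  have h2 : ∀ r : R, r + r = 0 := fun r => by
    have h := congrArg (fun t => t * r) h2char
    simpa [add_mul] using h
  have eq_of_add_zero : ∀ u v : R, u + v = 0 → u = v := by
    intro u v h
    have := congrArg (fun t => t + v) h
    simpa [add_assoc, h2 v] using this
  by_cases hone : (1:R) ∈ S₁ ∧ (1:R) ∈ S₂ ∧ (1:R) ∈ S₃
  · -- Case 1 : 1 lies in all three subrings
    obtain ⟨ho1, ho2, ho3⟩ := hone
    have h1J := one_notMem_jac hcard hJ
    have hJ4 : (((⊥ : Ideal R).jacobson : Set R)).ncard = 4 := by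
      rw [← Nat.card_coe_set_eq]; exact hJ
    have hp_ex : ¬(((⊥ : Ideal R).jacobson : Set R) ⊆ {0}) := by
      intro h
      have hle := Set.ncard_le_ncard h
      rw [hJ4, Set.ncard_singleton] at hle
      omega
    obtain ⟨p, hpJ', hp'⟩ := Set.not_subset.mp hp_ex
    have hpJ : p ∈ (⊥ : Ideal R).jacobson := hpJ'
    have hp0 : p ≠ 0 := by simpa using hp'
    have hq_ex : ¬(((⊥ : Ideal R).jacobson : Set R) ⊆ {0, p}) := by
      intro h
      have hle := Set.ncard_le_ncard h
      have hle2 : ({0, p} : Set R).ncard ≤ 2 := by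
        calc ({0, p} : Set R).ncard ≤ ({p} : Set R).ncard + 1 := Set.ncard_insert_le _ _
        _ ≤ 2 := by rw [Set.ncard_singleton]
      rw [hJ4] at hle
      omega
    obtain ⟨q, hqJ', hq'⟩ := Set.not_subset.mp hq_ex
    have hqJ : q ∈ (⊥ : Ideal R).jacobson := hqJ'
    have hq0 : q ≠ 0 := fun h => hq' (by simp [h])
    have hqp : q ≠ p := fun h => hq' (by simp [h])
    have hpqJ : p + q ∈ (⊥ : Ideal R).jacobson := Submodule.add_mem _ hpJ hqJ
    have hpq0 : p + q ≠ 0 := fun h => hqp (eq_of_add_zero p q h).symm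
    have h1p0 : (1:R) + p ≠ 0 := fun h => h1J ((eq_of_add_zero 1 p h) ▸ hpJ)
    have h1q0 : (1:R) + q ≠ 0 := fun h => h1J ((eq_of_add_zero 1 q h) ▸ hqJ)
    have h1pq0 : (1:R) + p + q ≠ 0 := by
      intro h
      rw [add_assoc] at h
      exact h1J ((eq_of_add_zero 1 (p + q) h) ▸ hpqJ)
    have hpqp : p + q ≠ p := by
      intro h
      apply hq0
      have := congrArg (fun t => p + t) h.symm
      simp [← add_assoc, h2 p] at this
      exact this.symm
    have hpqq : p + q ≠ q := by
      intro h
      apply hp0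
      have := congrArg (fun t => t + q) h
      simpa [add_assoc, h2 q] using this
    have notwo : ∀ S : NonUnitalSubring R, S ≠ ⊤ → (1:R) ∈ S →
        ∀ z w : R, z ∈ (⊥ : Ideal R).jacobson → w ∈ (⊥ : Ideal R).jacobson →
        z ∈ S → w ∈ S → z ≠ 0 → w ≠ 0 → z ≠ w → False := by
      intro S hS h1S z w hzJ hwJ hzS hwS hz0 hw0 hzw
      have hzw0 : z + w ≠ 0 := fun h => hzw (eq_of_add_zero z w h)
      have h1z : (1:R) + z ≠ 0 := fun h => h1J ((eq_of_add_zero 1 z h) ▸ hzJ)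
      have h1w : (1:R) + w ≠ 0 := fun h => h1J ((eq_of_add_zero 1 w h) ▸ hwJ)
      have h1zw : (1:R) + z + w ≠ 0 := by
        intro h
        rw [add_assoc] at h
        exact h1J ((eq_of_add_zero 1 (z + w) h) ▸ Submodule.add_mem _ hzJ hwJ)
      have hall := span8 hcard h2 1 z w hz0 hw0 hzw0 one_ne_zero h1z h1w h1zw
      apply hS
      ext r
      simp only [NonUnitalSubring.mem_top, iff_true]
      rcases hall r with rfl|rfl|rfl|rfl|rfl|rfl|rfl|rfl
      · exact S.zero_mem
      · exact hzS
      · exact hwS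
      · exact S.add_mem hzS hwS
      · exact h1S
      · exact S.add_mem h1S hzS
      · exact S.add_mem h1S hwS
      · exact S.add_mem (S.add_mem h1S hzS) hwS
    have loc : ∀ z : R, ∃ S : NonUnitalSubring R, S ≠ ⊤ ∧ (1:R) ∈ S ∧ z ∈ S := by
      intro z
      rcases hcover z with h|h|h
      exacts [⟨S₁, h₁, ho1, h⟩, ⟨S₂, h₂, ho2, h⟩, ⟨S₃, h₃, ho3, h⟩]
    have sq_zero : ∀ z : R, z ∈ (⊥ : Ideal R).jacobson → z * z = 0 := by
      intro z hzJ
      by_cases hz0 : z = 0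
      · rw [hz0, mul_zero]
      obtain ⟨S, hS, h1S, hzS⟩ := loc z
      have hzzJ : z * z ∈ (⊥ : Ideal R).jacobson := by
        have := Submodule.smul_mem ((⊥ : Ideal R).jacobson) z hzJ
        simpa [smul_eq_mul] using this
      by_cases hzz : z * z = z
      · exact absurd (idem_zero hzJ hzz) hz0
      by_cases hzz0 : z * z = 0
      · exact hzz0
      exact (notwo S hS h1S z (z*z) hzJ hzzJ hzS (S.mul_mem hzS hzS) hz0 hzz0
        (fun h => hzz h.symm)).elim
    have hp2 : p * p = 0 := sq_zero p hpJ
    have hq2 : q * q = 0 := sq_zero q hqJ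
    have hpq2 : (p + q) * (p + q) = 0 := sq_zero _ hpqJ
    have hqp_comm : q * p = p * q := by
      have hexp : (p + q) * (p + q) = p*p + p*q + (q*p + q*q) := by
        rw [add_mul, mul_add, mul_add]
      rw [hpq2, hp2, hq2, zero_add, add_zero] at hexp
      exact (eq_of_add_zero _ _ hexp.symm).symm
    have hJlist := set4 (s := ((⊥ : Ideal R).jacobson : Set R)) hJ4 (by simp) hpJ' hqJ'
      (by exact SetLike.mem_coe.mpr hpqJ) hp0 hq0 (fun h => hqp h.symm) hpq0 hpqp hpqq
    have htJ : p * q ∈ (⊥ : Ideal R).jacobson := by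
      have := Submodule.smul_mem ((⊥ : Ideal R).jacobson) p hqJ
      simpa [smul_eq_mul] using this
    have hpq_zero : p * q = 0 := by
      rcases hJlist (p*q) (SetLike.mem_coe.mpr htJ) with h | h | h | h
      · exact h
      · exfalso
        apply hp0
        have h0 : p * q = 0 := by
          conv_lhs => rw [← h]
          rw [mul_assoc, hq2, mul_zero]
        rw [h0] at h
        exact h.symm
      · exfalso
        apply hq0
        have h0 : p * q = 0 := by
          conv_lhs => rw [← h]
          rw [← mul_assoc, hp2, zero_mul]
        rw [h0] at h
        exact h.symm
      · exfalso
        apply hpq0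
        have e1 : p * (p * q) = 0 := by rw [← mul_assoc, hp2, zero_mul]
        have e2 : p * (p * q) = p + q := by
          rw [h]
          rw [mul_add, hp2, zero_add]
          exact h
        rw [e2] at e1
        exact e1
    have hqp_zero : q * p = 0 := by rw [hqp_comm, hpq_zero]
    exact build_equiv hcard h2 p q hp2 hq2 hpq_zero hqp_zero
      (span8 hcard h2 1 p q hp0 hq0 hpq0 one_ne_zero h1p0 h1q0 h1pq0)
  · -- Case 2 : some subring misses 1; derive a contradiction
    exfalso
    by_cases hm1 : (1:R) ∈ S₁
    · by_cases hm2 : (1:R) ∈ S₂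
      · by_cases hm3 : (1:R) ∈ S₃
        · exact hone ⟨hm1, hm2, hm3⟩
        · exact case2 hcard hJ h2 S₁ S₂ S₃ h₁ h₂ h₃ hcover hm1 hm3
      · exact case2 hcard hJ h2 S₁ S₃ S₂ h₁ h₃ h₂
          (fun r => by rcases hcover r with h|h|h <;> tauto) hm1 hm2
    · by_cases hm2 : (1:R) ∈ S₂
      · exact case2 hcard hJ h2 S₂ S₃ S₁ h₂ h₃ h₁
          (fun r => by rcases hcover r with h|h|h <;> tauto) hm2 hm1
      · have hm3 : (1:R) ∈ S₃ := by rcases hcover 1 with h|h|h <;> tauto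
        exact case2 hcard hJ h2 S₃ S₂ S₁ h₃ h₂ h₁
          (fun r => by rcases hcover r with h|h|h <;> tauto) hm3 hm1
end
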